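/- arXiv:2205.02798 — 13 statements merged into one kernel-verified Lean document; each statement's English description precedes it below -/
import Mathlib

section
/- Let P = (X, ≺) be a finite poset with |X| = n elements. Then e(P) · ∏_{x ∈ X} b(x) ≥ n! (the Björner–Wachs inequality). -/
open Finset

/-- The number of linear extensions of a finite poset `X`: bijections
`f : X ≃ Fin (card X)` such that `x < y` implies `f x < f y`. -/
noncomputable def linExtCount (X : Type*) [Fintype X] [PartialOrder X] : ℕ :=
  Nat.card {f : X ≃ Fin (Fintype.card X) // ∀ ⦃a b : X⦄, a < b → f a < f b}

section BW

variable {X : Type*} [Fintype X] [PartialOrder X]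

open scoped Classical

set_option linter.unusedSectionVars false
set_option maxHeartbeats 1000000

/-- Extend an equiv on the complement of `m` to `X`, sending `m` to `0`. -/
noncomputable def extEquiv {n : ℕ} (m : X) (g : {x : X // x ≠ m} ≃ Fin n) : X ≃ Fin (n + 1) where
  toFun x := if h : x = m then 0 else (g ⟨x, h⟩).succ
  invFun i := if h : i = 0 then m else (g.symm (i.pred h)).1
  left_inv x := by
    by_cases h : x = m
    · subst h; simp
    · simp [h, Fin.succ_ne_zero]
  right_inv i := by
    by_cases h : i = 0
    · subst h; simp
    · simp [h, dif_neg (g.symm (i.pred h)).2, Subtype.coe_eta]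

lemma extEquiv_apply_ne {n : ℕ} (m : X) (g : {x : X // x ≠ m} ≃ Fin n)
    (x : X) (h : x ≠ m) : extEquiv m g x = (g ⟨x, h⟩).succ := by
  simp [extEquiv, h]

lemma extEquiv_apply_self {n : ℕ} (m : X) (g : {x : X // x ≠ m} ≃ Fin n) :
    extEquiv m g m = 0 := by simp [extEquiv]

lemma extEquiv_strictMono {n : ℕ} {m : X} (hm : IsMin m)
    {g : {x : X // x ≠ m} ≃ Fin n}
    (hg : ∀ ⦃a b : {x : X // x ≠ m}⦄, a < b → g a < g b)
    ⦃a b : X⦄ (hab : a < b) : extEquiv m g a < extEquiv m g b := by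
  have hbm : b ≠ m := fun h => hm.not_lt (h ▸ hab)
  by_cases ham : a = m
  · rw [ham, extEquiv_apply_self, extEquiv_apply_ne m g b hbm]
    exact Fin.succ_pos _
  · rw [extEquiv_apply_ne m g a ham, extEquiv_apply_ne m g b hbm]
    rw [Fin.succ_lt_succ_iff]
    exact hg (by exact_mod_cast hab)

lemma extEquiv_inj {n : ℕ} (m : X) {g g' : {x : X // x ≠ m} ≃ Fin n}
    (h : extEquiv m g = extEquiv m g') : g = g' := by
  refine Equiv.ext fun x => ?_
  have : extEquiv m g x.1 = extEquiv m g' x.1 := by rw [h]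
  rw [extEquiv_apply_ne m g x.1 x.2, extEquiv_apply_ne m g' x.1 x.2] at this
  exact Fin.succ_injective _ this

lemma finCongr_lt {n n' : ℕ} (h : n = n') {a b : Fin n} :
    finCongr h a < finCongr h b ↔ a < b := by
  rw [Fin.lt_def, Fin.lt_def, finCongr_apply, finCongr_apply, Fin.coe_cast, Fin.coe_cast]

/-- upper sets don't change after removing a minimal element -/
lemma upset_card_eq {m : X} (hm : IsMin m) (x : {x : X // x ≠ m}) :
    Nat.card {y : {x : X // x ≠ m} // x ≤ y} = Nat.card {y : X // x.1 ≤ y} := by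
  exact Nat.card_congr
    { toFun := fun y => ⟨y.1.1, y.2⟩
      invFun := fun z => ⟨⟨z.1, fun hzm => x.2 (le_antisymm (le_trans z.2 (le_of_eq hzm)) (hm (le_trans z.2 (le_of_eq hzm))))⟩, z.2⟩
      left_inv := fun y => rfl
      right_inv := fun z => rfl }

lemma prod_split (m : X) (F : X → ℕ) :
    ∏ x : X, F x = F m * ∏ x : {x : X // x ≠ m}, F x.1 := by
  rw [← Finset.prod_subtype (Finset.univ.erase m) (fun x => by simp) (fun x => F x)]
  exact (Finset.mul_prod_erase univ F (mem_univ m)).symm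

lemma card_le_sum_min :
    Fintype.card X ≤ ∑ m : {m : X // IsMin m}, Nat.card {y : X // m.1 ≤ y} := by
  have cover : (univ : Finset X) ⊆ (univ : Finset {m : X // IsMin m}).biUnion
      (fun m => univ.filter (fun y => m.1 ≤ y)) := by
    intro x _
    obtain ⟨b, hb, hbmin⟩ := exists_minimal_le_of_wellFoundedLT (fun _ : X => True) x trivial
    have hbm : IsMin b := fun c hc => hbmin.2 trivial hc
    simp only [mem_biUnion]
    exact ⟨⟨b, hbm⟩, mem_univ _, by simp [hb]⟩
  calc Fintype.card X = (univ : Finset X).card := card_univ.symm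
    _ ≤ _ := (card_le_card cover).trans card_biUnion_le
    _ = _ := by
      refine Finset.sum_congr rfl fun m _ => ?_
      rw [Nat.card_eq_fintype_card, Fintype.card_subtype]

lemma card_compl_ne {n : ℕ} (h : Fintype.card X = n + 1) (m : X) :
    Fintype.card {x : X // x ≠ m} = n := by
  have := Fintype.card_subtype_compl (fun x : X => x = m)
  rw [Fintype.card_subtype_eq, h] at this
  simpa using this

lemma bw_aux : ∀ (n : ℕ) (X : Type*) [Fintype X] [PartialOrder X], Fintype.card X = n →
    Nat.factorial n ≤ linExtCount X * ∏ x : X, Nat.card {y : X // x ≤ y} := by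
  intro n
  induction n with
  | zero =>
    intro X _ _ h
    have he : IsEmpty X := Fintype.card_eq_zero_iff.mp h
    have hu : (univ : Finset X) = ∅ := univ_eq_empty
    rw [hu, Finset.prod_empty, Nat.factorial_zero, mul_one]
    haveI : IsEmpty (Fin (Fintype.card X)) := by rw [h]; infer_instance
    have : Nonempty {f : X ≃ Fin (Fintype.card X) //
        ∀ ⦃a b : X⦄, a < b → f a < f b} :=
      ⟨⟨Equiv.equivOfIsEmpty X (Fin (Fintype.card X)), fun a b hab => isEmptyElim a⟩⟩
    exact Nat.card_pos
  | succ n ih =>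
    intro X _ _ h
    -- set up
    set M := {m : X // IsMin m} with hM
    have hcard : ∀ m : X, Fintype.card {x : X // x ≠ m} = n := card_compl_ne h
    -- the injection Φ
    let E : M → Type _ := fun m =>
      {g : {x : X // x ≠ m.1} ≃ Fin (Fintype.card {x : X // x ≠ m.1}) //
        ∀ ⦃a b : {x : X // x ≠ m.1}⦄, a < b → g a < g b}
    let G : ∀ m : M, E m → ({x : X // x ≠ m.1} ≃ Fin n) :=
      fun m g => g.1.trans (finCongr (hcard m.1))
    let Φ : (Σ m : M, E m) → {f : X ≃ Fin (Fintype.card X) //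
        ∀ ⦃a b : X⦄, a < b → f a < f b} :=
      fun p => ⟨(extEquiv p.1.1 (G p.1 p.2)).trans (finCongr h.symm), by
        intro a b hab
        rw [Equiv.trans_apply, Equiv.trans_apply, finCongr_lt]
        refine extEquiv_strictMono p.1.2 (fun a b hab => ?_) hab
        rw [Equiv.trans_apply, Equiv.trans_apply, finCongr_lt]
        exact p.2.2 hab⟩
    have hΦ : Function.Injective Φ := by
      rintro ⟨⟨m, hm⟩, g, hg⟩ ⟨⟨m', hm'⟩, g', hg'⟩ hEq
      rw [Subtype.ext_iff] at hEq
      simp only [Φ] at hEq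
      have happ : ∀ x : X, finCongr h.symm (extEquiv m (G ⟨m, hm⟩ ⟨g, hg⟩) x) =
          finCongr h.symm (extEquiv m' (G ⟨m', hm'⟩ ⟨g', hg'⟩) x) := by
        intro x
        have := congrArg (fun e : X ≃ Fin (Fintype.card X) => e x) hEq
        simpa using this
      have hmm : m = m' := by
        have h1 := happ m
        rw [extEquiv_apply_self] at h1
        have h2 : extEquiv m' (G ⟨m', hm'⟩ ⟨g', hg'⟩) m =
            extEquiv m' (G ⟨m', hm'⟩ ⟨g', hg'⟩) m' := by
          rw [extEquiv_apply_self]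
          exact ((finCongr h.symm).injective h1).symm
        exact (extEquiv m' (G ⟨m', hm'⟩ ⟨g', hg'⟩)).injective h2
      subst hmm
      have hGeq : G ⟨m, hm⟩ ⟨g, hg⟩ = G ⟨m, hm⟩ ⟨g', hg'⟩ := by
        apply extEquiv_inj m
        refine Equiv.ext fun x => (finCongr h.symm).injective (happ x)
      have hgg : g = g' := by
        have : g.trans (finCongr (hcard m)) = g'.trans (finCongr (hcard m)) := hGeq
        refine Equiv.ext fun x => (finCongr (hcard m)).injective ?_
        exact congrArg (fun e : _ ≃ Fin n => e x) this
      subst hgg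
      rfl
    -- counting
    have hsig : Nat.card (Σ m : M, E m) ≤ linExtCount X :=
      Nat.card_le_card_of_injective Φ hΦ
    have hsig2 : Nat.card (Σ m : M, E m) = ∑ m : M, linExtCount {x : X // x ≠ m.1} := by
      rw [Nat.card_eq_fintype_card, Fintype.card_sigma]
      exact Finset.sum_congr rfl fun m _ => Nat.card_eq_fintype_card.symm
    -- induction hypothesis per minimal element
    have hih : ∀ m : M, Nat.factorial n ≤
        linExtCount {x : X // x ≠ m.1} *
          ∏ x : {x : X // x ≠ m.1}, Nat.card {y : X // x.1 ≤ y} := by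
      intro m
      have := ih {x : X // x ≠ m.1} (hcard m.1)
      calc Nat.factorial n ≤ _ := this
        _ = _ := by
          refine congrArg _ (Finset.prod_congr rfl fun x _ => ?_)
          exact upset_card_eq m.2 x
    -- the chain
    have hbm : ∀ m : M, Nat.card {y : X // m.1 ≤ y} *
        (linExtCount {x : X // x ≠ m.1} *
          ∏ x : {x : X // x ≠ m.1}, Nat.card {y : X // x.1 ≤ y})
        = linExtCount {x : X // x ≠ m.1} * ∏ x : X, Nat.card {y : X // x ≤ y} := by
      intro m
      rw [prod_split m.1 (fun x => Nat.card {y : X // x ≤ y})]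
      ring
    calc Nat.factorial (n + 1) = (n + 1) * Nat.factorial n := rfl
      _ ≤ (∑ m : M, Nat.card {y : X // m.1 ≤ y}) * Nat.factorial n := by
        refine Nat.mul_le_mul_right _ ?_
        rw [← h]; exact card_le_sum_min
      _ = ∑ m : M, Nat.card {y : X // m.1 ≤ y} * Nat.factorial n := by
        rw [Finset.sum_mul]
      _ ≤ ∑ m : M, Nat.card {y : X // m.1 ≤ y} *
          (linExtCount {x : X // x ≠ m.1} *
            ∏ x : {x : X // x ≠ m.1}, Nat.card {y : X // x.1 ≤ y}) := by
        refine Finset.sum_le_sum fun m _ => Nat.mul_le_mul_left _ (hih m)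
      _ = ∑ m : M, linExtCount {x : X // x ≠ m.1} * ∏ x : X, Nat.card {y : X // x ≤ y} := by
        exact Finset.sum_congr rfl fun m _ => hbm m
      _ = (∑ m : M, linExtCount {x : X // x ≠ m.1}) * ∏ x : X, Nat.card {y : X // x ≤ y} := by
        rw [Finset.sum_mul]
      _ ≤ linExtCount X * ∏ x : X, Nat.card {y : X // x ≤ y} := by
        refine Nat.mul_le_mul_right _ ?_
        rw [← hsig2]; exact hsig

end BW

/-- **Björner–Wachs inequality**: `e(P) · ∏_{x ∈ X} b(x) ≥ n!`, where `b(x)` is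
the size of the upper order ideal of `x`. -/
theorem bjorner_wachs (X : Type*) [Fintype X] [PartialOrder X] :
    Nat.factorial (Fintype.card X) ≤
      linExtCount X * ∏ x : X, Nat.card {y : X // x ≤ y} := by
  exact bw_aux (Fintype.card X) X rfl
end

section
/- Let P = (X, ≺) be a finite poset with |X| = n elements. Then e(P) · ∏_{x ∈ X} b(x) = n! if and only if every element of X covers at most one element of X (i.e. P is an ordered forest). -/
set_option linter.unusedSectionVars false

section
def BW.Ext (X : Type*) [PartialOrder X] (k : ℕ) : Type _ :=
  {f : X ≃ Fin k // ∀ ⦃a b : X⦄, a < b → f a < f b}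

lemma BW.linExtCount_eq (X : Type*) [Fintype X] [PartialOrder X] (k : ℕ)
    (h : Fintype.card X = k) : linExtCount X = Nat.card (BW.Ext X k) := by
  subst h; rfl

/-- `Fin (n+1)` minus `0` is equivalent to `Fin n`. -/
def BW.finNeZero (n : ℕ) : {i : Fin (n + 1) // i ≠ 0} ≃ Fin n where
  toFun i := ⟨i.1.1 - 1, by
    have h0 : i.1.1 ≠ 0 := fun h => i.2 (Fin.ext h)
    have := i.1.2; omega⟩
  invFun j := ⟨⟨j.1 + 1, by omega⟩, by simp [Fin.ext_iff]⟩
  left_inv i := by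
    have h0 : i.1.1 ≠ 0 := fun h => i.2 (Fin.ext h)
    apply Subtype.ext; apply Fin.ext; simp; omega
  right_inv j := by apply Fin.ext; simp

lemma BW.finNeZero_val (n : ℕ) (i : {i : Fin (n + 1) // i ≠ 0}) :
    (BW.finNeZero n i).1 = i.1.1 - 1 := rfl

lemma BW.finNeZero_symm_val (n : ℕ) (j : Fin n) :
    ((BW.finNeZero n).symm j).1.1 = j.1 + 1 := rfl

lemma BW.finNeZero_lt_iff (n : ℕ) (i i' : {i : Fin (n + 1) // i ≠ 0}) :
    BW.finNeZero n i < BW.finNeZero n i' ↔ i.1 < i'.1 := by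
  have h0 : i.1.1 ≠ 0 := fun h => i.2 (Fin.ext h)
  have h0' : i'.1.1 ≠ 0 := fun h => i'.2 (Fin.ext h)
  simp only [Fin.lt_def, BW.finNeZero_val]
  omega

end
section

variable {X : Type*} [Fintype X] [PartialOrder X]

def BW.Mini (m : X) : Prop := ∀ y : X, ¬ y < m

instance (k : ℕ) : Finite (BW.Ext X k) := by
  unfold BW.Ext; infer_instance

lemma BW.card_ext_eq_sum_fibers (n : ℕ) :
    Nat.card (BW.Ext X (n + 1)) =
      ∑ m : X, Nat.card {f : BW.Ext X (n + 1) // f.1.symm 0 = m} := by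
  classical
  haveI : Fintype (BW.Ext X (n+1)) := Fintype.ofFinite _
  rw [← Nat.card_congr (Equiv.sigmaFiberEquiv (fun f : BW.Ext X (n+1) => f.1.symm 0))]
  rw [Nat.card_eq_fintype_card, Fintype.card_sigma]
  exact Finset.sum_congr rfl fun m _ => (Nat.card_eq_fintype_card).symm

lemma BW.fiber_empty (n : ℕ) (m : X) (hm : ¬ BW.Mini m) :
    Nat.card {f : BW.Ext X (n + 1) // f.1.symm 0 = m} = 0 := by
  rw [Nat.card_eq_zero]
  left
  constructor
  rintro ⟨⟨f, hf⟩, h⟩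
  simp only [BW.Mini, not_forall, not_not] at hm
  obtain ⟨y, hy⟩ := hm
  have hm0 : f m = 0 := by rw [← h]; exact f.apply_symm_apply 0
  have := hf hy
  rw [hm0] at this
  exact absurd this (Fin.not_lt_zero _)

end
section

variable {X : Type*} [PartialOrder X] [DecidableEq X]

lemma BW.fiber_mem_ne (n : ℕ) (m : X) (F : {f : BW.Ext X (n + 1) // f.1.symm 0 = m})
    (x : X) : x ≠ m ↔ F.1.1 x ≠ 0 := by
  have h : F.1.1 x = 0 ↔ x = m := by
    rw [Equiv.apply_eq_iff_eq_symm_apply, F.2]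
  exact not_congr h.symm

/-- Extend a linear extension of `X \ {m}` (m minimal) to `X`, putting `m` first. -/
def BW.extend (n : ℕ) (m : X) (hm : BW.Mini m) (g : BW.Ext {x : X // x ≠ m} n) :
    {f : BW.Ext X (n + 1) // f.1.symm 0 = m} := by
  refine ⟨⟨{ toFun := fun x => if h : x = m then 0 else ((BW.finNeZero n).symm (g.1 ⟨x, h⟩)).1
             invFun := fun i => if h : i = 0 then m else (g.1.symm ((BW.finNeZero n) ⟨i, h⟩)).1
             left_inv := ?_, right_inv := ?_ }, ?_⟩, ?_⟩
  · intro x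
    by_cases h : x = m
    · simp [h]
    · dsimp only
      rw [dif_neg h]
      have hne : (((BW.finNeZero n).symm (g.1 ⟨x, h⟩)).1 : Fin (n+1)) ≠ 0 :=
        ((BW.finNeZero n).symm (g.1 ⟨x, h⟩)).2
      rw [dif_neg hne]
      have : (⟨_, hne⟩ : {i : Fin (n+1) // i ≠ 0}) = (BW.finNeZero n).symm (g.1 ⟨x, h⟩) :=
        Subtype.ext rfl
      rw [this, Equiv.apply_symm_apply, Equiv.symm_apply_apply]
  · intro i
    by_cases h : i = 0
    · simp [h]
    · dsimp only
      rw [dif_neg h]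
      have hne : (g.1.symm ((BW.finNeZero n) ⟨i, h⟩)).1 ≠ m := (g.1.symm _).2
      rw [dif_neg hne]
      have : (⟨_, hne⟩ : {x : X // x ≠ m}) = g.1.symm ((BW.finNeZero n) ⟨i, h⟩) :=
        Subtype.ext rfl
      rw [this, Equiv.apply_symm_apply, Equiv.symm_apply_apply]
  · -- monotonicity
    intro a b hab
    by_cases ha : a = m
    · have hb : b ≠ m := by rintro rfl; exact lt_irrefl b (ha ▸ hab)
      simp only [Equiv.coe_fn_mk]
      rw [ha, dif_pos rfl, dif_neg hb]
      have hne : (((BW.finNeZero n).symm (g.1 ⟨b, hb⟩)).1 : Fin (n+1)) ≠ 0 :=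
        ((BW.finNeZero n).symm (g.1 ⟨b, hb⟩)).2
      exact Fin.pos_of_ne_zero hne
    · have hb : b ≠ m := by rintro rfl; exact hm a hab
      simp only [Equiv.coe_fn_mk]
      rw [dif_neg ha, dif_neg hb]
      have hg := g.2 (show (⟨a, ha⟩ : {x : X // x ≠ m}) < ⟨b, hb⟩ from hab)
      have key : ∀ j j' : Fin n, j < j' →
          (((BW.finNeZero n).symm j).1 : Fin (n+1)) < ((BW.finNeZero n).symm j').1 := by
        intro j j' hjj
        show (((BW.finNeZero n).symm j).1 : Fin (n+1)).1 < (((BW.finNeZero n).symm j').1).1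
        show j.1 + 1 < j'.1 + 1
        omega
      exact key _ _ hg
  · -- f.symm 0 = m
    show (if h : (0 : Fin (n+1)) = 0 then m else (g.1.symm ((BW.finNeZero n) ⟨0, h⟩)).1) = m
    exact dif_pos rfl

lemma BW.extend_coe_ne (n : ℕ) (m : X) (hm : BW.Mini m) (g : BW.Ext {x : X // x ≠ m} n)
    (x : X) (hx : x ≠ m) :
    (BW.extend n m hm g).1.1 x = ((BW.finNeZero n).symm (g.1 ⟨x, hx⟩)).1 := dif_neg hx

/-- Restrict a linear extension of `X` sending `m` to `0` to `X \ {m}`. -/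
def BW.restrict (n : ℕ) (m : X) (F : {f : BW.Ext X (n + 1) // f.1.symm 0 = m}) :
    BW.Ext {x : X // x ≠ m} n := by
  refine ⟨(Equiv.subtypeEquiv F.1.1 (BW.fiber_mem_ne n m F)).trans (BW.finNeZero n), ?_⟩
  intro a b hab
  rw [Equiv.trans_apply, Equiv.trans_apply, BW.finNeZero_lt_iff]
  exact F.1.2 (show a.1 < b.1 from hab)

lemma BW.restrict_coe (n : ℕ) (m : X) (F : {f : BW.Ext X (n + 1) // f.1.symm 0 = m})
    (x : X) (hx : x ≠ m) (hne : F.1.1 x ≠ 0) :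
    (BW.restrict n m F).1 ⟨x, hx⟩ = BW.finNeZero n ⟨F.1.1 x, hne⟩ := rfl

lemma BW.card_fiber (n : ℕ) (m : X) (hm : BW.Mini m) :
    Nat.card {f : BW.Ext X (n + 1) // f.1.symm 0 = m} =
      Nat.card (BW.Ext {x : X // x ≠ m} n) := by
  apply Nat.card_congr
  refine ⟨BW.restrict n m, BW.extend n m hm, ?_, ?_⟩
  · -- extend ∘ restrict = id
    intro F
    apply Subtype.ext
    apply Subtype.ext
    apply Equiv.ext
    intro x
    by_cases h : x = m
    · show (BW.extend n m hm (BW.restrict n m F)).1.1 x = F.1.1 x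
      rw [h]
      have h2 : F.1.1 m = 0 := (Equiv.apply_eq_iff_eq_symm_apply _).2 F.2.symm
      rw [h2]
      exact dif_pos rfl
    · show (BW.extend n m hm (BW.restrict n m F)).1.1 x = F.1.1 x
      rw [BW.extend_coe_ne n m hm _ x h,
        BW.restrict_coe n m F x h ((BW.fiber_mem_ne n m F x).1 h),
        Equiv.symm_apply_apply]
  · -- restrict ∘ extend = id
    intro g
    apply Subtype.ext
    apply Equiv.ext
    rintro ⟨x, hx⟩
    have hne : (BW.extend n m hm g).1.1 x ≠ 0 :=
      (BW.fiber_mem_ne n m (BW.extend n m hm g) x).1 hx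
    rw [BW.restrict_coe n m _ x hx hne]
    have : (⟨(BW.extend n m hm g).1.1 x, hne⟩ : {i : Fin (n+1) // i ≠ 0})
        = (BW.finNeZero n).symm (g.1 ⟨x, hx⟩) :=
      Subtype.ext (BW.extend_coe_ne n m hm g x hx)
    rw [this, Equiv.apply_symm_apply]

end
section
def BW.Forest (X : Type*) [PartialOrder X] : Prop :=
  ∀ z y₁ y₂ : X, y₁ ⋖ z → y₂ ⋖ z → y₁ = y₂

variable {X : Type*} [PartialOrder X]

lemma BW.bval_sub (m : X) (hm : BW.Mini m) (x : {x : X // x ≠ m}) :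
    Nat.card {y : {x' : X // x' ≠ m} // x ≤ y} = Nat.card {y : X // x.1 ≤ y} := by
  apply Nat.card_congr
  refine ⟨fun y => ⟨y.1.1, y.2⟩, fun y => ⟨⟨y.1, ?_⟩, y.2⟩, fun y => rfl, fun y => rfl⟩
  intro hym
  have : x.1 ≤ m := le_of_le_of_eq y.2 hym
  exact hm x.1 (lt_of_le_of_ne this x.2)

lemma BW.covBy_sub_iff (m : X) (hm : BW.Mini m) (a b : {x : X // x ≠ m}) :
    a ⋖ b ↔ a.1 ⋖ b.1 := by
  constructor
  · rintro ⟨h1, h2⟩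
    refine ⟨h1, fun w hw hw2 => ?_⟩
    have hwm : w ≠ m := by rintro rfl; exact hm a.1 hw
    exact h2 (show a < (⟨w, hwm⟩ : {x : X // x ≠ m}) from hw) hw2
  · rintro ⟨h1, h2⟩
    exact ⟨h1, fun w hw hw2 => h2 hw hw2⟩

lemma BW.forest_sub (hF : BW.Forest X) (m : X) (hm : BW.Mini m) :
    BW.Forest {x : X // x ≠ m} := by
  intro z y₁ y₂ h1 h2
  exact Subtype.ext (hF z.1 y₁.1 y₂.1 ((BW.covBy_sub_iff m hm _ _).1 h1)
    ((BW.covBy_sub_iff m hm _ _).1 h2))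

lemma BW.exists_le_covBy [Finite X] {a x : X} (h : a < x) : ∃ c, a ≤ c ∧ c ⋖ x := by
  obtain ⟨c, ⟨hac, hcx⟩, hmax⟩ :=
    Set.Finite.exists_maximalFor id {w : X | a ≤ w ∧ w < x} (Set.toFinite _) ⟨a, le_rfl, h⟩
  refine ⟨c, hac, hcx, fun w hcw hwx => ?_⟩
  exact absurd (hmax ⟨le_of_lt (lt_of_le_of_lt hac hcw), hwx⟩ (le_of_lt hcw)) (not_le_of_gt hcw)

lemma BW.chain_below [Finite X] (hF : BW.Forest X) :
    ∀ x a b : X, a ≤ x → b ≤ x → a ≤ b ∨ b ≤ a := by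
  have wf := (Finite.to_wellFoundedLT (α := X)).wf
  intro x
  refine wf.induction (C := fun x => ∀ a b : X, a ≤ x → b ≤ x → a ≤ b ∨ b ≤ a) x ?_
  intro x IH a b ha hb
  rcases eq_or_lt_of_le ha with rfl | ha'
  · exact Or.inr hb
  rcases eq_or_lt_of_le hb with rfl | hb'
  · exact Or.inl ha
  obtain ⟨c, hac, hcx⟩ := BW.exists_le_covBy ha'
  obtain ⟨d, hbd, hdx⟩ := BW.exists_le_covBy hb'
  have hcd : c = d := hF x c d hcx hdx
  exact IH c hcx.1 a b hac (hcd ▸ hbd)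

lemma BW.exists_mini_le [Finite X] (x : X) : ∃ m : X, BW.Mini m ∧ m ≤ x := by
  obtain ⟨m, hmx, hmin⟩ := exists_minimal_le_of_wellFoundedLT (fun _ : X => True) x trivial
  exact ⟨m, fun y hy => absurd (hmin.2 trivial (le_of_lt hy)) (not_le_of_gt hy), hmx⟩

lemma BW.mini_unique [Finite X] (hF : BW.Forest X) {x m₁ m₂ : X}
    (h1 : BW.Mini m₁) (h2 : BW.Mini m₂) (hle1 : m₁ ≤ x) (hle2 : m₂ ≤ x) : m₁ = m₂ := by
  rcases BW.chain_below hF x m₁ m₂ hle1 hle2 with h | h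
  · by_contra hne; exact h2 m₁ (lt_of_le_of_ne h hne)
  · by_contra hne; exact h1 m₂ (lt_of_le_of_ne h (Ne.symm hne))

end
section Master
universe u

lemma BW.master (n : ℕ) : ∀ (X : Type u) [Fintype X] [PartialOrder X],
    Fintype.card X = n →
    ((BW.Forest X → linExtCount X * ∏ x : X, Nat.card {y : X // x ≤ y} = n.factorial) ∧
     (¬ BW.Forest X → n.factorial < linExtCount X * ∏ x : X, Nat.card {y : X // x ≤ y})) := by
  induction n with
  | zero =>
    intro X _ _ hcard
    haveI : IsEmpty X := Fintype.card_eq_zero_iff.mp hcard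
    constructor
    · intro _
      have h1 : linExtCount X = 1 := by
        rw [BW.linExtCount_eq X 0 hcard]
        haveI : Unique (BW.Ext X 0) :=
          { default := ⟨Equiv.equivOfIsEmpty X (Fin 0), fun a => isEmptyElim a⟩
            uniq := fun g => Subtype.ext (Equiv.ext fun a => isEmptyElim a) }
        exact Nat.card_unique
      rw [h1, Finset.univ_eq_empty, Finset.prod_empty]
      rfl
    · intro hF
      exact absurd (fun z => isEmptyElim z) hF
  | succ k IH =>
    intro X _ _ hcard
    classical
    haveI : Nonempty X := Fintype.card_pos_iff.mp (by omega)
    set b : X → ℕ := fun x => Nat.card {y : X // x ≤ y} with hb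
    set M : Finset X := Finset.univ.filter (fun m => BW.Mini m) with hM
    have hMmem : ∀ m : X, m ∈ M ↔ BW.Mini m := by
      intro m; simp [hM]
    -- card of complement subtype
    have hsubcard : ∀ m : X, Fintype.card {x : X // x ≠ m} = k := by
      intro m
      have h1 : Fintype.card {x : X // ¬ x = m} = Fintype.card X - Fintype.card {x : X // x = m} :=
        Fintype.card_subtype_compl _
      have h2 : Fintype.card {x : X // x = m} = 1 := Fintype.card_subtype_eq m
      have : Fintype.card {x : X // x ≠ m} = Fintype.card X - 1 := by
        rw [← h2, ← h1]
      omega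
    -- abbreviation for subposet quantity
    set Q : X → ℕ := fun m => linExtCount {x : X // x ≠ m} *
      ∏ x : {x : X // x ≠ m}, Nat.card {y : {x : X // x ≠ m} // x ≤ y} with hQ
    -- IH packaged
    have hIH : ∀ m : X, (BW.Forest {x : X // x ≠ m} → Q m = k.factorial) ∧
        (¬ BW.Forest {x : X // x ≠ m} → k.factorial < Q m) := by
      intro m
      exact IH {x : X // x ≠ m} (hsubcard m)
    have hIHle : ∀ m : X, k.factorial ≤ Q m := by
      intro m
      rcases Classical.em (BW.Forest {x : X // x ≠ m}) with h | h
      · exact le_of_eq ((hIH m).1 h).symm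
      · exact le_of_lt ((hIH m).2 h)
    -- recursion for linExtCount
    have hrec : linExtCount X = ∑ m ∈ M, linExtCount {x : X // x ≠ m} := by
      rw [BW.linExtCount_eq X (k + 1) hcard, BW.card_ext_eq_sum_fibers]
      rw [← Finset.sum_filter_of_ne
        (fun m _ hne => (hMmem m).2 (by
          by_contra hmin
          exact hne (BW.fiber_empty k m hmin)))]
      refine Finset.sum_congr (Finset.filter_univ_mem M) fun m hm => ?_
      rw [BW.card_fiber k m ((hMmem m).1 hm), BW.linExtCount_eq {x : X // x ≠ m} k (hsubcard m)]
    -- product splitting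
    have hprod : ∀ m ∈ M, ∏ x : X, b x =
        b m * ∏ x : {x : X // x ≠ m}, Nat.card {y : {x : X // x ≠ m} // x ≤ y} := by
      intro m hm
      have h1 : ∏ x : {x : X // x ≠ m}, Nat.card {y : {x : X // x ≠ m} // x ≤ y} =
          ∏ x : {x : X // x ≠ m}, b x.1 := by
        exact Finset.prod_congr rfl fun x _ => BW.bval_sub m ((hMmem m).1 hm) x
      have h2 : ∏ x ∈ Finset.univ.erase m, b x = ∏ x : {x : X // x ≠ m}, b x.1 :=
        Finset.prod_subtype _ (fun x => by simp) _
      rw [h1, ← h2, Finset.mul_prod_erase Finset.univ b (Finset.mem_univ m)]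
    -- key identity
    have key : linExtCount X * ∏ x : X, b x = ∑ m ∈ M, Q m * b m := by
      rw [hrec, Finset.sum_mul]
      refine Finset.sum_congr rfl fun m hm => ?_
      rw [hprod m hm, hQ]
      ring
    -- counting minimal elements below each point
    set u : X → ℕ := fun x => (M.filter (· ≤ x)).card with hu
    have hsum : ∑ m ∈ M, b m = ∑ x : X, u x := by
      have h1 : ∀ m : X, b m = ∑ x : X, if m ≤ x then 1 else 0 := by
        intro m
        show Nat.card {y : X // m ≤ y} = _
        rw [Nat.card_eq_fintype_card, Fintype.card_subtype, Finset.card_filter]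
      calc ∑ m ∈ M, b m = ∑ m ∈ M, ∑ x : X, if m ≤ x then 1 else 0 :=
            Finset.sum_congr rfl fun m _ => h1 m
        _ = ∑ x : X, ∑ m ∈ M, if m ≤ x then 1 else 0 := Finset.sum_comm
        _ = ∑ x : X, u x := Finset.sum_congr rfl fun x _ => (Finset.card_filter _ _).symm
    have hu1 : ∀ x : X, 1 ≤ u x := by
      intro x
      obtain ⟨m, hmin, hmx⟩ := BW.exists_mini_le x
      refine Finset.card_pos.mpr ⟨m, ?_⟩
      simp [hM, hmin, hmx]
    have hb1 : ∀ m : X, 1 ≤ b m := by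
      intro m
      haveI : Nonempty {y : X // m ≤ y} := ⟨⟨m, le_rfl⟩⟩
      exact Nat.card_pos
    constructor
    · -- Forest case
      intro hF
      have hQk : ∀ m ∈ M, Q m = k.factorial := fun m hm =>
        (hIH m).1 (BW.forest_sub hF m ((hMmem m).1 hm))
      have hux : ∀ x : X, u x = 1 := by
        intro x
        refine le_antisymm (Finset.card_le_one.mpr ?_) (hu1 x)
        intro a ha b' hb'
        simp only [Finset.mem_filter, hMmem] at ha hb'
        exact BW.mini_unique hF ha.1 hb'.1 ha.2 hb'.2
      have : ∑ m ∈ M, Q m * b m = k.factorial * ∑ m ∈ M, b m := by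
        rw [Finset.mul_sum]
        exact Finset.sum_congr rfl fun m hm => by rw [hQk m hm]
      rw [key, this, hsum]
      have : ∑ x : X, u x = k + 1 := by
        rw [Finset.sum_congr rfl fun x _ => hux x]
        simp [hcard]
      rw [this, Nat.factorial_succ]
      ring
    · -- non-Forest case
      intro hF
      simp only [BW.Forest, not_forall] at hF
      obtain ⟨z, y₁, y₂, h1, h2, hne⟩ := hF
      have hkfac : 0 < k.factorial := Nat.factorial_pos k
      have hbound : ∀ m ∈ M, k.factorial * b m ≤ Q m * b m := fun m _ =>
        Nat.mul_le_mul_right _ (hIHle m)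
      by_cases hu2 : 2 ≤ u z
      · -- at least two minimal elements below z
        have hsumu : k + 2 ≤ ∑ x : X, u x := by
          have h3 : ∑ x ∈ Finset.univ.erase z, u x + u z = ∑ x : X, u x :=
            Finset.sum_erase_add _ _ (Finset.mem_univ z)
          have h4 : (Finset.univ.erase z).card = k := by
            rw [Finset.card_erase_of_mem (Finset.mem_univ z), Finset.card_univ, hcard]
            omega
          have h5 : (Finset.univ.erase z).card ≤ ∑ x ∈ Finset.univ.erase z, u x := by
            rw [Finset.card_eq_sum_ones]
            exact Finset.sum_le_sum fun x _ => hu1 x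
          omega
        have : k.factorial * (k + 2) ≤ ∑ m ∈ M, Q m * b m := by
          calc k.factorial * (k + 2) ≤ k.factorial * ∑ x : X, u x :=
                Nat.mul_le_mul_left _ hsumu
            _ = k.factorial * ∑ m ∈ M, b m := by rw [hsum]
            _ = ∑ m ∈ M, k.factorial * b m := Finset.mul_sum _ _ _
            _ ≤ ∑ m ∈ M, Q m * b m := Finset.sum_le_sum hbound
        rw [key]
        calc (k + 1).factorial = k.factorial * (k + 1) := by
              rw [Nat.factorial_succ]; ring
          _ < k.factorial * (k + 2) := by
              exact (Nat.mul_lt_mul_left hkfac).2 (by omega)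
          _ ≤ ∑ m ∈ M, Q m * b m := this
      · -- unique minimal element m₀ below z
        have huz : u z = 1 := le_antisymm (by omega) (hu1 z)
        obtain ⟨m₀, hm₀⟩ := Finset.card_eq_one.mp huz
        have hm₀mem : m₀ ∈ M.filter (· ≤ z) := by rw [hm₀]; exact Finset.mem_singleton_self m₀
        have hm₀M : m₀ ∈ M := (Finset.mem_filter.mp hm₀mem).1
        have hm₀min : BW.Mini m₀ := (hMmem m₀).1 hm₀M
        have hm₀z : m₀ ≤ z := (Finset.mem_filter.mp hm₀mem).2
        have huniq : ∀ m' : X, BW.Mini m' → m' ≤ z → m' = m₀ := by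
          intro m' hmin hle
          have : m' ∈ M.filter (· ≤ z) := Finset.mem_filter.mpr ⟨(hMmem m').2 hmin, hle⟩
          rw [hm₀] at this
          exact Finset.mem_singleton.mp this
        have hm₀y : ∀ y : X, y ⋖ z → m₀ ≤ y := by
          intro y hy
          obtain ⟨m', hmin, hle⟩ := BW.exists_mini_le y
          have := huniq m' hmin (le_of_lt (lt_of_le_of_lt hle hy.1))
          rw [← this]; exact hle
        have hm₀y₁ : m₀ ≤ y₁ := hm₀y y₁ h1
        have hm₀y₂ : m₀ ≤ y₂ := hm₀y y₂ h2
        have hm₀ne₁ : m₀ ≠ y₁ := by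
          rintro rfl
          exact h1.2 (lt_of_le_of_ne hm₀y₂ (Ne.symm (Ne.symm hne))) h2.1
        have hm₀ne₂ : m₀ ≠ y₂ := by
          rintro rfl
          exact h2.2 (lt_of_le_of_ne hm₀y₁ (fun h => hne h.symm)) h1.1
        have hm₀nez : m₀ ≠ z := by
          rintro rfl
          exact absurd h1.1 (not_lt_of_ge hm₀y₁)
        -- subposet without m₀ is not a forest
        have hnotF : ¬ BW.Forest {x : X // x ≠ m₀} := by
          intro hFs
          have := hFs ⟨z, Ne.symm hm₀nez⟩ ⟨y₁, Ne.symm hm₀ne₁⟩ ⟨y₂, Ne.symm hm₀ne₂⟩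
            ((BW.covBy_sub_iff m₀ hm₀min _ _).2 h1) ((BW.covBy_sub_iff m₀ hm₀min _ _).2 h2)
          exact hne (congrArg Subtype.val this)
        have hstrict : k.factorial + 1 ≤ Q m₀ := (hIH m₀).2 hnotF
        -- assemble
        have hsumb : k + 1 ≤ ∑ m ∈ M, b m := by
          rw [hsum]
          calc k + 1 = ∑ _x : X, 1 := by simp [hcard]
            _ ≤ ∑ x : X, u x := Finset.sum_le_sum fun x _ => hu1 x
        have hsplit : ∑ m ∈ M, Q m * b m =
            Q m₀ * b m₀ + ∑ m ∈ M.erase m₀, Q m * b m :=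
          (Finset.add_sum_erase M _ hm₀M).symm
        have hbig : k.factorial * ∑ m ∈ M, b m + b m₀ ≤ ∑ m ∈ M, Q m * b m := by
          rw [hsplit, ← Finset.add_sum_erase M (fun m => b m) hm₀M, Nat.mul_add]
          have e1 : k.factorial * b m₀ + b m₀ ≤ Q m₀ * b m₀ := by
            have : (k.factorial + 1) * b m₀ ≤ Q m₀ * b m₀ :=
              Nat.mul_le_mul_right _ hstrict
            rw [Nat.add_mul, Nat.one_mul] at this
            exact this
          have e2 : k.factorial * ∑ m ∈ M.erase m₀, b m ≤ ∑ m ∈ M.erase m₀, Q m * b m := by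
            rw [Finset.mul_sum]
            exact Finset.sum_le_sum fun m hm => hbound m (Finset.mem_of_mem_erase hm)
          omega
        rw [key]
        have : (k + 1).factorial = k.factorial * (k + 1) := by
          rw [Nat.factorial_succ]; ring
        have hbm₀ := hb1 m₀
        have := Nat.mul_le_mul_left k.factorial hsumb
        omega

end Master

/-- Equality in the Björner–Wachs inequality holds if and only if every element
of the poset covers at most one element (i.e. `P` is an ordered forest). -/
theorem bjorner_wachs_equality (X : Type*) [Fintype X] [PartialOrder X] :
    linExtCount X * ∏ x : X, Nat.card {y : X // x ≤ y} =
      Nat.factorial (Fintype.card X) ↔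
    ∀ z y₁ y₂ : X, y₁ ⋖ z → y₂ ⋖ z → y₁ = y₂ := by
  constructor
  · intro h
    by_contra hF
    have := (BW.master (Fintype.card X) X rfl).2 hF
    omega
  · intro hF
    exact (BW.master (Fintype.card X) X rfl).1 hF
end

section
/- Let P = (X, ≺) be a finite poset with |X| = n elements, let r be the number of maximal elements of P, and let t ≥ 1 be an integer. Then Ω(P,t) · ∏_{x ∈ X} b(x) ≥ t^r · (t+1)^{n−r}. -/
open Finset
open scoped Classical

noncomputable def mono (Y : Type*) [Fintype Y] [PartialOrder Y] (t : ℕ) :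
    Finset (Y → Fin t) :=
  Finset.univ.filter Monotone

lemma mem_mono {Y : Type*} [Fintype Y] [PartialOrder Y] {t : ℕ} {g : Y → Fin t} :
    g ∈ mono Y t ↔ Monotone g := by
  simp [mono]

lemma mono_card_pos {Y : Type*} [Fintype Y] [PartialOrder Y] {t : ℕ} (ht : 1 ≤ t) :
    0 < (mono Y t).card :=
  Finset.card_pos.2 ⟨fun _ => ⟨0, ht⟩, mem_mono.2 monotone_const⟩

noncomputable def msel {Y : Type*} [Fintype Y] [PartialOrder Y] {t : ℕ} (S : Finset Y)
    (g : Y → Fin t) : ℕ :=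
  (Finset.univ.filter (fun v : Fin t => ∀ y ∈ S, v ≤ g y)).card

lemma msel_empty {Y : Type*} [Fintype Y] [PartialOrder Y] {t : ℕ} (g : Y → Fin t) :
    msel (∅ : Finset Y) g = t := by
  simp [msel]

lemma msel_mono {Y : Type*} [Fintype Y] [PartialOrder Y] {t : ℕ} (S : Finset Y) :
    Monotone (msel (t := t) S) := by
  intro a b hab
  refine Finset.card_le_card ?_
  intro v hv
  simp only [Finset.mem_filter, Finset.mem_univ, true_and] at hv ⊢
  exact fun y hy => le_trans (hv y hy) (hab y)

/-- (Λ): `(t+1-n) * Ω(t+1) ≤ (t+1) * Ω(t)`, by a value-gap-deletion injection. -/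
lemma lam (Y : Type*) [Fintype Y] [PartialOrder Y] (t : ℕ) (ht : 1 ≤ t) :
    (t + 1 - Fintype.card Y) * (mono Y (t+1)).card ≤ (t+1) * (mono Y t).card := by
  set P : Finset ((g : Y → Fin (t+1)) × Fin (t+1)) :=
    (mono Y (t+1)).sigma (fun g => Finset.univ.filter (fun v => ∀ y, g y ≠ v)) with hP
  have hcard1 : (t + 1 - Fintype.card Y) * (mono Y (t+1)).card ≤ P.card := by
    rw [hP, Finset.card_sigma]
    have : (t + 1 - Fintype.card Y) * (mono Y (t+1)).card
        = ∑ _g ∈ mono Y (t+1), (t + 1 - Fintype.card Y) := by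
      rw [Finset.sum_const, smul_eq_mul, mul_comm]
    rw [this]
    refine Finset.sum_le_sum ?_
    intro g _
    have h1 : (Finset.univ.filter (fun v : Fin (t+1) => ∀ y, g y ≠ v)) =
        Finset.univ \ (Finset.univ.image g) := by
      ext v
      simp only [Finset.mem_filter, Finset.mem_univ, true_and, Finset.mem_sdiff,
        Finset.mem_image]
      tauto
    rw [h1, Finset.card_sdiff_of_subset (Finset.subset_univ _)]
    have h2 : (Finset.univ.image g).card ≤ Fintype.card Y := by
      calc (Finset.univ.image g).card ≤ (Finset.univ : Finset Y).card :=
            Finset.card_image_le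
        _ = Fintype.card Y := Finset.card_univ
    have h3 : (Finset.univ : Finset (Fin (t+1))).card = t + 1 := by simp
    omega
  have hcard2 : P.card ≤ ((mono Y t) ×ˢ (Finset.univ : Finset (Fin (t+1)))).card := by
    refine Finset.card_le_card_of_injOn
      (fun p => (fun y =>
        if h : (p.1 y : ℕ) < (p.2 : ℕ) then
          (⟨(p.1 y : ℕ), by omega⟩ : Fin t)
        else
          (⟨(p.1 y : ℕ) - 1, by have := (p.1 y).isLt; have := p.2.isLt; omega⟩ : Fin t), p.2))
      ?_ ?_
    · rintro ⟨g, v⟩ hp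
      simp only [hP, Finset.mem_coe, Finset.mem_sigma, mem_mono, Finset.mem_filter, Finset.mem_univ,
        true_and] at hp
      obtain ⟨hg, hv⟩ := hp
      refine Finset.mem_product.2 ⟨mem_mono.2 ?_, Finset.mem_univ _⟩
      intro y₁ y₂ hy
      have h12 : (g y₁ : ℕ) ≤ (g y₂ : ℕ) := hg hy
      have hne1 : (g y₁ : ℕ) ≠ (v : ℕ) := fun h => hv y₁ (Fin.ext h)
      have hne2 : (g y₂ : ℕ) ≠ (v : ℕ) := fun h => hv y₂ (Fin.ext h)
      simp only [Fin.le_def]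
      split_ifs <;> simp <;> omega
    · rintro ⟨g, v⟩ hp ⟨g', v'⟩ hp' heq
      simp only [hP, Finset.coe_sigma, Set.mem_sigma_iff, Finset.mem_coe, mem_mono,
        Finset.mem_filter, Finset.mem_univ, true_and] at hp hp'
      simp only [Prod.mk.injEq] at heq
      obtain ⟨hfun, hvv⟩ := heq
      subst hvv
      obtain ⟨hg, hv⟩ := hp
      obtain ⟨hg', hv'⟩ := hp'
      have : g = g' := by
        funext y
        have h := congrFun hfun y
        have hne1 : (g y : ℕ) ≠ (v : ℕ) := fun h => hv y (Fin.ext h)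
        have hne2 : (g' y : ℕ) ≠ (v : ℕ) := fun h => hv' y (Fin.ext h)
        have hlt1 := (g y).isLt
        have hlt2 := (g' y).isLt
        apply Fin.ext
        split_ifs at h with h1 h2 h2 <;>
          (have := Fin.mk.injEq (n := t) _ _ _ _ ▸ h; simp only [Fin.mk.injEq] at h) <;> omega
      subst this
      rfl
  have hcard3 : ((mono Y t) ×ˢ (Finset.univ : Finset (Fin (t+1)))).card
      = (t+1) * (mono Y t).card := by
    rw [Finset.card_product]
    simp [mul_comm]
  omega


/-- counting monotone maps that are `≥ v` everywhere: shift down by `v`. -/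
lemma count_ge (Y : Type*) [Fintype Y] [PartialOrder Y] (t : ℕ) (v : Fin t) :
    ((mono Y t).filter (fun g => ∀ y, v ≤ g y)).card = (mono Y (t - (v : ℕ))).card := by
  refine Finset.card_bij'
    (fun g _ => fun y => (⟨(g y : ℕ) - (v : ℕ), by have := (g y).isLt; omega⟩ : Fin (t - (v:ℕ))))
    (fun h _ => fun y => (⟨(h y : ℕ) + (v : ℕ), by have := (h y).isLt; omega⟩ : Fin t))
    ?_ ?_ ?_ ?_
  · intro g hg
    simp only [Finset.mem_filter, mem_mono] at hg
    obtain ⟨hgm, hgv⟩ := hg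
    refine mem_mono.2 ?_
    intro y₁ y₂ hy
    have : (g y₁ : ℕ) ≤ (g y₂ : ℕ) := hgm hy
    simp only [Fin.mk_le_mk]
    omega
  · intro h hh
    rw [mem_mono] at hh
    refine Finset.mem_filter.2 ⟨mem_mono.2 ?_, ?_⟩
    · intro y₁ y₂ hy
      have : (h y₁ : ℕ) ≤ (h y₂ : ℕ) := hh hy
      simp only [Fin.mk_le_mk]
      omega
    · intro y
      simp only [Fin.le_def]
      omega
  · intro g hg
    simp only [Finset.mem_filter, mem_mono] at hg
    funext y
    have : (v : ℕ) ≤ (g y : ℕ) := hg.2 y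
    apply Fin.ext
    simp only []
    omega
  · intro h _
    funext y
    apply Fin.ext
    simp only []
    omega

/-- key identity: `∑_{g monotone} msel univ g = ∑_{s=1}^t Ω(Y,s)`. -/
lemma sum_msel_univ (Y : Type*) [Fintype Y] [PartialOrder Y] (t : ℕ) :
    ∑ g ∈ mono Y t, msel Finset.univ g
      = ∑ s ∈ Finset.range t, (mono Y (s+1)).card := by
  have step1 : ∀ g : Y → Fin t, msel Finset.univ g
      = ∑ v : Fin t, if ∀ y, v ≤ g y then 1 else 0 := by
    intro g
    rw [msel, Finset.card_filter]
    apply Finset.sum_congr rfl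
    intro v _
    simp
  calc ∑ g ∈ mono Y t, msel Finset.univ g
      = ∑ g ∈ mono Y t, ∑ v : Fin t, if ∀ y, v ≤ g y then 1 else 0 := by
        exact Finset.sum_congr rfl (fun g _ => step1 g)
    _ = ∑ v : Fin t, ∑ g ∈ mono Y t, if ∀ y, v ≤ g y then 1 else 0 := Finset.sum_comm
    _ = ∑ v : Fin t, ((mono Y t).filter (fun g => ∀ y, v ≤ g y)).card := by
        apply Finset.sum_congr rfl
        intro v _
        rw [Finset.card_filter]
    _ = ∑ v : Fin t, (mono Y (t - (v : ℕ))).card := by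
        exact Finset.sum_congr rfl (fun v _ => count_ge Y t v)
    _ = ∑ i ∈ Finset.range t, (mono Y (t - i)).card :=
        Fin.sum_univ_eq_sum_range (fun i => (mono Y (t - i)).card) t
    _ = ∑ s ∈ Finset.range t, (mono Y (s+1)).card := by
        rw [← Finset.sum_range_reflect (fun j => (mono Y (j+1)).card) t]
        have hcc : ∀ a b : ℕ, a = b → (mono Y a).card = (mono Y b).card := by
          intro a b h; subst h; rfl
        apply Finset.sum_congr rfl
        intro i hi
        rw [Finset.mem_range] at hi
        exact hcc _ _ (by omega)

lemma mono_card_one (Y : Type*) [Fintype Y] [PartialOrder Y] :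
    (mono Y 1).card = 1 := by
  have : mono Y 1 = Finset.univ := by
    apply Finset.filter_true_of_mem
    intro g _
    intro a b _
    exact le_of_eq (Subsingleton.elim _ _)
  rw [this, Finset.card_univ]
  exact Fintype.card_unique

/-- (♣): `(n+1) * ∑_{s=1}^t Ω(s) ≥ (t+1) * Ω(t)` for nonempty `Y`. -/
lemma club (Y : Type*) [Fintype Y] [PartialOrder Y] (hY : 1 ≤ Fintype.card Y) :
    ∀ t : ℕ, 1 ≤ t →
      (t+1) * (mono Y t).card
        ≤ (Fintype.card Y + 1) * ∑ s ∈ Finset.range t, (mono Y (s+1)).card := by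
  intro t
  induction t with
  | zero => omega
  | succ t ih =>
    intro _
    by_cases ht : 1 ≤ t
    · have h1 := ih ht
      have h2 := lam Y t ht
      rw [Finset.sum_range_succ, Nat.mul_add]
      have key : (t + 1 + 1) * (mono Y (t+1)).card
          ≤ (t + 1 - Fintype.card Y) * (mono Y (t+1)).card
            + (Fintype.card Y + 1) * (mono Y (t+1)).card := by
        rw [← Nat.add_mul]
        apply Nat.mul_le_mul_right
        omega
      calc (t + 1 + 1) * (mono Y (t+1)).card
          ≤ (t + 1 - Fintype.card Y) * (mono Y (t+1)).card
            + (Fintype.card Y + 1) * (mono Y (t+1)).card := key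
        _ ≤ (t+1) * (mono Y t).card + (Fintype.card Y + 1) * (mono Y (t+1)).card := by
            exact Nat.add_le_add_right h2 _
        _ ≤ (Fintype.card Y + 1) * ∑ s ∈ Finset.range t, (mono Y (s+1)).card
            + (Fintype.card Y + 1) * (mono Y (t+1)).card := Nat.add_le_add_right h1 _
    · have ht0 : t = 0 := by omega
      subst ht0
      simp [mono_card_one]
      omega

section Decomp

variable {Y : Type*} [Fintype Y] [PartialOrder Y] {u : Y} (hu : ∀ z : Y, ¬ z < u) {t : ℕ}

/-- restriction to the complement of `u`. -/
def resu (u : Y) (g : Y → Fin t) : {x : Y // x ≠ u} → Fin t := fun q => g q.val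

/-- strict up-set of `u`, inside the subtype. -/
noncomputable def supu (u : Y) : Finset {x : Y // x ≠ u} :=
  Finset.univ.filter (fun q => u < q.val)

include hu in
lemma fibercard (g' : {x : Y // x ≠ u} → Fin t) (hg' : g' ∈ mono {x : Y // x ≠ u} t) :
    ((mono Y t).filter (fun g => resu u g = g')).card = msel (supu u) g' := by
  refine Finset.card_bij'
    (fun g _ => g u)
    (fun v _ => fun x => if h : x = u then v else g' ⟨x, h⟩)
    ?_ ?_ ?_ ?_
  · intro g hg
    simp only [Finset.mem_filter, mem_mono] at hg
    obtain ⟨hgm, hgr⟩ := hg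
    simp only [msel, Finset.mem_filter, Finset.mem_univ, true_and]
    intro q hq
    simp only [supu, Finset.mem_filter, Finset.mem_univ, true_and] at hq
    calc g u ≤ g q.val := hgm hq.le
      _ = g' q := by rw [← hgr]; rfl
  · intro v hv
    simp only [msel, Finset.mem_filter, Finset.mem_univ, true_and] at hv
    rw [mem_mono] at hg'
    refine Finset.mem_filter.2 ⟨mem_mono.2 ?_, ?_⟩
    · intro x₁ x₂ hx
      by_cases h1 : x₁ = u
      · by_cases h2 : x₂ = u
        · subst h1; subst h2; exact le_refl _
        · subst h1
          simp only [dif_pos rfl, dif_neg h2]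
          apply hv
          simp only [supu, Finset.mem_filter, Finset.mem_univ, true_and]
          exact lt_of_le_of_ne hx (Ne.symm h2)
      · by_cases h2 : x₂ = u
        · subst h2
          exact absurd (lt_of_le_of_ne hx h1) (hu x₁)
        · simp only [dif_neg h1, dif_neg h2]
          exact hg' (Subtype.mk_le_mk.2 hx)
    · funext q
      simp only [resu, dif_neg q.prop]
  · intro g hg
    simp only [Finset.mem_filter, mem_mono] at hg
    funext x
    by_cases h : x = u
    · subst h; simp
    · simp only [dif_neg h]
      rw [← hg.2]; rfl
  · intro v _
    simp

include hu in
lemma decomp (F : ({x : Y // x ≠ u} → Fin t) → ℕ) :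
    ∑ g ∈ mono Y t, F (resu u g)
      = ∑ g' ∈ mono {x : Y // x ≠ u} t, (msel (supu u) g') * F g' := by
  have hmaps : ∀ g ∈ mono Y t, resu u g ∈ mono {x : Y // x ≠ u} t := by
    intro g hg
    rw [mem_mono] at hg ⊢
    intro q₁ q₂ hq
    exact hg hq
  rw [← Finset.sum_fiberwise_of_maps_to hmaps (fun g => F (resu u g))]
  apply Finset.sum_congr rfl
  intro g' hg'
  have : ∑ g ∈ (mono Y t).filter (fun g => resu u g = g'), F (resu u g)
      = ∑ g ∈ (mono Y t).filter (fun g => resu u g = g'), F g' := by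
    apply Finset.sum_congr rfl
    intro g hg
    rw [(Finset.mem_filter.1 hg).2]
  rw [this, Finset.sum_const, smul_eq_mul, fibercard hu g' hg']

end Decomp


/-- FKG correlation inequality specialised to the lattice of monotone maps. -/
lemma fkg_mono (Y : Type*) [Fintype Y] [PartialOrder Y] (t : ℕ)
    (f g : (Y → Fin t) → ℕ) (hf : Monotone f) (hg : Monotone g) :
    (∑ a ∈ mono Y t, f a) * (∑ a ∈ mono Y t, g a)
      ≤ (mono Y t).card * ∑ a ∈ mono Y t, f a * g a := by
  set μ : (Y → Fin t) → ℕ := fun a => if Monotone a then 1 else 0 with hμ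
  have hsum : ∀ F : (Y → Fin t) → ℕ, ∑ a : Y → Fin t, μ a * F a = ∑ a ∈ mono Y t, F a := by
    intro F
    rw [mono, Finset.sum_filter]
    apply Finset.sum_congr rfl
    intro a _
    by_cases h : Monotone a <;> simp [hμ, h]
  have hcardsum : ∑ a : Y → Fin t, μ a = (mono Y t).card := by
    rw [mono, Finset.card_filter]
  have hsuper : ∀ a b : Y → Fin t, μ a * μ b ≤ μ (a ⊓ b) * μ (a ⊔ b) := by
    intro a b
    by_cases ha : Monotone a
    · by_cases hb : Monotone b
      · have h1 : Monotone (a ⊓ b) := ha.inf hb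
        have h2 : Monotone (a ⊔ b) := ha.sup hb
        simp [hμ, ha, hb, h1, h2]
      · simp [hμ, hb]
    · simp [hμ, ha]
  have := fkg f g μ (fun a => by by_cases h : Monotone a <;> simp [hμ, h])
    (fun a => Nat.zero_le _) (fun a => Nat.zero_le _) hf hg hsuper
  rwa [hsum, hsum, hsum, hcardsum] at this


lemma cancel_aux {W A B C s q : ℕ} (hW : 0 < W) (h1 : q * W ≤ s * A)
    (h2 : A * B ≤ W * C) : q * B ≤ s * C := by
  have key : W * (q * B) ≤ W * (s * C) := by
    calc W * (q * B) = (q * W) * B := by ring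
      _ ≤ (s * A) * B := Nat.mul_le_mul_right _ h1
      _ = s * (A * B) := by ring
      _ ≤ s * (W * C) := Nat.mul_le_mul_left _ h2
      _ = W * (s * C) := by ring
  exact Nat.le_of_mul_le_mul_left key hW

set_option maxHeartbeats 1000000 in
/-- (★) : for a nonempty up-set `S` in a finite poset `Y`,
`(t+1) * Ω(Y,t) ≤ (|S|+1) * ∑_{g monotone} msel S g`. -/
theorem star (n : ℕ) : ∀ (Y : Type*) [Fintype Y] [PartialOrder Y], Fintype.card Y = n →
    ∀ S : Finset Y, S.Nonempty → (∀ a ∈ S, ∀ b : Y, a ≤ b → b ∈ S) →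
    ∀ t : ℕ, 1 ≤ t →
    (t+1) * (mono Y t).card ≤ (S.card + 1) * ∑ g ∈ mono Y t, msel S g := by
  induction n using Nat.strong_induction_on with
  | _ n ih =>
    intro Y _ _ hcard S hSne hSup t ht
    by_cases hSuniv : S = Finset.univ
    · -- Case B : S = univ, use (♣)
      subst hSuniv
      have hY : 1 ≤ Fintype.card Y := by
        obtain ⟨s, _⟩ := hSne
        have : Nonempty Y := ⟨s⟩
        exact Fintype.card_pos
      rw [Finset.card_univ, sum_msel_univ]
      exact club Y hY t ht
    · -- Case A : there is a minimal element `u ∉ S`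
      have hxex : ∃ x : Y, x ∉ S := by
        by_contra h
        push_neg at h
        exact hSuniv (Finset.eq_univ_iff_forall.2 h)
      obtain ⟨x, hx⟩ := hxex
      have hwf : WellFounded ((· < ·) : Y → Y → Prop) := wellFounded_lt
      obtain ⟨u, hux, hmin⟩ := hwf.has_min {z | z ≤ x} ⟨x, le_rfl⟩
      have hu : ∀ z : Y, ¬ z < u := fun z hz => hmin z (le_trans hz.le hux) hz
      have huS : u ∉ S := fun h => hx (hSup u h x hux)
      have hnpos : 1 ≤ n := by
        rw [← hcard]
        have : Nonempty Y := ⟨x⟩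
        exact Fintype.card_pos
      have hcardQ : Fintype.card {y : Y // y ≠ u} = n - 1 := by
        have h1 : Fintype.card {y : Y // y = u} = 1 := Fintype.card_subtype_eq u
        have h2 := Fintype.card_subtype_compl (fun y : Y => y = u)
        rw [h2, h1, hcard]
      -- the up-set inside Q
      set S' : Finset {y : Y // y ≠ u} :=
        Finset.univ.filter (fun q => q.val ∈ S) with hS'
      have hcardS' : S'.card = S.card := by
        refine Finset.card_bij' (fun q _ => q.val)
          (fun y hy => ⟨y, fun h => huS (h ▸ hy)⟩) ?_ ?_ ?_ ?_
        · intro q hq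
          simpa [hS'] using (Finset.mem_filter.1 hq).2
        · intro y hy
          simp [hS', hy]
        · intro q _
          rfl
        · intro y _
          rfl
      have hS'ne : S'.Nonempty := by
        obtain ⟨s, hs⟩ := hSne
        exact ⟨⟨s, fun h => huS (h ▸ hs)⟩, by simp [hS', hs]⟩
      have hS'up : ∀ a ∈ S', ∀ b : {y : Y // y ≠ u}, a ≤ b → b ∈ S' := by
        intro a ha b hab
        simp only [hS', Finset.mem_filter, Finset.mem_univ, true_and] at ha ⊢
        exact hSup a.val ha b.val hab
      -- translate msel
      have hmseltr : ∀ g : Y → Fin t, msel S g = msel S' (resu u g) := by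
        intro g
        unfold msel
        congr 1
        ext v
        simp only [Finset.mem_filter, Finset.mem_univ, true_and]
        constructor
        · intro h q hq
          simp only [hS', Finset.mem_filter, Finset.mem_univ, true_and] at hq
          exact h q.val hq
        · intro h y hy
          exact h ⟨y, fun he => huS (he ▸ hy)⟩ (by simp [hS', hy])
      -- the three sums over mono Q
      set A := ∑ g' ∈ mono {y : Y // y ≠ u} t, msel S' g' with hA
      set B := ∑ g' ∈ mono {y : Y // y ≠ u} t, msel (supu u) g' with hB
      set C := ∑ g' ∈ mono {y : Y // y ≠ u} t, msel (supu u) g' * msel S' g' with hC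
      have hOmegaY : (mono Y t).card = B := by
        have := decomp hu (t := t) (fun _ => (1:ℕ))
        simpa [mul_one] using this
      have hSumY : ∑ g ∈ mono Y t, msel S g = C := by
        calc ∑ g ∈ mono Y t, msel S g = ∑ g ∈ mono Y t, msel S' (resu u g) :=
              Finset.sum_congr rfl (fun g _ => hmseltr g)
          _ = C := decomp hu (msel S')
      have hIH : (t+1) * (mono {y : Y // y ≠ u} t).card ≤ (S.card + 1) * A := by
        rw [← hcardS']
        exact ih (n-1) (by omega) _ hcardQ S' hS'ne hS'up t ht
      have hFKG : A * B ≤ (mono {y : Y // y ≠ u} t).card * C := by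
        have h0 := fkg_mono {y : Y // y ≠ u} t (msel S') (msel (supu u))
          (msel_mono S') (msel_mono (supu u))
        have hcomm : (∑ g' ∈ mono {y : Y // y ≠ u} t, msel S' g' * msel (supu u) g') = C := by
          rw [hC]
          exact Finset.sum_congr rfl (fun g' _ => mul_comm _ _)
        rw [hcomm] at h0
        rw [hA, hB]
        exact h0
      have hWpos : 0 < (mono {y : Y // y ≠ u} t).card := mono_card_pos ht
      rw [hOmegaY, hSumY]
      exact cancel_aux hWpos hIH hFKG


set_option maxHeartbeats 1000000 in
theorem main (n : ℕ) : ∀ (X : Type*) [Fintype X] [PartialOrder X], Fintype.card X = n →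
    ∀ t : ℕ, 1 ≤ t →
    t ^ (Finset.univ.filter (fun x : X => IsMax x)).card
        * (t+1) ^ (Fintype.card X - (Finset.univ.filter (fun x : X => IsMax x)).card)
      ≤ (mono X t).card * ∏ x : X, (Finset.univ.filter (fun y : X => x ≤ y)).card := by
  induction n using Nat.strong_induction_on with
  | _ n ih =>
    intro X _ _ hcard t ht
    rcases Nat.eq_zero_or_pos n with hn0 | hnpos
    · -- empty poset
      subst hn0
      have hempty : IsEmpty X := Fintype.card_eq_zero_iff.1 hcard
      have huniv : (Finset.univ : Finset X) = ∅ := Finset.univ_eq_empty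
      rw [huniv]
      simp only [Finset.filter_empty, Finset.card_empty, pow_zero, Finset.prod_empty,
        mul_one, one_mul]
      have h1 : Fintype.card X - 0 = 0 := by rw [hcard]
      rw [h1, pow_zero]
      exact mono_card_pos ht
    · -- nonempty : pick a minimal element u
      have hne : Nonempty X := Fintype.card_pos_iff.1 (hcard ▸ hnpos)
      obtain ⟨x0⟩ := hne
      have hwf : WellFounded ((· < ·) : X → X → Prop) := wellFounded_lt
      obtain ⟨u, -, hmin⟩ := hwf.has_min Set.univ ⟨x0, trivial⟩
      have hu : ∀ z : X, ¬ z < u := fun z hz => hmin z trivial hz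
      have hcardQ : Fintype.card {y : X // y ≠ u} = n - 1 := by
        have h1 : Fintype.card {y : X // y = u} = 1 := Fintype.card_subtype_eq u
        have h2 := Fintype.card_subtype_compl (fun y : X => y = u)
        rw [h2, h1, hcard]
      -- IsMax transfer
      have hmax_transfer : ∀ q : {y : X // y ≠ u}, IsMax q ↔ IsMax q.val := by
        intro q
        constructor
        · intro hq b hb
          by_cases hbu : b = u
          · subst hbu
            exact absurd (lt_of_le_of_ne hb q.prop) (hu q.val)
          · exact hq (b := ⟨b, hbu⟩) hb
        · intro hq b hb
          exact hq (hb : q.val ≤ b.val)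
      -- r bookkeeping
      have hrsplit : (Finset.univ.filter (fun x : X => IsMax x)).card
          = (Finset.univ.filter (fun q : {y : X // y ≠ u} => IsMax q)).card
            + (if IsMax u then 1 else 0) := by
        have hpart := Finset.card_filter_add_card_filter_not
          (s := Finset.univ.filter (fun x : X => IsMax x)) (p := fun x => x = u)
        rw [Finset.filter_filter, Finset.filter_filter] at hpart
        have h1 : (Finset.univ.filter (fun x : X => IsMax x ∧ x = u)).card
            = (if IsMax u then 1 else 0) := by
          by_cases hmu : IsMax u
          · rw [if_pos hmu]
            have : (Finset.univ.filter (fun x : X => IsMax x ∧ x = u)) = {u} := by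
              ext y
              simp only [Finset.mem_filter, Finset.mem_univ, true_and, Finset.mem_singleton]
              constructor
              · exact fun h => h.2
              · rintro rfl; exact ⟨hmu, rfl⟩
            rw [this, Finset.card_singleton]
          · rw [if_neg hmu]
            have : (Finset.univ.filter (fun x : X => IsMax x ∧ x = u)) = ∅ := by
              ext y
              simp only [Finset.mem_filter, Finset.mem_univ, true_and,
                Finset.notMem_empty, iff_false, not_and]
              rintro h rfl; exact hmu h
            rw [this, Finset.card_empty]
        have h2 : (Finset.univ.filter (fun x : X => IsMax x ∧ ¬ x = u)).card
            = (Finset.univ.filter (fun q : {y : X // y ≠ u} => IsMax q)).card := by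
          refine Finset.card_bij' (fun y hy => (⟨y, by
              simp only [Finset.mem_filter] at hy; exact hy.2.2⟩ : {y : X // y ≠ u}))
            (fun q _ => q.val) ?_ ?_ ?_ ?_
          · intro y hy
            simp only [Finset.mem_filter, Finset.mem_univ, true_and] at hy ⊢
            exact (hmax_transfer _).2 hy.1
          · intro q hq
            simp only [Finset.mem_filter, Finset.mem_univ, true_and] at hq ⊢
            exact ⟨(hmax_transfer _).1 hq, q.prop⟩
          · intro y _; rfl
          · intro q _; rfl
        omega
      -- b bookkeeping : per-element transfer
      have hbtr : ∀ q : {y : X // y ≠ u},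
          (Finset.univ.filter (fun y : X => q.val ≤ y)).card
            = (Finset.univ.filter (fun p : {y : X // y ≠ u} => q ≤ p)).card := by
        intro q
        refine Finset.card_bij' (fun y hy => (⟨y, by
            simp only [Finset.mem_filter, Finset.mem_univ, true_and] at hy
            intro h
            rw [h] at hy
            exact absurd (lt_of_le_of_ne hy q.prop) (hu q.val)⟩ : {y : X // y ≠ u}))
          (fun p _ => p.val) ?_ ?_ ?_ ?_
        · intro y hy
          simp only [Finset.mem_filter, Finset.mem_univ, true_and] at hy ⊢
          exact hy
        · intro p hp
          simp only [Finset.mem_filter, Finset.mem_univ, true_and] at hp ⊢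
          exact hp
        · intro y _; rfl
        · intro p _; rfl
      -- product over X splits
      have hprod : ∏ x : X, (Finset.univ.filter (fun y : X => x ≤ y)).card
          = (Finset.univ.filter (fun y : X => u ≤ y)).card
            * ∏ q : {y : X // y ≠ u},
                (Finset.univ.filter (fun p : {y : X // y ≠ u} => q ≤ p)).card := by
        rw [← Finset.mul_prod_erase Finset.univ _ (Finset.mem_univ u)]
        congr 1
        rw [← Finset.prod_congr rfl (fun q (_ : q ∈ (Finset.univ : Finset {y : X // y ≠ u})) => hbtr q)]
        refine Finset.prod_bij' (fun y hy => (⟨y, (Finset.mem_erase.1 hy).1⟩ : {y : X // y ≠ u}))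
          (fun q _ => q.val) ?_ ?_ ?_ ?_ ?_
        · intro y _; exact Finset.mem_univ _
        · intro q _
          exact Finset.mem_erase.2 ⟨q.prop, Finset.mem_univ _⟩
        · intro y _; rfl
        · intro q _; rfl
        · intro y _; rfl
      -- b(u) = |supu u| + 1
      have hbu : (Finset.univ.filter (fun y : X => u ≤ y)).card = (supu u).card + 1 := by
        have hpart := Finset.card_filter_add_card_filter_not
          (s := Finset.univ.filter (fun y : X => u ≤ y)) (p := fun y => y = u)
        rw [Finset.filter_filter, Finset.filter_filter] at hpart
        have h1 : (Finset.univ.filter (fun y : X => u ≤ y ∧ y = u)) = {u} := by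
          ext y
          simp only [Finset.mem_filter, Finset.mem_univ, true_and, Finset.mem_singleton]
          constructor
          · exact fun h => h.2
          · intro h; exact ⟨le_of_eq h.symm, h⟩
        have h2 : (Finset.univ.filter (fun y : X => u ≤ y ∧ ¬ y = u)).card = (supu u).card := by
          refine Finset.card_bij' (fun y hy => (⟨y, by
              simp only [Finset.mem_filter] at hy; exact hy.2.2⟩ : {y : X // y ≠ u}))
            (fun q _ => q.val) ?_ ?_ ?_ ?_
          · intro y hy
            simp only [Finset.mem_filter, Finset.mem_univ, true_and] at hy
            simp only [supu, Finset.mem_filter, Finset.mem_univ, true_and]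
            exact lt_of_le_of_ne hy.1 (Ne.symm hy.2)
          · intro q hq
            simp only [supu, Finset.mem_filter, Finset.mem_univ, true_and] at hq
            simp only [Finset.mem_filter, Finset.mem_univ, true_and]
            exact ⟨hq.le, q.prop⟩
          · intro y _; rfl
          · intro q _; rfl
        rw [h1, Finset.card_singleton] at hpart
        omega
      -- Ω(X) decomposition
      have hOmega : (mono X t).card = ∑ g' ∈ mono {y : X // y ≠ u} t, msel (supu u) g' := by
        have := decomp hu (t := t) (fun _ => (1:ℕ))
        simpa [mul_one] using this
      -- IH
      have hIH := ih (n-1) (by omega) {y : X // y ≠ u} hcardQ t ht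
      set rQ := (Finset.univ.filter (fun q : {y : X // y ≠ u} => IsMax q)).card with hrQ
      have hrQle : rQ ≤ n - 1 := by
        calc rQ ≤ (Finset.univ : Finset {y : X // y ≠ u}).card := Finset.card_filter_le _ _
          _ = n - 1 := by rw [Finset.card_univ, hcardQ]
      rw [hcardQ] at hIH
      by_cases hSu : (supu u) = ∅
      · -- u is maximal
        have humax : IsMax u := by
          intro b hb
          by_cases hbu : b = u
          · exact le_of_eq hbu
          · exfalso
            have : (⟨b, hbu⟩ : {y : X // y ≠ u}) ∈ supu u := by
              simp only [supu, Finset.mem_filter, Finset.mem_univ, true_and]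
              exact lt_of_le_of_ne hb (Ne.symm hbu)
            rw [hSu] at this
            exact absurd this (Finset.notMem_empty _)
        have hOmega' : (mono X t).card = t * (mono {y : X // y ≠ u} t).card := by
          rw [hOmega, hSu]
          rw [Finset.sum_congr rfl (fun g' _ => msel_empty g')]
          rw [Finset.sum_const, smul_eq_mul, mul_comm]
        rw [hrsplit, if_pos humax, hOmega', hprod, hbu, hSu, Finset.card_empty]
        have hexp : Fintype.card X - (rQ + 1) = (n - 1) - rQ := by
          rw [hcard]; omega
        rw [hexp, pow_succ]
        calc t ^ rQ * t * (t+1) ^ ((n-1) - rQ)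
            = t * (t ^ rQ * (t+1) ^ ((n-1) - rQ)) := by ring
          _ ≤ t * ((mono {y : X // y ≠ u} t).card
                * ∏ q : {y : X // y ≠ u},
                    (Finset.univ.filter (fun p : {y : X // y ≠ u} => q ≤ p)).card) :=
              Nat.mul_le_mul_left _ hIH
          _ = t * (mono {y : X // y ≠ u} t).card
              * ((0 + 1) * ∏ q : {y : X // y ≠ u},
                  (Finset.univ.filter (fun p : {y : X // y ≠ u} => q ≤ p)).card) := by ring
      · -- u is not maximal : use (★)
        have hSune : (supu u).Nonempty := Finset.nonempty_of_ne_empty hSu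
        have hnumax : ¬ IsMax u := by
          obtain ⟨q, hq⟩ := hSune
          simp only [supu, Finset.mem_filter, Finset.mem_univ, true_and] at hq
          intro h
          exact absurd (lt_of_lt_of_le hq (h hq.le)) (lt_irrefl u)
        have hSuup : ∀ a ∈ supu u, ∀ b : {y : X // y ≠ u}, a ≤ b → b ∈ supu u := by
          intro a ha b hab
          simp only [supu, Finset.mem_filter, Finset.mem_univ, true_and] at ha ⊢
          exact lt_of_lt_of_le ha hab
        have hstar := star (n-1) {y : X // y ≠ u} hcardQ (supu u) hSune hSuup t ht
        rw [hrsplit, if_neg hnumax, hOmega, hprod, hbu]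
        have hexp : Fintype.card X - (rQ + 0) = ((n - 1) - rQ) + 1 := by
          rw [hcard]; omega
        rw [hexp, pow_succ]
        calc t ^ rQ * ((t+1) ^ ((n-1) - rQ) * (t+1))
            = (t ^ rQ * (t+1) ^ ((n-1) - rQ)) * (t+1) := by ring
          _ ≤ ((mono {y : X // y ≠ u} t).card
                * ∏ q : {y : X // y ≠ u},
                    (Finset.univ.filter (fun p : {y : X // y ≠ u} => q ≤ p)).card) * (t+1) :=
              Nat.mul_le_mul_right _ hIH
          _ = ((t+1) * (mono {y : X // y ≠ u} t).card)
              * ∏ q : {y : X // y ≠ u},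
                  (Finset.univ.filter (fun p : {y : X // y ≠ u} => q ≤ p)).card := by ring
          _ ≤ (((supu u).card + 1) * ∑ g' ∈ mono {y : X // y ≠ u} t, msel (supu u) g')
              * ∏ q : {y : X // y ≠ u},
                  (Finset.univ.filter (fun p : {y : X // y ≠ u} => q ≤ p)).card :=
              Nat.mul_le_mul_right _ hstar
          _ = (∑ g' ∈ mono {y : X // y ≠ u} t, msel (supu u) g')
              * (((supu u).card + 1) * ∏ q : {y : X // y ≠ u},
                  (Finset.univ.filter (fun p : {y : X // y ≠ u} => q ≤ p)).card) := by ring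


/-- The order polynomial `Ω(P,t)`: the number of order-preserving maps
`g : X → {1,…,t}`. -/
noncomputable def orderPoly (X : Type*) [Fintype X] [PartialOrder X] (t : ℕ) : ℕ :=
  Nat.card {g : X → Fin t // Monotone g}

/-- `Ω(P,t) · ∏_{x ∈ X} b(x) ≥ t^r · (t+1)^{n-r}`, where `r` is the number of
maximal elements of `P` and `b(x)` the size of the upper order ideal of `x`. -/
theorem orderPoly_lower_bound (X : Type*) [Fintype X] [PartialOrder X]
    (t : ℕ) (ht : 1 ≤ t) :
    t ^ (Nat.card {x : X // IsMax x}) *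
        (t + 1) ^ (Fintype.card X - Nat.card {x : X // IsMax x}) ≤
      orderPoly X t * ∏ x : X, Nat.card {y : X // x ≤ y} := by
  have h1 : Nat.card {x : X // IsMax x}
      = (Finset.univ.filter (fun x : X => IsMax x)).card := by
    rw [Nat.card_eq_fintype_card, Fintype.card_subtype]
  have h2 : orderPoly X t = (mono X t).card := by
    rw [orderPoly, Nat.card_eq_fintype_card, Fintype.card_subtype, mono]
  have h3 : ∀ x : X, Nat.card {y : X // x ≤ y}
      = (Finset.univ.filter (fun y : X => x ≤ y)).card := by
    intro x
    rw [Nat.card_eq_fintype_card, Fintype.card_subtype]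
  rw [h1, h2]
  rw [Finset.prod_congr rfl (fun x (_ : x ∈ (Finset.univ : Finset X)) => h3 x)]
  exact main (Fintype.card X) X rfl t ht
end

section
/- Let P = (X, ≺) be a finite poset. Then for every integer t ≥ 2, Ω(P,t)^2 ≥ Ω(P,t+1) · Ω(P,t−1). -/
open FinsetFamily


/-- Monotone maps `X → ℕ` with values in `[c, c+s)`. -/
def monoSet (X : Type*) [PartialOrder X] (c s : ℕ) : Set (X → ℕ) :=
  {f | Monotone f ∧ ∀ x, f x ∈ Set.Ico c (c + s)}

lemma monoSet_finite (X : Type*) [Fintype X] [PartialOrder X] (c s : ℕ) :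
    (monoSet X c s).Finite := by
  have h : monoSet X c s ⊆ Set.pi Set.univ fun _ : X => Set.Ico c (c + s) := by
    intro f hf x _
    exact hf.2 x
  exact (Set.Finite.pi fun _ => Set.finite_Ico _ _).subset h

/-- `monoSet X c s` has cardinality `orderPoly X s`. -/
lemma ncard_monoSet (X : Type*) [Fintype X] [PartialOrder X] (c s : ℕ) :
    Nat.card (monoSet X c s) = orderPoly X s := by
  apply Nat.card_congr
  refine
    { toFun := fun f => ⟨fun x => ⟨f.1 x - c, ?_⟩, ?_⟩
      invFun := fun g => ⟨fun x => (g.1 x : ℕ) + c, ?_, ?_⟩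
      left_inv := ?_
      right_inv := ?_ }
  · have h1 := (f.2.2 x).1
    have h2 := (f.2.2 x).2
    omega
  · intro a b hab
    have := f.2.1 hab
    simp only [Fin.mk_le_mk]
    omega
  · intro a b hab
    have := g.2 hab
    simpa using Nat.add_le_add_right this c
  · intro x
    simp only [Set.mem_Ico]
    have := (g.1 x).2
    omega
  · intro f
    ext x
    have := (f.2.2 x).1
    simp only
    omega
  · intro g
    ext x
    simp

lemma toFinset_card_monoSet (X : Type*) [Fintype X] [PartialOrder X] (c s : ℕ) :
    (monoSet_finite X c s).toFinset.card = orderPoly X s := by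
  rw [← Set.ncard_eq_toFinset_card _ (monoSet_finite X c s), ← Nat.card_coe_set_eq,
    ncard_monoSet]

/-- Log-concavity of the order polynomial:
`Ω(P,t)^2 ≥ Ω(P,t+1) · Ω(P,t−1)` for every integer `t ≥ 2`. -/
theorem orderPoly_log_concave (X : Type*) [Fintype X] [PartialOrder X]
    (t : ℕ) (ht : 2 ≤ t) :
    orderPoly X (t + 1) * orderPoly X (t - 1) ≤ orderPoly X t ^ 2 := by
  haveI : DecidableEq (X → ℕ) := Classical.decEq _
  set A : Finset (X → ℕ) := (monoSet_finite X 0 (t + 1)).toFinset with hA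
  set B : Finset (X → ℕ) := (monoSet_finite X 1 (t - 1)).toFinset with hB
  have hsup : A ⊻ B ⊆ (monoSet_finite X 1 t).toFinset := by
    intro f hf
    rw [Finset.mem_sups] at hf
    obtain ⟨a, ha, b, hb, rfl⟩ := hf
    rw [hA, Set.Finite.mem_toFinset] at ha
    rw [hB, Set.Finite.mem_toFinset] at hb
    rw [Set.Finite.mem_toFinset]
    refine ⟨ha.1.sup hb.1, fun x => ?_⟩
    have h1 := ha.2 x
    have h2 := hb.2 x
    simp only [Set.mem_Ico] at h1 h2 ⊢
    simp only [Pi.sup_apply]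
    omega
  have hinf : A ⊼ B ⊆ (monoSet_finite X 0 t).toFinset := by
    intro f hf
    rw [Finset.mem_infs] at hf
    obtain ⟨a, ha, b, hb, rfl⟩ := hf
    rw [hA, Set.Finite.mem_toFinset] at ha
    rw [hB, Set.Finite.mem_toFinset] at hb
    rw [Set.Finite.mem_toFinset]
    refine ⟨ha.1.inf hb.1, fun x => ?_⟩
    have h1 := ha.2 x
    have h2 := hb.2 x
    simp only [Set.mem_Ico] at h1 h2 ⊢
    simp only [Pi.inf_apply]
    omega
  have key := Finset.le_card_infs_mul_card_sups A B
  calc orderPoly X (t + 1) * orderPoly X (t - 1) = A.card * B.card := by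
        rw [hA, hB, toFinset_card_monoSet, toFinset_card_monoSet]
    _ ≤ (A ⊼ B).card * (A ⊻ B).card := key
    _ ≤ orderPoly X t * orderPoly X t :=
        Nat.mul_le_mul
          ((toFinset_card_monoSet X 0 t) ▸ Finset.card_le_card hinf)
          ((toFinset_card_monoSet X 1 t) ▸ Finset.card_le_card hsup)
    _ = orderPoly X t ^ 2 := (sq _).symm
end

section
/- Let P = (X, ≺) be a finite poset with |X| = n elements. Then for every integer t ≥ 1, n! · Ω(P,t) ≥ e(P) · t^n. -/
/-- Rank equivalence: an injective map into a linear order induces an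
equivalence with `Fin n` that reflects the ordering. -/
noncomputable def rankData {α L : Type*} [Fintype α] [LinearOrder L] {n : ℕ}
    (hn : Fintype.card α = n) (ψ : α → L) (hψ : Function.Injective ψ) :
    {e : α ≃ Fin n // ∀ a b, ψ a < ψ b ↔ e a < e b} := by
  classical
  have hcard : (Finset.univ.image ψ).card = n := by
    rw [Finset.card_image_of_injective _ hψ, Finset.card_univ, hn]
  set iso := (Finset.univ.image ψ).orderIsoOfFin hcard with hiso
  have hmem : ∀ a, ψ a ∈ Finset.univ.image ψ := fun a =>
    Finset.mem_image_of_mem _ (Finset.mem_univ a)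
  set F : α → Fin n := fun a => iso.symm ⟨ψ a, hmem a⟩ with hF
  have hlt : ∀ a b, ψ a < ψ b ↔ F a < F b := by
    intro a b
    calc ψ a < ψ b ↔ (⟨ψ a, hmem a⟩ : {x // x ∈ Finset.univ.image ψ}) < ⟨ψ b, hmem b⟩ :=
          (Subtype.mk_lt_mk).symm
      _ ↔ F a < F b := (iso.symm.lt_iff_lt).symm
  have hinjF : Function.Injective F := by
    intro a b h
    exact hψ (Subtype.mk_eq_mk.mp (iso.symm.injective h))
  refine ⟨Equiv.ofBijective F ((Fintype.bijective_iff_injective_and_card F).2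
    ⟨hinjF, by simp [hn]⟩), hlt⟩

/-- Two equivalences with `Fin n` inducing the same order are equal. -/
lemma equivFin_unique {α : Type*} {n : ℕ} (e₁ e₂ : α ≃ Fin n)
    (h : ∀ a b, e₁ a < e₁ b ↔ e₂ a < e₂ b) : e₁ = e₂ := by
  have hsm : StrictMono (fun i => e₂ (e₁.symm i)) := by
    intro i j hij
    exact (h _ _).1 (by simpa using hij)
  have hr : Set.range (fun i => e₂ (e₁.symm i)) = Set.range (id : Fin n → Fin n) := by
    rw [Set.range_id]
    exact (e₂.surjective.comp e₁.symm.surjective).range_eq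
  have inst : WellFoundedLT (Fin n) := inferInstance
  have hid : (fun i => e₂ (e₁.symm i)) = id :=
    (@StrictMono.range_inj (Fin n) (Fin n) _ _ inst _ _ hsm strictMono_id).1 hr
  apply Equiv.ext
  intro a
  have := congrFun hid (e₁ a)
  simpa using this.symm

/-- `n! · Ω(P,t) ≥ e(P) · t^n` for every integer `t ≥ 1`. -/
theorem orderPoly_ge_linExt (X : Type*) [Fintype X] [PartialOrder X]
    (t : ℕ) (ht : 1 ≤ t) :
    linExtCount X * t ^ (Fintype.card X) ≤
      Nat.factorial (Fintype.card X) * orderPoly X t := by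
  classical
  set n := Fintype.card X with hn
  -- The intermediate object: pairs (g, σ) such that x ↦ (g x, σ x) is strictly
  -- monotone into the lexicographic order.
  let Q := {p : (X → Fin t) × (X ≃ Fin n) //
    ∀ ⦃a b : X⦄, a < b → toLex (p.1 a, p.2 a) < toLex (p.1 b, p.2 b)}
  -- Step 1: `card Q ≤ n! * Ω`.
  have mono_of : ∀ p : Q, Monotone p.1.1 := by
    rintro ⟨⟨g, σ⟩, hp⟩
    intro a b hab
    rcases eq_or_lt_of_le hab with rfl | h
    · exact le_rfl
    · have := hp h
      rcases Prod.Lex.lt_iff.1 this with h1 | ⟨h1, _⟩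
      · exact le_of_lt h1
      · exact le_of_eq h1
  have key1 : Nat.card Q ≤ Nat.factorial n * orderPoly X t := by
    have hinj : Function.Injective
        (fun p : Q => ((⟨p.1.1, mono_of p⟩ : {g : X → Fin t // Monotone g}), p.1.2)) := by
      rintro ⟨⟨g, σ⟩, hp⟩ ⟨⟨g', σ'⟩, hp'⟩ h
      have h1 : g = g' := congrArg (fun q => (q.1 : X → Fin t)) h
      have h2 : σ = σ' := congrArg Prod.snd h
      subst h1; subst h2; rfl
    have := Nat.card_le_card_of_injective _ hinj
    calc Nat.card Q ≤ Nat.card ({g : X → Fin t // Monotone g} × (X ≃ Fin n)) := this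
      _ = orderPoly X t * Nat.card (X ≃ Fin n) := by rw [Nat.card_prod, orderPoly]
      _ = Nat.factorial n * orderPoly X t := by
          rw [Nat.card_eq_fintype_card, Fintype.card_equiv (Fintype.equivFin X)]
          ring
  -- Step 2: there is a surjection from `Q` onto (linear extensions) × (maps).
  let LE := {f : X ≃ Fin n // ∀ ⦃a b : X⦄, a < b → f a < f b}
  let Λ : Q → LE × (X → Fin t) := fun p =>
    let ψ : X → Lex (Fin t × Fin n) := fun x => toLex (p.1.1 x, p.1.2 x)
    have hψ : Function.Injective ψ :=
      fun a b hab => p.1.2.injective (congrArg (fun z => (ofLex z).2) hab)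
    let e := rankData hn.symm ψ hψ
    (⟨e.1, fun a b hab => (e.2 a b).1 (p.2 hab)⟩,
      fun x => p.1.1 (p.1.2.symm (e.1 x)))
  have hsurj : Function.Surjective Λ := by
    rintro ⟨⟨f₀, hf₀⟩, h₀⟩
    let s : Fin n → Fin t := fun i => h₀ (f₀.symm i)
    let κ : Fin n → Lex (Fin t × Fin n) := fun i => toLex (s i, i)
    have hκ : Function.Injective κ := fun i j hij => congrArg (fun z => (ofLex z).2) hij
    obtain ⟨r, hr⟩ := rankData (Fintype.card_fin n) κ hκ
    let σ : X ≃ Fin n := f₀.trans r.symm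
    let g : X → Fin t := fun x => s (σ x)
    have hκσ : ∀ a b : X, κ (σ a) < κ (σ b) ↔ f₀ a < f₀ b := by
      intro a b
      rw [hr]
      show r (r.symm (f₀ a)) < r (r.symm (f₀ b)) ↔ _
      rw [r.apply_symm_apply, r.apply_symm_apply]
    have hQ : ∀ ⦃a b : X⦄, a < b → toLex (g a, σ a) < toLex (g b, σ b) := by
      intro a b hab
      exact (hκσ a b).2 (hf₀ hab)
    refine ⟨⟨(g, σ), hQ⟩, ?_⟩
    have hef : (rankData hn.symm (fun x => toLex (g x, σ x))
        (fun a b hab => σ.injective (congrArg (fun z => (ofLex z).2) hab))).1 = f₀ := by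
      apply equivFin_unique
      intro a b
      have := (rankData hn.symm (fun x => toLex (g x, σ x))
        (fun a b hab => σ.injective (congrArg (fun z => (ofLex z).2) hab))).2 a b
      rw [← this]
      exact hκσ a b
    refine Prod.ext ?_ ?_
    · exact Subtype.ext hef
    · funext x
      show g (σ.symm ((rankData hn.symm (fun x => toLex (g x, σ x))
        (fun a b hab => σ.injective (congrArg (fun z => (ofLex z).2) hab))).1 x)) = h₀ x
      rw [hef]
      show s (σ (σ.symm (f₀ x))) = h₀ x
      rw [σ.apply_symm_apply]
      show h₀ (f₀.symm (f₀ x)) = h₀ x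
      rw [f₀.symm_apply_apply]
  have key2 : linExtCount X * t ^ n ≤ Nat.card Q := by
    have := Nat.card_le_card_of_surjective Λ hsurj
    calc linExtCount X * t ^ n = Nat.card (LE × (X → Fin t)) := by
          rw [Nat.card_prod, Nat.card_fun, Nat.card_eq_fintype_card (α := Fin t),
            Fintype.card_fin, Nat.card_eq_fintype_card (α := X), linExtCount]
      _ ≤ Nat.card Q := this
  exact key2.trans key1
end

section
/- Let P = (X, ≺) be a finite poset with |X| = n elements. Then n! · Ω(P,t) = e(P) · t^n for some integer t ≥ 1 if and only if P is an antichain on n elements (i.e. no two distinct elements of X are comparable). -/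
/-- `n! · Ω(P,t) = e(P) · t^n` for some integer `t ≥ 1` if and only if `P` is an
antichain (no two distinct elements are comparable). -/
theorem orderPoly_eq_iff_antichain (X : Type*) [Fintype X] [PartialOrder X] :
    (∃ t : ℕ, 1 ≤ t ∧
        Nat.factorial (Fintype.card X) * orderPoly X t =
          linExtCount X * t ^ (Fintype.card X)) ↔
      ∀ x y : X, x ≤ y → x = y := by
  classical
  set n := Fintype.card X with hn
  constructor
  · rintro ⟨t, ht, heq⟩ a b hab'
    by_contra hne
    have hab : a < b := lt_of_le_of_ne hab' hne
    set L := {f : X ≃ Fin n // ∀ ⦃a b : X⦄, a < b → f a < f b} with hL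
    set M := {g : X → Fin t // Monotone g} with hM
    -- Ω t ≥ 1
    have hMne : Nonempty M := ⟨⟨fun _ => ⟨0, ht⟩, monotone_const⟩⟩
    have hΩpos : 0 < orderPoly X t := Nat.card_pos
    have hLne : linExtCount X ≠ 0 := by
      intro h0
      rw [h0, zero_mul] at heq
      have hpos : 0 < Nat.factorial n * orderPoly X t :=
        Nat.mul_pos (Nat.factorial_pos n) hΩpos
      exact hpos.ne' heq
    obtain ⟨f₀⟩ : Nonempty L := (Nat.card_ne_zero.mp hLne).1
    -- the injection
    set φ : L × (X → Fin t) → M × Equiv.Perm (Fin n) := fun p =>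
      (⟨fun x => (p.2 ∘ p.1.1.symm) (Tuple.sort (p.2 ∘ p.1.1.symm) (p.1.1 x)), by
          intro x y hxy
          rcases hxy.lt_or_eq with h | h
          · exact Tuple.monotone_sort (p.2 ∘ p.1.1.symm) (p.1.2 h).le
          · rw [h]⟩,
        f₀.1.symm.trans (p.1.1.trans (Tuple.sort (p.2 ∘ p.1.1.symm)))) with hφ
    have hinj : Function.Injective φ := by
      rintro ⟨⟨f, hf⟩, u⟩ ⟨⟨f', hf'⟩, u'⟩ h
      have h1fun : ∀ z : X,
          (u ∘ f.symm) (Tuple.sort (u ∘ f.symm) (f z)) =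
            (u' ∘ f'.symm) (Tuple.sort (u' ∘ f'.symm) (f' z)) :=
        fun z => congrArg (fun q : M × Equiv.Perm (Fin n) => q.1.1 z) h
      have he1 : ∀ z : X,
          Tuple.sort (u ∘ f.symm) (f z) = Tuple.sort (u' ∘ f'.symm) (f' z) := by
        intro z
        have h0 := congrArg (fun q : M × Equiv.Perm (Fin n) => q.2 (f₀.1 z)) h
        simpa [hφ] using h0
      have hvv : (u ∘ f.symm) = (u' ∘ f'.symm) := by
        funext j
        have h0 := h1fun (f.symm ((Tuple.sort (u ∘ f.symm)).symm j))
        rw [← he1 (f.symm ((Tuple.sort (u ∘ f.symm)).symm j))] at h0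
        simpa using h0
      have hσ : Tuple.sort (u ∘ f.symm) = Tuple.sort (u' ∘ f'.symm) := by rw [hvv]
      have hff : f = f' := Equiv.ext fun z =>
        (Tuple.sort (u ∘ f.symm)).injective (by rw [he1 z, hσ])
      subst hff
      have huu : u = u' := by
        funext z
        have h0 := congrFun hvv (f z)
        simpa using h0
      subst huu
      rfl
    -- cardinalities
    have hcard : Nat.card (L × (X → Fin t)) = Nat.card (M × Equiv.Perm (Fin n)) := by
      rw [Nat.card_prod, Nat.card_prod, Nat.card_fun, Nat.card_eq_fintype_card (α := Fin t),
        Fintype.card_fin, Nat.card_eq_fintype_card (α := X),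
        Nat.card_eq_fintype_card (α := Equiv.Perm (Fin n)), Fintype.card_perm, Fintype.card_fin]
      have e1 : Nat.card L = linExtCount X := rfl
      have e2 : Nat.card M = orderPoly X t := rfl
      rw [e1, e2, ← hn]
      linarith [heq]
    have hbij : Function.Bijective φ :=
      (Nat.bijective_iff_injective_and_card φ).mpr ⟨hinj, hcard⟩
    -- the missed element
    obtain ⟨⟨⟨f, hf⟩, u⟩, hp⟩ := hbij.2
      (⟨fun _ => ⟨0, ht⟩, monotone_const⟩, Equiv.swap (f₀.1 a) (f₀.1 b))
    have h1fun : ∀ z : X,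
        (u ∘ f.symm) (Tuple.sort (u ∘ f.symm) (f z)) = ⟨0, ht⟩ :=
      fun z => congrArg (fun q : M × Equiv.Perm (Fin n) => q.1.1 z) hp
    have h2fun : ∀ i : Fin n,
        Tuple.sort (u ∘ f.symm) (f (f₀.1.symm i)) = Equiv.swap (f₀.1 a) (f₀.1 b) i :=
      fun i => congrArg (fun q : M × Equiv.Perm (Fin n) => q.2 i) hp
    have hvconst : ∀ j, (u ∘ f.symm) j = ⟨0, ht⟩ := by
      intro j
      have h0 := h1fun (f.symm ((Tuple.sort (u ∘ f.symm)).symm j))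
      simpa using h0
    have hσ : Tuple.sort (u ∘ f.symm) = Equiv.refl _ := by
      rw [Tuple.sort_eq_refl_iff_monotone]
      intro i j _
      rw [hvconst i, hvconst j]
    have hfa : f a = f₀.1 b := by
      have h0 := h2fun (f₀.1 a)
      rw [hσ] at h0
      simpa using h0
    have hfb : f b = f₀.1 a := by
      have h0 := h2fun (f₀.1 b)
      rw [hσ] at h0
      simpa [Equiv.swap_apply_right] using h0
    have h1 := hf hab
    rw [hfa, hfb] at h1
    exact absurd (f₀.2 hab) (asymm h1)
  · intro h
    refine ⟨1, le_refl 1, ?_⟩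
    have hΩ : orderPoly X 1 = 1 := by
      have : Subsingleton {g : X → Fin 1 // Monotone g} :=
        ⟨fun g g' => Subtype.ext (funext fun x => Subsingleton.elim _ _)⟩
      have : Nonempty {g : X → Fin 1 // Monotone g} :=
        ⟨⟨fun _ => 0, monotone_const⟩⟩
      exact Nat.card_unique
    have hE : linExtCount X = Nat.factorial n := by
      rw [linExtCount]
      have he : {f : X ≃ Fin n // ∀ ⦃a b : X⦄, a < b → f a < f b} ≃ (X ≃ Fin n) :=
        Equiv.subtypeUnivEquiv (fun f a b hab => absurd (h a b hab.le) (ne_of_lt hab))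
      rw [Nat.card_congr he, Nat.card_eq_fintype_card,
        Fintype.card_equiv (Fintype.equivFinOfCardEq rfl)]
    simp [hΩ, hE]
end

section
/- Let P = (X, ≺) be a finite poset with |X| = n elements. Fix a chain u_1 ≺ u_2 ≺ … ≺ u_k in X and integers 1 ≤ a_1 < a_2 < … < a_k ≤ n. Then there exists a linear extension f of P with f(u_i) = a_i for all 1 ≤ i ≤ k if and only if the following conditions hold: ℓ(u_i) ≤ a_i and b(u_i) ≤ n − a_i + 1 for all 1 ≤ i ≤ k, and a_j − a_i > h(u_i, u_j) for all 1 ≤ i < j ≤ k. -/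
open Classical in
lemma aux_card {X : Type*} [Fintype X] (x : X) (p : X → Prop) :
    Nat.card {y : X // p y} = Nat.card {y : {z : X // z ≠ x} // p y.1} + (if p x then 1 else 0) := by
  classical
  rw [Nat.card_eq_fintype_card, Nat.card_eq_fintype_card,
    Fintype.card_congr (Equiv.subtypeSubtypeEquivSubtypeInter (fun z : X => z ≠ x) p),
    Fintype.card_subtype, Fintype.card_subtype]
  have he : Finset.filter (fun z : X => z ≠ x ∧ p z) Finset.univ
      = (Finset.filter (fun z : X => p z) Finset.univ).erase x := by
    ext z; simp [Finset.mem_erase, and_comm]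
  rw [he]
  by_cases hp : p x
  · rw [if_pos hp, Finset.card_erase_of_mem (by simp [hp])]
    have h0 : 0 < (Finset.filter (fun z : X => p z) Finset.univ).card :=
      Finset.card_pos.mpr ⟨x, by simp [hp]⟩
    omega
  · rw [if_neg hp, Finset.erase_eq_of_notMem (by simp [hp])]
    simp

open Classical in
lemma card_le_sub {X : Type*} [Fintype X] [PartialOrder X] (x w : X) (hw : w ≠ x) :
    Nat.card {y : X // y ≤ w} =
      Nat.card {y : {z : X // z ≠ x} // y ≤ ⟨w, hw⟩} + (if x ≤ w then 1 else 0) := by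
  rw [aux_card x (fun y : X => y ≤ w)]
  rfl

open Classical in
lemma card_ge_sub {X : Type*} [Fintype X] [PartialOrder X] (x w : X) (hw : w ≠ x) :
    Nat.card {y : X // w ≤ y} =
      Nat.card {y : {z : X // z ≠ x} // (⟨w, hw⟩ : {z : X // z ≠ x}) ≤ y} + (if w ≤ x then 1 else 0) := by
  rw [aux_card x (fun y : X => w ≤ y)]
  rfl

open Classical in
lemma card_between_sub {X : Type*} [Fintype X] [PartialOrder X] (x w w' : X)
    (hw : w ≠ x) (hw' : w' ≠ x) :
    Nat.card {z : X // w < z ∧ z < w'} =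
      Nat.card {z : {z : X // z ≠ x} // (⟨w, hw⟩ : {z : X // z ≠ x}) < z ∧ z < ⟨w', hw'⟩}
        + (if w < x ∧ x < w' then 1 else 0) := by
  rw [aux_card x (fun z : X => w < z ∧ z < w')]
  congr 1
  by_cases h : w < x ∧ x < w' <;> simp [h]
lemma lift_lemma {X : Type*} [Fintype X] [PartialOrder X] {n : ℕ}
    (x : X) (hmin : ∀ y : X, ¬ y < x)
    (f' : {y : X // y ≠ x} ≃ Fin n) (hf' : ∀ ⦃y z : {y : X // y ≠ x}⦄, y < z → f' y < f' z) :
    ∃ f : X ≃ Fin (n+1), (∀ ⦃y z : X⦄, y < z → f y < f z) ∧ f x = 0 ∧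
      ∀ (y : X) (hy : y ≠ x), (f y : ℕ) = (f' ⟨y, hy⟩ : ℕ) + 1 := by
  classical
  refine ⟨⟨fun y => if h : y = x then 0 else (f' ⟨y, h⟩).succ,
    fun j => Fin.cases x (fun i => (f'.symm i).1) j, ?_, ?_⟩, ?_, ?_, ?_⟩
  · intro y
    by_cases h : y = x
    · simp [h]
    · simp only [dif_neg h, Fin.cases_succ, Equiv.symm_apply_apply]
  · intro j
    refine Fin.cases ?_ (fun i => ?_) j
    · simp
    · simp only [Fin.cases_succ]
      refine (dif_neg (f'.symm i).2).trans ?_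
      simp
  · intro y z hyz
    simp only [Equiv.coe_fn_mk]
    by_cases hy : y = x
    · have hz : z ≠ x := fun h => absurd hyz (by rw [hy, h]; exact lt_irrefl x)
      rw [dif_pos hy, dif_neg hz]
      exact Fin.succ_pos _
    · have hz : z ≠ x := fun h => hmin y (h ▸ hyz)
      rw [dif_neg hy, dif_neg hz]
      exact Fin.succ_lt_succ_iff.mpr (hf' (Subtype.mk_lt_mk.mpr hyz))
  · simp
  · intro y hy
    simp [dif_neg hy]

universe u

lemma exists_linext (n : ℕ) : ∀ (X : Type u) [Fintype X] [PartialOrder X],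
    Fintype.card X = n →
    ∀ (k : ℕ) (u : Fin k → X), StrictMono u →
    ∀ (a : Fin k → ℕ), StrictMono a → (∀ i, 1 ≤ a i) → (∀ i, a i ≤ n) →
    (∀ i, Nat.card {y : X // y ≤ u i} ≤ a i) →
    (∀ i, Nat.card {y : X // u i ≤ y} + a i ≤ n + 1) →
    (∀ i j : Fin k, i < j → Nat.card {z : X // u i < z ∧ z < u j} + a i < a j) →
    ∃ f : X ≃ Fin n, (∀ ⦃x y : X⦄, x < y → f x < f y) ∧ ∀ i, (f (u i) : ℕ) + 1 = a i := by
  induction n with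
  | zero =>
    intro X _ _ hc k u hu a ha ha1 han hl hb hh
    haveI : IsEmpty X := Fintype.card_eq_zero_iff.mp hc
    exact ⟨Fintype.equivFinOfCardEq hc, fun x y h => (IsEmpty.false x).elim,
      fun i => (IsEmpty.false (u i)).elim⟩
  | succ n IH =>
    intro X _ _ hc k u hu a ha ha1 han hl hb hh
    classical
    have key : ∀ (x : X), (∀ y : X, ¬ y < x) →
        ∀ (m : ℕ) (v : Fin m → X), StrictMono v → (∀ i, v i ≠ x) →
        ∀ (b : Fin m → ℕ), StrictMono b → (∀ i, 2 ≤ b i) → (∀ i, b i ≤ n + 1) →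
        (∀ i, Nat.card {y : X // y ≤ v i} ≤ b i) →
        (∀ i, x < v i ∨ Nat.card {y : X // y ≤ v i} < b i) →
        (∀ i, Nat.card {y : X // v i ≤ y} + b i ≤ n + 2) →
        (∀ i j : Fin m, i < j → Nat.card {z : X // v i < z ∧ z < v j} + b i < b j) →
        ∃ f : X ≃ Fin (n+1), (∀ ⦃y z : X⦄, y < z → f y < f z) ∧ f x = 0 ∧
          ∀ i, (f (v i) : ℕ) + 1 = b i := by
      intro x hmin m v hv hvx b hbmono hb2 hbn hl' hlt hb' hh'
      have hc' : Fintype.card {y : X // y ≠ x} = n := by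
        have h2 : Fintype.card {y : X // ¬ (y = x)}
            = Fintype.card X - Fintype.card {y : X // y = x} :=
          Fintype.card_subtype_compl _
        rw [Fintype.card_subtype_eq, hc] at h2
        simpa using h2
      have hv' : StrictMono (fun i => (⟨v i, hvx i⟩ : {y : X // y ≠ x})) :=
        fun i j h => Subtype.mk_lt_mk.mpr (hv h)
      have hbm' : StrictMono (fun i => b i - 1) := by
        intro i j h
        show b i - 1 < b j - 1
        have h1 := hbmono h
        have h2 := hb2 i
        omega
      obtain ⟨f', hf'mono, hf'val⟩ := IH {y : X // y ≠ x} hc' m (fun i => (⟨v i, hvx i⟩ : {y : X // y ≠ x})) hv'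
        (fun i => b i - 1) hbm'
        (fun i => by show 1 ≤ b i - 1; have := hb2 i; omega)
        (fun i => by show b i - 1 ≤ n; have := hbn i; have := hb2 i; omega)
        (fun i => by
          show Nat.card {y : {z : X // z ≠ x} // y ≤ ⟨v i, hvx i⟩} ≤ b i - 1
          have e := card_le_sub x (v i) (hvx i)
          rcases hlt i with hxl | hlt2
          · rw [if_pos hxl.le] at e
            have := hl' i
            omega
          · have hite : (if x ≤ v i then 1 else 0) ≤ 1 := by split <;> omega
            omega)
        (fun i => by
          show Nat.card {y : {z : X // z ≠ x} // (⟨v i, hvx i⟩ : {z : X // z ≠ x}) ≤ y} + (b i - 1) ≤ n + 1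
          have e := card_ge_sub x (v i) (hvx i)
          rw [if_neg (fun h : v i ≤ x =>
            (h.lt_or_eq.elim (fun hlt2 => hmin _ hlt2) (hvx i)))] at e
          have := hb' i
          have := hb2 i
          omega)
        (fun i j hij => by
          show Nat.card {z : {z : X // z ≠ x} // (⟨v i, hvx i⟩ : {z : X // z ≠ x}) < z ∧ z < ⟨v j, hvx j⟩} + (b i - 1) < b j - 1
          have e := card_between_sub x (v i) (v j) (hvx i) (hvx j)
          rw [if_neg (fun h => hmin _ h.1)] at e
          have := hh' i j hij
          have := hb2 i
          omega)
      obtain ⟨f, hfmono, hfx, hfval⟩ := lift_lemma x hmin f' hf'mono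
      refine ⟨f, hfmono, hfx, fun i => ?_⟩
      have h1 := hfval (v i) (hvx i)
      have h2 : (f' ⟨v i, hvx i⟩ : ℕ) + 1 = b i - 1 := hf'val i
      have h3 := hb2 i
      omega
    rcases k with _ | k'
    · -- k = 0
      haveI : Nonempty X := Fintype.card_pos_iff.mp (by omega)
      obtain ⟨x, -, hxmin⟩ : ∃ x ∈ (Finset.univ : Finset X), ∀ y ∈ (Finset.univ : Finset X), ¬ y < x := by
        obtain ⟨x, hx⟩ := Finset.exists_minimal (Finset.univ_nonempty (α := X))
        exact ⟨x, hx.1, fun y hy hlt => hlt.not_ge (hx.2 hy hlt.le)⟩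
      obtain ⟨f, hfmono, -, -⟩ := key x (fun y hy => hxmin y (Finset.mem_univ y) hy)
        0 u hu (fun i => i.elim0) a ha (fun i => i.elim0) (fun i => i.elim0)
        (fun i => i.elim0) (fun i => i.elim0) (fun i => i.elim0) (fun i => i.elim0)
      exact ⟨f, hfmono, fun i => i.elim0⟩
    · by_cases ha0 : a 0 = 1
      · -- x = u 0
        have hmin0 : ∀ y : X, ¬ y < u 0 := by
          intro y hy
          have h2 : 2 ≤ Nat.card {z : X // z ≤ u 0} := by
            rw [Nat.card_eq_fintype_card]
            exact Fintype.one_lt_card_iff.mpr ⟨⟨y, hy.le⟩, ⟨u 0, le_refl _⟩,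
              fun h => (ne_of_lt hy) (congrArg Subtype.val h)⟩
          have := hl 0
          omega
        obtain ⟨f, hfmono, hfx, hfval⟩ := key (u 0) hmin0 k' (fun i => u i.succ)
          (fun i j h => hu (Fin.succ_lt_succ_iff.mpr h))
          (fun i => (hu (Fin.succ_pos i)).ne')
          (fun i => a i.succ)
          (fun i j h => ha (Fin.succ_lt_succ_iff.mpr h))
          (fun i => by show 2 ≤ a i.succ; have := ha (Fin.succ_pos i); omega)
          (fun i => han i.succ)
          (fun i => hl i.succ)
          (fun i => Or.inl (hu (Fin.succ_pos i)))
          (fun i => hb i.succ)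
          (fun i j hij => hh i.succ j.succ (Fin.succ_lt_succ_iff.mpr hij))
        refine ⟨f, hfmono, fun i => ?_⟩
        refine Fin.cases ?_ (fun i => hfval i) i
        rw [hfx]
        simpa using ha0.symm
      · have ha02 : 2 ≤ a 0 := by have := ha1 0; omega
        by_cases htight : ∃ i, Nat.card {y : X // y ≤ u i} = a i
        · obtain ⟨j, hjt, hjmin⟩ : ∃ j, (Nat.card {y : X // y ≤ u j} = a j) ∧
              ∀ i, i < j → Nat.card {y : X // y ≤ u i} < a i := by
            set T := Finset.univ.filter
              (fun i : Fin (k'+1) => Nat.card {y : X // y ≤ u i} = a i) with hT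
            have hTne : T.Nonempty := by
              obtain ⟨i, hi⟩ := htight
              exact ⟨i, by simp only [hT, Finset.mem_filter, Finset.mem_univ, true_and]; exact hi⟩
            refine ⟨T.min' hTne, ?_, ?_⟩
            · have := T.min'_mem hTne
              simpa only [hT, Finset.mem_filter, Finset.mem_univ, true_and] using this
            intro i hi
            have hni : i ∉ T := fun hmem => absurd (T.min'_le i hmem) (not_le.mpr hi)
            have hne : Nat.card {y : X // y ≤ u i} ≠ a i := by
              intro h
              exact hni (by simp only [hT, Finset.mem_filter, Finset.mem_univ, true_and]; exact h)
            exact lt_of_le_of_ne (hl i) hne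
          set R := Finset.univ.filter (fun z : X => z < u j ∧ ¬ u 0 ≤ z) with hR
          have hRne : R.Nonempty := by
            by_contra hemp
            rw [Finset.not_nonempty_iff_eq_empty] at hemp
            have hall : ∀ z : X, z < u j → u 0 ≤ z := by
              intro z hz
              by_contra hnle
              have : z ∈ R := by simp [hR, hz, hnle]
              simp [hemp] at this
            by_cases hj0 : j = 0
            · have hsub : ∀ y : {y : X // y ≤ u 0}, y = ⟨u 0, le_refl _⟩ := by
                rintro ⟨y, hy⟩
                rcases lt_or_eq_of_le hy with h | h
                · have h' : y < u j := by rw [hj0]; exact h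
                  exact absurd (hall y h') h.not_ge
                · exact Subtype.ext h
              have hle1 : Nat.card {y : X // y ≤ u 0} ≤ 1 := by
                haveI : Subsingleton {y : X // y ≤ u 0} :=
                  ⟨fun a b => (hsub a).trans (hsub b).symm⟩
                rw [Nat.card_eq_fintype_card]
                exact Fintype.card_le_one_iff_subsingleton.mpr inferInstance
              rw [hj0] at hjt
              omega
            · have hj0' : (0 : Fin (k'+1)) < j := Fin.pos_iff_ne_zero.mpr hj0
              have hhh := hh 0 j hj0'
              have hkey : a j ≤ Nat.card {z : X // u 0 < z ∧ z < u j} + 2 := by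
                rw [← hjt, Nat.card_eq_fintype_card, Nat.card_eq_fintype_card,
                  Fintype.card_subtype, Fintype.card_subtype]
                have hsubset : Finset.univ.filter (fun y : X => y ≤ u j) ⊆
                    insert (u 0) (insert (u j)
                      (Finset.univ.filter (fun z : X => u 0 < z ∧ z < u j))) := by
                  intro z hz
                  simp only [Finset.mem_filter, Finset.mem_univ, true_and] at hz
                  simp only [Finset.mem_insert, Finset.mem_filter, Finset.mem_univ, true_and]
                  rcases eq_or_lt_of_le hz with h | h
                  · right; left; exact h
                  · rcases eq_or_ne z (u 0) with h0 | h0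
                    · left; exact h0
                    · right; right; exact ⟨lt_of_le_of_ne (hall z h) (Ne.symm h0), h⟩
                have h1 := Finset.card_le_card hsubset
                have h2 := Finset.card_insert_le (u 0) (insert (u j)
                  (Finset.univ.filter (fun z : X => u 0 < z ∧ z < u j)))
                have h3 := Finset.card_insert_le (u j)
                  (Finset.univ.filter (fun z : X => u 0 < z ∧ z < u j))
                omega
              omega
          obtain ⟨x, hxR, hxmin'⟩ : ∃ x ∈ R, ∀ y ∈ R, ¬ y < x := by
            obtain ⟨x, hx⟩ := Finset.exists_minimal hRne
            exact ⟨x, hx.1, fun y hy hlt => hlt.not_ge (hx.2 hy hlt.le)⟩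
          rw [hR, Finset.mem_filter] at hxR
          obtain ⟨-, hxj, hx0⟩ := hxR
          have hxmin : ∀ y : X, ¬ y < x := by
            intro y hy
            refine hxmin' y ?_ hy
            rw [hR, Finset.mem_filter]
            exact ⟨Finset.mem_univ y, hy.trans hxj, fun hle => hx0 (hle.trans hy.le)⟩
          have hxnc : ∀ i : Fin (k'+1), u i ≠ x :=
            fun i h => hx0 (h ▸ hu.monotone (Fin.zero_le i))
          obtain ⟨f, hfmono, -, hfval⟩ := key x hxmin (k'+1) u hu hxnc a ha
            (fun i => le_trans ha02 (ha.monotone (Fin.zero_le i)))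
            han hl
            (fun i => by
              by_cases hij : j ≤ i
              · exact Or.inl (lt_of_lt_of_le hxj (hu.monotone hij))
              · exact Or.inr (hjmin i (not_le.mp hij)))
            hb hh
          exact ⟨f, hfmono, hfval⟩
        · push_neg at htight
          set R := Finset.univ.filter (fun z : X => ¬ u 0 ≤ z) with hR
          have hRne : R.Nonempty := by
            by_contra hemp
            rw [Finset.not_nonempty_iff_eq_empty] at hemp
            have hall : ∀ z : X, u 0 ≤ z := by
              intro z
              by_contra hnle
              have : z ∈ R := by simp [hR, hnle]
              simp [hemp] at this
            have hcard : Nat.card {y : X // u 0 ≤ y} = n + 1 := by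
              rw [Nat.card_eq_fintype_card, ← hc, Fintype.card_subtype]
              rw [Finset.filter_true_of_mem (fun z _ => hall z), Finset.card_univ]
            have := hb 0
            omega
          obtain ⟨x, hxR, hxmin'⟩ : ∃ x ∈ R, ∀ y ∈ R, ¬ y < x := by
            obtain ⟨x, hx⟩ := Finset.exists_minimal hRne
            exact ⟨x, hx.1, fun y hy hlt => hlt.not_ge (hx.2 hy hlt.le)⟩
          rw [hR, Finset.mem_filter] at hxR
          obtain ⟨-, hx0⟩ := hxR
          have hxmin : ∀ y : X, ¬ y < x := by
            intro y hy
            refine hxmin' y ?_ hy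
            rw [hR, Finset.mem_filter]
            exact ⟨Finset.mem_univ y, fun hle => hx0 (hle.trans hy.le)⟩
          have hxnc : ∀ i : Fin (k'+1), u i ≠ x :=
            fun i h => hx0 (h ▸ hu.monotone (Fin.zero_le i))
          obtain ⟨f, hfmono, -, hfval⟩ := key x hxmin (k'+1) u hu hxnc a ha
            (fun i => le_trans ha02 (ha.monotone (Fin.zero_le i)))
            han hl
            (fun i => Or.inr (lt_of_le_of_ne (hl i) (htight i)))
            hb hh
          exact ⟨f, hfmono, hfval⟩


private theorem vanishing_fwd (X : Type*) [Fintype X] [PartialOrder X]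
    (k : ℕ) (u : Fin k → X) (hu : StrictMono u)
    (a : Fin k → ℕ) (ha : StrictMono a)
    (ha1 : ∀ i, 1 ≤ a i) (han : ∀ i, a i ≤ Fintype.card X)
    (f : X ≃ Fin (Fintype.card X))
    (hf : ∀ ⦃x y : X⦄, x < y → f x < f y) (hval : ∀ i, (f (u i) : ℕ) + 1 = a i) :
    ((∀ i, Nat.card {y : X // y ≤ u i} ≤ a i) ∧
     (∀ i, Nat.card {y : X // u i ≤ y} + a i ≤ Fintype.card X + 1) ∧
     (∀ i j : Fin k, i < j →
        Nat.card {z : X // u i < z ∧ z < u j} + a i < a j)) := by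
  classical
  have hle : ∀ ⦃x y : X⦄, x ≤ y → (f x : ℕ) ≤ (f y : ℕ) := by
    intro x y h
    rcases lt_or_eq_of_le h with h | h
    · exact le_of_lt (Fin.lt_def.mp (hf h))
    · rw [h]
  refine ⟨fun i => ?_, fun i => ?_, fun i j hij => ?_⟩
  · rw [Nat.card_eq_fintype_card]
    have hinj : Function.Injective (fun y : {y : X // y ≤ u i} =>
        (⟨(f y.1 : ℕ), by
          have h1 := hle y.2
          have h2 := hval i
          omega⟩ : Fin (a i))) := by
      intro y z h
      have h4 := congrArg Fin.val h
      simp only at h4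
      exact Subtype.ext (f.injective (Fin.ext h4))
    simpa using Fintype.card_le_of_injective _ hinj
  · rw [Nat.card_eq_fintype_card]
    have hinj : Function.Injective (fun y : {y : X // u i ≤ y} =>
        (⟨(f y.1 : ℕ) - (a i - 1), by
          have h1 := hle y.2
          have h2 := hval i
          have h3 : (f y.1 : ℕ) < Fintype.card X := (f y.1).isLt
          have h4 := ha1 i
          have h5 := han i
          omega⟩ : Fin (Fintype.card X + 1 - a i))) := by
      intro y z h
      have h1 := hle y.2
      have h2 := hle z.2
      have h3 := hval i
      have h4 := congrArg Fin.val h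
      simp only at h4
      refine Subtype.ext (f.injective (Fin.ext ?_))
      omega
    have := Fintype.card_le_of_injective _ hinj
    simp only [Fintype.card_fin] at this
    have h5 := ha1 i
    have h6 := han i
    omega
  · rw [Nat.card_eq_fintype_card]
    have haij : a i < a j := ha hij
    have hinj : Function.Injective (fun z : {z : X // u i < z ∧ z < u j} =>
        (⟨(f z.1 : ℕ) - a i, by
          have h1 := Fin.lt_def.mp (hf z.2.1)
          have h2 := Fin.lt_def.mp (hf z.2.2)
          have h3 := hval i
          have h4 := hval j
          omega⟩ : Fin (a j - a i - 1))) := by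
      intro y z h
      have h1 := Fin.lt_def.mp (hf y.2.1)
      have h2 := Fin.lt_def.mp (hf z.2.1)
      have h3 := hval i
      have h4 := congrArg Fin.val h
      simp only at h4
      refine Subtype.ext (f.injective (Fin.ext ?_))
      omega
    have := Fintype.card_le_of_injective _ hinj
    simp only [Fintype.card_fin] at this
    omega

/-- **Vanishing conditions for the generalized Stanley inequality.**
For a chain `u 0 ≺ … ≺ u (k-1)` and integers `1 ≤ a 0 < … < a (k-1) ≤ n`,
there is a linear extension `f` with `f (u i) = a i` for all `i` if and only if
`ℓ(u i) ≤ a i`, `b(u i) ≤ n − a i + 1` for all `i`, and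
`a j − a i > h(u i, u j)` for all `i < j`. -/
theorem vanishing_conditions (X : Type*) [Fintype X] [PartialOrder X]
    (k : ℕ) (u : Fin k → X) (hu : StrictMono u)
    (a : Fin k → ℕ) (ha : StrictMono a)
    (ha1 : ∀ i, 1 ≤ a i) (han : ∀ i, a i ≤ Fintype.card X) :
    (∃ f : X ≃ Fin (Fintype.card X),
        (∀ ⦃x y : X⦄, x < y → f x < f y) ∧ ∀ i, (f (u i) : ℕ) + 1 = a i) ↔
      ((∀ i, Nat.card {y : X // y ≤ u i} ≤ a i) ∧
       (∀ i, Nat.card {y : X // u i ≤ y} + a i ≤ Fintype.card X + 1) ∧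
       (∀ i j : Fin k, i < j →
          Nat.card {z : X // u i < z ∧ z < u j} + a i < a j)) := by
  constructor
  · rintro ⟨f, hf, hval⟩
    exact vanishing_fwd X k u hu a ha ha1 han f hf hval
  · rintro ⟨h1, h2, h3⟩
    exact exists_linext (Fintype.card X) X rfl k u hu a ha ha1 han h1 h2 h3
end

section
/- Let P = (X, ≺) be a finite poset and let x, y ∈ X be two distinct minimal elements. Then for every integer t ≥ 1, Ω(P,t) · Ω(P∖{x,y}, t) ≥ Ω(P∖x, t) · Ω(P∖y, t). -/
open Finset

section Aux

variable {t : ℕ} {W : Type*} [PartialOrder W] {T : Type*} [PartialOrder T]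

noncomputable instance instFinOrderHom [Finite W] : Fintype (W →o Fin t) :=
  haveI : Finite (W →o Fin t) :=
    Finite.of_injective (fun f => (f : W → Fin t)) DFunLike.coe_injective
  Fintype.ofFinite _

instance instDistribOrderHom {α β : Type*} [Preorder α] [DistribLattice β] :
    DistribLattice (α →o β) :=
  { OrderHom.lattice with
    le_sup_inf := fun a b c z => (le_sup_inf :
      (a z ⊔ b z) ⊓ (a z ⊔ c z) ≤ a z ⊔ b z ⊓ c z) }

/-- Order polynomial as a count of order homs. -/
lemma orderPoly_eq_card (W : Type*) [Fintype W] [PartialOrder W] (t : ℕ) :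
    orderPoly W t = Fintype.card (W →o Fin t) := by
  rw [orderPoly, ← Nat.card_eq_fintype_card]
  exact Nat.card_congr ⟨fun g => ⟨g.1, g.2⟩, fun f => ⟨f, f.monotone⟩,
    fun g => rfl, fun f => rfl⟩

/-- Restriction of an order hom along an iso onto the complement of a point. -/
def resE (m : W) (e : T ≃o {z : W // z ≠ m}) (k : W →o Fin t) : T →o Fin t :=
  ⟨fun z => k (e z).1, fun p q hpq => k.monotone (e.le_iff_le.mpr hpq : e p ≤ e q)⟩

/-- Glue a value at a minimal point `m` to an order hom on the complement. -/
def glue [DecidableEq W] (m : W) (hm : IsMin m) (e : T ≃o {z : W // z ≠ m}) (h : T →o Fin t)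
    (v : Fin t) (hv : ∀ z : T, m ≤ (e z).1 → v ≤ h z) : W →o Fin t where
  toFun z := if hz : z = m then v else h (e.symm ⟨z, hz⟩)
  monotone' := by
    intro p q hpq
    dsimp only
    by_cases hp : p = m
    · by_cases hq : q = m
      · rw [dif_pos hp, dif_pos hq]
      · rw [dif_pos hp, dif_neg hq]
        refine hv (e.symm ⟨q, hq⟩) ?_
        have he : (e (e.symm ⟨q, hq⟩)) = ⟨q, hq⟩ := e.apply_symm_apply _
        rw [he]
        exact hp.symm.trans_le hpq
    · by_cases hq : q = m
      · have hpm : p ≤ m := hpq.trans_eq hq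
        exact absurd (le_antisymm hpm (hm hpm)) hp
      · rw [dif_neg hp, dif_neg hq]
        exact h.monotone (e.symm.le_iff_le.mpr (Subtype.mk_le_mk.mpr hpq))

lemma resE_glue [DecidableEq W] (m : W) (hm : IsMin m) (e : T ≃o {z : W // z ≠ m}) (h : T →o Fin t)
    (v : Fin t) (hv : ∀ z : T, m ≤ (e z).1 → v ≤ h z) :
    resE m e (glue m hm e h v hv) = h := by
  refine OrderHom.ext _ _ (funext fun z => ?_)
  show (if hz : (e z).1 = m then v else h (e.symm ⟨(e z).1, hz⟩)) = h z
  rw [dif_neg (e z).2]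
  have he : (⟨(e z).1, (e z).2⟩ : {z : W // z ≠ m}) = e z := rfl
  rw [he, e.symm_apply_apply]

/-- The fiber of restriction over `h` has as many elements as admissible values at `m`. -/
lemma fiber_card [DecidableEq W] (m : W) (hm : IsMin m) (e : T ≃o {z : W // z ≠ m})
    [Fintype W] [DecidableEq (T →o Fin t)] (h : T →o Fin t) :
    (univ.filter fun k : W →o Fin t => resE m e k = h).card
      = Nat.card {v : Fin t // ∀ z : T, m ≤ (e z).1 → v ≤ h z} := by
  rw [← Nat.card_eq_finsetCard]
  refine (Nat.card_congr (Equiv.ofBijective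
    (fun p => ⟨(p.1 : W →o Fin t) m, fun z hz => by
      have hres : resE m e p.1 = h := (mem_filter.mp p.2).2
      calc (p.1 : W →o Fin t) m ≤ p.1 (e z).1 := p.1.monotone hz
        _ = h z := DFunLike.congr_fun hres z⟩ :
      {k : W →o Fin t // k ∈ univ.filter fun k => resE m e k = h} →
      {v : Fin t // ∀ z : T, m ≤ (e z).1 → v ≤ h z}) ?_))
  constructor
  · rintro ⟨k₁, hk₁⟩ ⟨k₂, hk₂⟩ hval
    have h₁ : resE m e k₁ = h := (mem_filter.mp hk₁).2
    have h₂ : resE m e k₂ = h := (mem_filter.mp hk₂).2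
    have hv : k₁ m = k₂ m := congrArg Subtype.val hval
    refine Subtype.ext (OrderHom.ext _ _ (funext fun z => ?_))
    by_cases hz : z = m
    · subst hz; exact hv
    · have e₁ : k₁ z = h (e.symm ⟨z, hz⟩) := by
        rw [← h₁]
        show k₁ z = k₁ (e (e.symm ⟨z, hz⟩)).1
        rw [e.apply_symm_apply]
      have e₂ : k₂ z = h (e.symm ⟨z, hz⟩) := by
        rw [← h₂]
        show k₂ z = k₂ (e (e.symm ⟨z, hz⟩)).1
        rw [e.apply_symm_apply]
      rw [e₁, e₂]
  · rintro ⟨v, hv⟩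
    refine ⟨⟨glue m hm e h v hv, mem_filter.mpr ⟨mem_univ _, resE_glue m hm e h v hv⟩⟩, ?_⟩
    refine Subtype.ext ?_
    show (if hz : m = m then v else _) = v
    rw [dif_pos rfl]

/-- Counting order homs by fibers of the restriction. -/
lemma card_orderHom_eq_sum [DecidableEq W] (m : W) (hm : IsMin m) (e : T ≃o {z : W // z ≠ m})
    [Fintype W] [Fintype T] :
    Fintype.card (W →o Fin t)
      = ∑ h : T →o Fin t, Nat.card {v : Fin t // ∀ z : T, m ≤ (e z).1 → v ≤ h z} := by
  classical
  rw [← Finset.card_univ,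
    Finset.card_eq_sum_card_fiberwise (f := resE m e) (t := univ) (fun _ _ => mem_univ _)]
  exact Finset.sum_congr rfl fun h _ => fiber_card m hm e h

end Aux

/-- For two distinct minimal elements `x, y` of a finite poset `P` and any `t ≥ 1`:
`Ω(P,t) · Ω(P∖{x,y},t) ≥ Ω(P∖x,t) · Ω(P∖y,t)`. -/
theorem orderPoly_correlation_min_min (X : Type*) [Fintype X] [DecidableEq X]
    [PartialOrder X] (x y : X) (hxy : x ≠ y) (hx : IsMin x) (hy : IsMin y)
    (t : ℕ) (ht : 1 ≤ t) :
    orderPoly {z : X // z ≠ x} t * orderPoly {z : X // z ≠ y} t ≤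
      orderPoly X t * orderPoly {z : X // z ≠ x ∧ z ≠ y} t := by
  classical
  set Sx := {z : X // z ≠ x} with hSx
  set Sy := {z : X // z ≠ y} with hSy
  set S := {z : X // z ≠ x ∧ z ≠ y} with hS
  -- the distinguished minimal elements in the one-point-deleted posets
  have hyx : y ≠ x := fun h => hxy h.symm
  set mx : Sx := ⟨y, hyx⟩ with hmx
  set my : Sy := ⟨x, hxy⟩ with hmy
  have hmx_min : IsMin mx := fun b hb => hy (Subtype.coe_le_coe.mpr hb : (b : X) ≤ y)
  have hmy_min : IsMin my := fun b hb => hx (Subtype.coe_le_coe.mpr hb : (b : X) ≤ x)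
  -- order isos
  let e1 : Sx ≃o {z : X // z ≠ x} := OrderIso.refl _
  let e2 : S ≃o {z : Sx // z ≠ mx} :=
    { toFun := fun z => ⟨⟨z.1, z.2.1⟩, fun hc => z.2.2 (congrArg Subtype.val hc)⟩
      invFun := fun w => ⟨w.1.1, w.1.2, fun h1 => w.2 (Subtype.ext h1)⟩
      left_inv := fun z => rfl
      right_inv := fun w => rfl
      map_rel_iff' := Iff.rfl }
  let e3 : S ≃o {z : Sy // z ≠ my} :=
    { toFun := fun z => ⟨⟨z.1, z.2.2⟩, fun hc => z.2.1 (congrArg Subtype.val hc)⟩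
      invFun := fun w => ⟨w.1.1, fun h1 => w.2 (Subtype.ext h1), w.1.2⟩
      left_inv := fun z => rfl
      right_inv := fun w => rfl
      map_rel_iff' := Iff.rfl }
  -- the weight functions
  set a : (S →o Fin t) → ℕ :=
    fun h => Nat.card {v : Fin t // ∀ z : S, x ≤ z.1 → v ≤ h z} with ha
  set b : (S →o Fin t) → ℕ :=
    fun h => Nat.card {v : Fin t // ∀ z : S, y ≤ z.1 → v ≤ h z} with hb
  -- Ω(P∖x) = ∑ b
  have hcx : orderPoly Sx t = ∑ h : S →o Fin t, b h := by
    rw [orderPoly_eq_card, card_orderHom_eq_sum mx hmx_min e2]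
    refine Finset.sum_congr rfl fun h _ => ?_
    refine Nat.card_congr (Equiv.subtypeEquivRight fun v => ?_)
    constructor
    · intro hv z hz
      exact hv z (Subtype.mk_le_mk.mpr hz)
    · intro hv z hz
      exact hv z (Subtype.mk_le_mk.mp hz)
  -- Ω(P∖y) = ∑ a
  have hcy : orderPoly Sy t = ∑ h : S →o Fin t, a h := by
    rw [orderPoly_eq_card, card_orderHom_eq_sum my hmy_min e3]
    refine Finset.sum_congr rfl fun h _ => ?_
    refine Nat.card_congr (Equiv.subtypeEquivRight fun v => ?_)
    constructor
    · intro hv z hz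
      exact hv z (Subtype.mk_le_mk.mpr hz)
    · intro hv z hz
      exact hv z (Subtype.mk_le_mk.mp hz)
  -- Ω(P∖{x,y}) = ∑ 1
  have hcs : orderPoly S t = ∑ _h : S →o Fin t, 1 := by
    rw [orderPoly_eq_card, ← Finset.card_univ, Finset.card_eq_sum_ones]
  -- Ω(P) = ∑ a * b
  have hcX : orderPoly X t = ∑ h : S →o Fin t, a h * b h := by
    rw [orderPoly_eq_card, card_orderHom_eq_sum x hx e1]
    -- now fiber again over the restriction to S
    rw [← Finset.sum_fiberwise univ (resE mx e2)
      (fun k : Sx →o Fin t => Nat.card {v : Fin t // ∀ z : Sx, x ≤ (e1 z).1 → v ≤ k z})]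
    refine Finset.sum_congr rfl fun h _ => ?_
    have hconst : ∀ k ∈ univ.filter fun k : Sx →o Fin t => resE mx e2 k = h,
        Nat.card {v : Fin t // ∀ z : Sx, x ≤ (e1 z).1 → v ≤ k z} = a h := by
      intro k hk
      have hres : resE mx e2 k = h := (mem_filter.mp hk).2
      refine Nat.card_congr (Equiv.subtypeEquivRight fun v => ?_)
      constructor
      · intro hv z hz
        have h1 : v ≤ k ⟨z.1, z.2.1⟩ := hv ⟨z.1, z.2.1⟩ hz
        have h2 : k ⟨z.1, z.2.1⟩ = h z := DFunLike.congr_fun hres z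
        exact h1.trans (le_of_eq h2)
      · intro hv z hz
        have hzx : x ≤ z.1 := hz
        have hzy : z.1 ≠ y := by
          intro hzy
          have hxly : x ≤ y := le_of_le_of_eq hzx hzy
          exact hxy (le_antisymm hxly (hy hxly))
        have h2 := DFunLike.congr_fun hres (⟨z.1, z.2, hzy⟩ : S)
        have h1 : v ≤ h ⟨z.1, z.2, hzy⟩ := hv ⟨z.1, z.2, hzy⟩ hzx
        exact h1.trans (le_of_eq h2.symm)
    rw [Finset.sum_congr rfl hconst, Finset.sum_const, smul_eq_mul,
      fiber_card mx hmx_min e2 h, mul_comm]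
    rfl
  -- monotonicity of the weights
  have hamono : Monotone a := by
    intro h h' hh
    refine Nat.card_le_card_of_injective
      (fun v => ⟨v.1, fun z hz => (v.2 z hz).trans (hh z)⟩) ?_
    intro v w hvw
    have h5 := congrArg Subtype.val hvw
    exact Subtype.ext h5
  have hbmono : Monotone b := by
    intro h h' hh
    refine Nat.card_le_card_of_injective
      (fun v => ⟨v.1, fun z hz => (v.2 z hz).trans (hh z)⟩) ?_
    intro v w hvw
    have h5 := congrArg Subtype.val hvw
    exact Subtype.ext h5
  -- FKG
  have := fkg (μ := fun _ : S →o Fin t => (1 : ℕ)) (f := a) (g := b)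
    (fun _ => Nat.zero_le _) (fun _ => Nat.zero_le _) (fun _ => Nat.zero_le _)
    hamono hbmono (fun p q => le_refl _)
  simp only [one_mul] at this
  rw [hcx, hcy, hcX, hcs]
  calc (∑ h : S →o Fin t, b h) * ∑ h : S →o Fin t, a h
      = (∑ h : S →o Fin t, a h) * ∑ h : S →o Fin t, b h := mul_comm _ _
    _ ≤ (∑ _h : S →o Fin t, 1) * ∑ h : S →o Fin t, a h * b h := this
    _ = (∑ h : S →o Fin t, a h * b h) * ∑ _h : S →o Fin t, 1 := mul_comm _ _
end

section
/- Let P = (X, ≺) be a finite poset, let x ∈ X be a minimal element and let y ∈ X be a maximal element with x ≠ y, such that y does not cover x. Then for every integer t ≥ 1, Ω(P,t) · Ω(P∖{x,y}, t) ≤ Ω(P∖x, t) · Ω(P∖y, t). -/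
section Aux

open Finset

variable {X : Type*} [Fintype X] [DecidableEq X] [PartialOrder X] {x y : X} {n : ℕ}

lemma extendMin_mono (hx : IsMin x) (g : {g : {z : X // z ≠ x} → Fin (n + 1) // Monotone g}) :
    Monotone (fun z => if h : z = x then 0 else g.1 ⟨z, h⟩) := by
  intro a b hab
  by_cases hb : b = x
  · have ha : a = x := le_antisymm (hab.trans hb.le) (hx (hab.trans hb.le))
    simp [ha, hb]
  · by_cases ha : a = x
    · simp only [ha, dif_pos, dif_neg hb]
      exact Fin.zero_le _
    · simp only [dif_neg ha, dif_neg hb]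
      exact g.2 (show (⟨a, ha⟩ : {z : X // z ≠ x}) ≤ ⟨b, hb⟩ from hab)

/-- Extension equiv for a minimal element: monotone maps on `X ∖ x` correspond to
monotone maps on `X` sending `x` to `0`. -/
noncomputable def extendMinEquiv (hx : IsMin x) :
    {g : {z : X // z ≠ x} → Fin (n + 1) // Monotone g} ≃
      {f : X → Fin (n + 1) // Monotone f ∧ f x = 0} where
  toFun g := ⟨fun z => if h : z = x then 0 else g.1 ⟨z, h⟩, extendMin_mono hx g, by simp⟩
  invFun f := ⟨fun z => f.1 z.1, fun a b hab => f.2.1 hab⟩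
  left_inv g := by
    ext z
    simp [z.2]
  right_inv f := by
    ext z
    by_cases h : z = x
    · simp [h, f.2.2]
    · simp [h]

lemma extendMax_mono (hy : IsMax y) (g : {g : {z : X // z ≠ y} → Fin (n + 1) // Monotone g}) :
    Monotone (fun z => if h : z = y then Fin.last n else g.1 ⟨z, h⟩) := by
  intro a b hab
  by_cases ha : a = y
  · subst ha
    have : b = a := le_antisymm (hy hab) hab
    simp [this]
  · by_cases hb : b = y
    · simp only [dif_neg ha, hb, dif_pos]
      exact Fin.le_last _
    · simp only [dif_neg ha, dif_neg hb]
      exact g.2 (show (⟨a, ha⟩ : {z : X // z ≠ y}) ≤ ⟨b, hb⟩ from hab)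

/-- Extension equiv for a maximal element. -/
noncomputable def extendMaxEquiv (hy : IsMax y) :
    {g : {z : X // z ≠ y} → Fin (n + 1) // Monotone g} ≃
      {f : X → Fin (n + 1) // Monotone f ∧ f y = Fin.last n} where
  toFun g := ⟨fun z => if h : z = y then Fin.last n else g.1 ⟨z, h⟩, extendMax_mono hy g,
    by simp⟩
  invFun f := ⟨fun z => f.1 z.1, fun a b hab => f.2.1 hab⟩
  left_inv g := by
    ext z
    simp [z.2]
  right_inv f := by
    ext z
    by_cases h : z = y
    · simp [h, f.2.2]
    · simp [h]

lemma extendBoth_mono (hxy : x ≠ y) (hx : IsMin x) (hy : IsMax y)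
    (g : {g : {z : X // z ≠ x ∧ z ≠ y} → Fin (n + 1) // Monotone g}) :
    Monotone (fun z => if h : z = x then 0 else if h' : z = y then Fin.last n
      else g.1 ⟨z, h, h'⟩) := by
  intro a b hab
  by_cases ha : a = x
  · simp only [ha, dif_pos]
    exact Fin.zero_le _
  · by_cases hb' : b = y
    · subst hb'
      simp only [dif_neg ha, dif_neg (Ne.symm hxy), dif_pos rfl]
      split <;> exact Fin.le_last _
    · have hb : b ≠ x := by
        rintro rfl
        exact ha (le_antisymm hab (hx hab))
      have ha' : a ≠ y := by
        rintro rfl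
        exact hb' (le_antisymm (hy hab) hab)
      simp only [dif_neg ha, dif_neg hb, dif_neg ha', dif_neg hb']
      exact g.2 (show (⟨a, ha, ha'⟩ : {z : X // z ≠ x ∧ z ≠ y}) ≤ ⟨b, hb, hb'⟩ from hab)

/-- Extension equiv for both a minimal and a maximal element. -/
noncomputable def extendBothEquiv (hxy : x ≠ y) (hx : IsMin x) (hy : IsMax y) :
    {g : {z : X // z ≠ x ∧ z ≠ y} → Fin (n + 1) // Monotone g} ≃
      {f : X → Fin (n + 1) // Monotone f ∧ f x = 0 ∧ f y = Fin.last n} where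
  toFun g := ⟨fun z => if h : z = x then 0 else if h' : z = y then Fin.last n
      else g.1 ⟨z, h, h'⟩, extendBoth_mono hxy hx hy g, by simp, by simp [Ne.symm hxy]⟩
  invFun f := ⟨fun z => f.1 z.1, fun a b hab => f.2.1 hab⟩
  left_inv g := by
    ext z
    simp [z.2.1, z.2.2]
  right_inv f := by
    ext z
    by_cases h : z = x
    · simp [h, f.2.2.1]
    · by_cases h' : z = y
      · simp [h, h', Ne.symm hxy, f.2.2.2]
      · simp [h, h']

end Aux

open scoped FinsetFamily

/-- For a minimal element `x` and a maximal element `y ≠ x` of a finite poset `P`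
such that `y` does not cover `x`, and any `t ≥ 1`:
`Ω(P,t) · Ω(P∖{x,y},t) ≤ Ω(P∖x,t) · Ω(P∖y,t)`. -/
theorem orderPoly_correlation_min_max (X : Type*) [Fintype X] [DecidableEq X]
    [PartialOrder X] (x y : X) (hxy : x ≠ y) (hx : IsMin x) (hy : IsMax y)
    (hcov : ¬ x ⋖ y) (t : ℕ) (ht : 1 ≤ t) :
    orderPoly X t * orderPoly {z : X // z ≠ x ∧ z ≠ y} t ≤
      orderPoly {z : X // z ≠ x} t * orderPoly {z : X // z ≠ y} t := by
  classical
  obtain ⟨n, rfl⟩ : ∃ n, t = n + 1 := ⟨t - 1, (Nat.succ_pred_eq_of_pos ht).symm⟩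
  have h1 : orderPoly {z : X // z ≠ x} (n + 1) =
      Nat.card {f : X → Fin (n + 1) // Monotone f ∧ f x = 0} :=
    Nat.card_congr (extendMinEquiv hx)
  have h2 : orderPoly {z : X // z ≠ y} (n + 1) =
      Nat.card {f : X → Fin (n + 1) // Monotone f ∧ f y = Fin.last n} :=
    Nat.card_congr (extendMaxEquiv hy)
  have h3 : orderPoly {z : X // z ≠ x ∧ z ≠ y} (n + 1) =
      Nat.card {f : X → Fin (n + 1) // Monotone f ∧ f x = 0 ∧ f y = Fin.last n} :=
    Nat.card_congr (extendBothEquiv hxy hx hy)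
  rw [h1, h2, h3, orderPoly]
  simp only [Nat.card_eq_fintype_card, Fintype.card_subtype]
  set S : Finset (X → Fin (n + 1)) := Finset.univ.filter (fun f => Monotone f) with hS
  set T : Finset (X → Fin (n + 1)) :=
    Finset.univ.filter (fun f => Monotone f ∧ f x = 0 ∧ f y = Fin.last n) with hT
  set A : Finset (X → Fin (n + 1)) :=
    Finset.univ.filter (fun f => Monotone f ∧ f x = 0) with hA
  set B : Finset (X → Fin (n + 1)) :=
    Finset.univ.filter (fun f => Monotone f ∧ f y = Fin.last n) with hB
  have hinfs : S ⊼ T ⊆ A := by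
    intro c hc
    rw [Finset.mem_infs] at hc
    obtain ⟨f, hf, g, hg, rfl⟩ := hc
    simp only [hS, hT, hA, Finset.mem_filter, Finset.mem_univ, true_and] at hf hg ⊢
    refine ⟨fun a b hab => inf_le_inf (hf hab) (hg.1 hab), ?_⟩
    have : (f ⊓ g) x = f x ⊓ g x := rfl
    rw [this, hg.2.1]
    exact inf_eq_right.2 (Fin.zero_le _)
  have hsups : S ⊻ T ⊆ B := by
    intro c hc
    rw [Finset.mem_sups] at hc
    obtain ⟨f, hf, g, hg, rfl⟩ := hc
    simp only [hS, hT, hB, Finset.mem_filter, Finset.mem_univ, true_and] at hf hg ⊢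
    refine ⟨fun a b hab => sup_le_sup (hf hab) (hg.1 hab), ?_⟩
    have : (f ⊔ g) y = f y ⊔ g y := rfl
    rw [this, hg.2.2]
    exact sup_eq_right.2 (Fin.le_last _)
  calc S.card * T.card ≤ (S ⊼ T).card * (S ⊻ T).card :=
        Finset.le_card_infs_mul_card_sups S T
    _ ≤ A.card * B.card :=
        Nat.mul_le_mul (Finset.card_le_card hinfs) (Finset.card_le_card hsups)
end

section
/- Let P = (X, ≺) be a finite poset and let x ∈ X be a minimal element with b(x) > 1. Then for every integer t ≥ 1, b(x) · Ω(P,t) ≥ (t+1) · Ω(P∖x, t). -/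
open Finset
open scoped FinsetFamily

/-! Auxiliary definitions and lemmas -/

/-- The order polynomial, without a `Fintype` argument. -/
noncomputable def OP (Z : Type*) [PartialOrder Z] (t : ℕ) : ℕ :=
  Nat.card {g : Z → Fin t // Monotone g}

/-- Count of monotone maps into `Fin t` that are `≥ k` on `W`. -/
noncomputable def cntA {Y : Type*} [Fintype Y] [PartialOrder Y] (W : Set Y) (t k : ℕ) : ℕ :=
  Nat.card {g : Y → Fin t // Monotone g ∧ ∀ z ∈ W, k ≤ (g z).val}

/-- Count of monotone maps supported on `W` that are `≥ k` on `W`. -/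
noncomputable def cntB {Y : Type*} [Fintype Y] [PartialOrder Y] (W : Set Y) (t k : ℕ) : ℕ :=
  Nat.card {g : Y → Fin t // Monotone g ∧ (∀ z ∈ W, k ≤ (g z).val) ∧
    ∀ z ∉ W, (g z).val = 0}

/-- Count of surjective monotone maps onto `Fin l`. -/
noncomputable def surjCnt (Z : Type*) [PartialOrder Z] (l : ℕ) : ℕ :=
  Nat.card {f : Z → Fin l // Monotone f ∧ Function.Surjective f}

lemma natCard_subtype {α : Type*} [Fintype α] (p : α → Prop) [DecidablePred p] :
    Nat.card {a : α // p a} = (univ.filter p).card := by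
  simp [Nat.card_eq_fintype_card, Fintype.card_subtype]

lemma OP_zero (Z : Type*) [PartialOrder Z] [Nonempty Z] : OP Z 0 = 0 := by
  have : IsEmpty {g : Z → Fin 0 // Monotone g} :=
    ⟨fun ⟨f, _⟩ => (f (Classical.arbitrary Z)).elim0⟩
  simp [OP, Nat.card_of_isEmpty]

lemma surjCnt_eq_zero (Z : Type*) [Fintype Z] [PartialOrder Z] {l : ℕ}
    (h : Fintype.card Z < l) : surjCnt Z l = 0 := by
  have : IsEmpty {f : Z → Fin l // Monotone f ∧ Function.Surjective f} := by
    refine ⟨fun ⟨f, _, hs⟩ => absurd ?_ (not_le.2 h)⟩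
    simpa using Fintype.card_le_of_surjective f hs
  simp [surjCnt, Nat.card_of_isEmpty]

lemma daykin_step {Y : Type*} [Fintype Y] [PartialOrder Y] (W : Set Y) (t k : ℕ) :
    cntA W t k * cntB W t (k + 1) ≤ cntA W t (k + 1) * cntB W t k := by
  classical
  set pA : ℕ → (Y → Fin t) → Prop :=
    fun j g => Monotone g ∧ ∀ z ∈ W, j ≤ (g z).val with hpA
  set pB : ℕ → (Y → Fin t) → Prop :=
    fun j g => Monotone g ∧ (∀ z ∈ W, j ≤ (g z).val) ∧ ∀ z ∉ W, (g z).val = 0 with hpB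
  have hA : ∀ j, cntA W t j = (univ.filter (pA j)).card := fun j => natCard_subtype _
  have hB : ∀ j, cntB W t j = (univ.filter (pB j)).card := fun j => natCard_subtype _
  rw [hA, hA, hB, hB]
  set 𝒜 := univ.filter (pA k) with h𝒜
  set ℬ := univ.filter (pB (k+1)) with hℬ
  have hsup : 𝒜 ⊻ ℬ ⊆ univ.filter (pA (k+1)) := by
    intro c hc
    rw [mem_sups] at hc
    obtain ⟨a, ha, b, hb, rfl⟩ := hc
    rw [h𝒜, mem_filter] at ha
    rw [hℬ, mem_filter] at hb
    rw [mem_filter]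
    refine ⟨mem_univ _, ha.2.1.sup hb.2.1, fun z hz => ?_⟩
    have h1 : b z ≤ (a ⊔ b) z := by rw [Pi.sup_apply]; exact le_sup_right
    exact le_trans (hb.2.2.1 z hz) h1
  have hinf : 𝒜 ⊼ ℬ ⊆ univ.filter (pB k) := by
    intro c hc
    rw [mem_infs] at hc
    obtain ⟨a, ha, b, hb, rfl⟩ := hc
    rw [h𝒜, mem_filter] at ha
    rw [hℬ, mem_filter] at hb
    rw [mem_filter]
    refine ⟨mem_univ _, ha.2.1.inf hb.2.1, fun z hz => ?_, fun z hz => ?_⟩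
    · rw [Pi.inf_apply]
      rcases le_total (a z) (b z) with h | h
      · rw [inf_eq_left.2 h]; exact ha.2.2 z hz
      · rw [inf_eq_right.2 h]; exact le_trans (Nat.le_succ k) (hb.2.2.1 z hz)
    · have h1 : (a ⊓ b) z ≤ b z := by rw [Pi.inf_apply]; exact inf_le_right
      have h2 := Fin.le_def.1 h1
      have h3 := hb.2.2.2 z hz
      omega
  calc #𝒜 * #ℬ ≤ #(𝒜 ⊼ ℬ) * #(𝒜 ⊻ ℬ) := Finset.le_card_infs_mul_card_sups 𝒜 ℬ
    _ ≤ #(univ.filter (pB k)) * #(univ.filter (pA (k+1))) :=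
        Nat.mul_le_mul (card_le_card hinf) (card_le_card hsup)
    _ = #(univ.filter (pA (k+1))) * #(univ.filter (pB k)) := Nat.mul_comm _ _

lemma cntB_pos {Y : Type*} [Fintype Y] [PartialOrder Y] (W : Set Y) (hW : IsUpperSet W) {t k : ℕ} (hk : k < t) :
    0 < cntB W t k := by
  classical
  have hpos : 0 < t := lt_of_le_of_lt (Nat.zero_le k) hk
  have hne : Nonempty {g : Y → Fin t // Monotone g ∧ (∀ z ∈ W, k ≤ (g z).val) ∧
      ∀ z ∉ W, (g z).val = 0} := by
    refine ⟨⟨fun z => if z ∈ W then ⟨k, hk⟩ else ⟨0, hpos⟩, ?_, fun z hz => ?_, fun z hz => ?_⟩⟩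
    · intro a b hab
      simp only
      by_cases ha : a ∈ W
      · rw [if_pos ha, if_pos (hW hab ha)]
      · rw [if_neg ha]
        rcases ite_eq_or_eq (b ∈ W) (⟨k, hk⟩ : Fin t) (⟨0, hpos⟩ : Fin t) with h | h <;>
          rw [h] <;> simp [Fin.le_def]
    · simp only [if_pos hz]; exact le_rfl
    · simp only [if_neg hz]
  exact Nat.card_pos

lemma telescope {Y : Type*} [Fintype Y] [PartialOrder Y] (W : Set Y) (hW : IsUpperSet W) {t : ℕ} :
    ∀ k < t, cntA W t 0 * cntB W t k ≤ cntA W t k * cntB W t 0 := by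
  intro k
  induction k with
  | zero => intro _; exact le_rfl
  | succ k ih =>
    intro hk1
    have hk : k < t := Nat.lt_of_succ_lt hk1
    have h1 := daykin_step W t k
    have h2 := ih hk
    have hpos := cntB_pos W hW hk
    have h3 : (cntA W t 0 * cntB W t (k+1)) * cntB W t k
        ≤ (cntA W t (k+1) * cntB W t 0) * cntB W t k := by
      calc (cntA W t 0 * cntB W t (k+1)) * cntB W t k
          = (cntA W t 0 * cntB W t k) * cntB W t (k+1) := by ring
        _ ≤ (cntA W t k * cntB W t 0) * cntB W t (k+1) := Nat.mul_le_mul_right _ h2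
        _ = (cntA W t k * cntB W t (k+1)) * cntB W t 0 := by ring
        _ ≤ (cntA W t (k+1) * cntB W t k) * cntB W t 0 := Nat.mul_le_mul_right _ h1
        _ = (cntA W t (k+1) * cntB W t 0) * cntB W t k := by ring
    exact Nat.le_of_mul_le_mul_right h3 hpos

lemma peel {X : Type*} [Fintype X] [DecidableEq X] [PartialOrder X] (x : X)
    (hx : IsMin x) (t : ℕ) :
    OP X t = ∑ k ∈ range t,
      cntA (Y := {z : X // z ≠ x}) {z | x ≤ z.1} t k := by
  classical
  rw [OP, natCard_subtype]
  rw [card_eq_sum_card_fiberwise (f := fun h : X → Fin t => h x) (t := univ)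
    (fun _ _ => mem_univ _)]
  rw [← Fin.sum_univ_eq_sum_range (fun j => cntA (Y := {z : X // z ≠ x}) {z | x ≤ z.1} t j) t]
  refine Finset.sum_congr rfl (fun k _ => ?_)
  rw [filter_filter]
  rw [cntA, natCard_subtype]
  apply Finset.card_nbij' (i := fun h => fun z : {z : X // z ≠ x} => h z.1)
    (j := fun g => fun z : X => if hz : z = x then k else g ⟨z, hz⟩)
  · intro h hh
    simp only [mem_coe, mem_filter, mem_univ, true_and] at hh ⊢
    refine ⟨fun a b hab => hh.1 (Subtype.coe_le_coe.2 hab), fun z hz => ?_⟩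
    have : h x ≤ h z.1 := hh.1 hz
    rw [hh.2] at this
    exact Fin.le_def.1 this
  · intro g hg
    simp only [mem_coe, mem_filter, mem_univ, true_and] at hg ⊢
    constructor
    · intro a b hab
      dsimp only
      by_cases ha : a = x
      · rw [dif_pos ha]
        by_cases hb : b = x
        · rw [dif_pos hb]
        · rw [dif_neg hb]
          exact Fin.le_def.2 (hg.2 ⟨b, hb⟩ (show (⟨b, hb⟩ : {z : X // z ≠ x}) ∈ {z | x ≤ z.1} from ha ▸ hab))
      · have hb : b ≠ x := by
          intro e; subst e
          exact ha (le_antisymm hab (hx hab))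
        rw [dif_neg ha, dif_neg hb]
        exact hg.1 (show (⟨a, ha⟩ : {z : X // z ≠ x}) ≤ ⟨b, hb⟩ from hab)
    · simp
  · intro h hh
    simp only [mem_coe, mem_filter, mem_univ, true_and] at hh
    funext z
    dsimp only
    by_cases hz : z = x
    · subst hz; rw [dif_pos rfl, hh.2]
    · rw [dif_neg hz]
  · intro g hg
    funext z
    dsimp only
    rw [dif_neg z.2]

open scoped Classical in
lemma cntB_eq_OP {Y : Type*} [Fintype Y] [PartialOrder Y] (W : Set Y)
    (hW : IsUpperSet W) {t k : ℕ} (hk : k < t) :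
    cntB W t k = OP {z : Y // z ∈ W} (t - k) := by
  rw [cntB, OP]
  apply Nat.card_congr
  refine
    { toFun := fun g => ⟨fun w => ⟨(g.1 w.1).val - k, by
        have h1 := (g.1 w.1).isLt
        have h2 := g.2.2.1 w.1 w.2
        omega⟩, fun a b hab => by
        rw [Fin.mk_le_mk]
        exact Nat.sub_le_sub_right (Fin.le_def.1 (g.2.1 (Subtype.coe_le_coe.2 hab))) k⟩
      invFun := fun f => ⟨fun z => if hz : z ∈ W then
          ⟨(f.1 ⟨z, hz⟩).val + k, by have := (f.1 ⟨z, hz⟩).isLt; omega⟩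
          else ⟨0, by omega⟩, ?_, fun z hz => ?_, fun z hz => ?_⟩
      left_inv := ?_
      right_inv := ?_ }
  · intro a b hab
    dsimp only
    by_cases ha : a ∈ W
    · rw [dif_pos ha, dif_pos (hW hab ha), Fin.mk_le_mk]
      exact Nat.add_le_add_right
        (Fin.le_def.1 (f.2 (show (⟨a, ha⟩ : {z : Y // z ∈ W}) ≤ ⟨b, hW hab ha⟩ from hab))) k
    · rw [dif_neg ha, Fin.mk_le_mk]
      exact Nat.zero_le _
  · dsimp only
    rw [dif_pos hz]
    exact Nat.le_add_left k _
  · dsimp only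
    rw [dif_neg hz]
  · intro g
    apply Subtype.ext
    funext z
    dsimp only
    by_cases hz : z ∈ W
    · rw [dif_pos hz]
      apply Fin.ext
      have := g.2.2.1 z hz
      simp only
      omega
    · rw [dif_neg hz]
      apply Fin.ext
      exact (g.2.2.2 z hz).symm
  · intro f
    apply Subtype.ext
    funext w
    apply Fin.ext
    simp only [dif_pos w.2, Subtype.eta]
    omega

lemma mem_of_image_eq {α β : Type*} [Fintype α] [DecidableEq β] {gv : α → β}
    {S : Finset β} (him : Finset.image gv Finset.univ = S) (z : α) : gv z ∈ S := by
  rw [← him]; exact mem_image_of_mem gv (mem_univ z)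

lemma mem_image_of_eq {α β : Type*} [Fintype α] [DecidableEq β] {gv : α → β}
    {S : Finset β} (him : Finset.image gv Finset.univ = S) {y : β} (hy : y ∈ S) :
    y ∈ Finset.image gv Finset.univ := by rw [him]; exact hy

lemma OP_eq_sum_surj (Z : Type*) [Fintype Z] [PartialOrder Z] (s : ℕ) :
    OP Z s = ∑ l ∈ range (Fintype.card Z + 1), surjCnt Z l * s.choose l := by
  classical
  rw [OP, natCard_subtype]
  rw [card_eq_sum_card_fiberwise (f := fun f : Z → Fin s => univ.image f) (t := univ)
    (fun _ _ => mem_univ _)]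
  have hper : ∀ S : Finset (Fin s),
      #(filter (fun f => univ.image f = S) (filter (fun f : Z → Fin s => Monotone f) univ)) = surjCnt Z S.card := by
    intro S
    rw [filter_filter, ← natCard_subtype, surjCnt]
    apply Nat.card_congr
    set iso := S.orderIsoOfFin rfl with hiso
    refine
      { toFun := fun g => ⟨fun z => iso.symm ⟨g.1 z, mem_of_image_eq g.2.2 z⟩, ?_, ?_⟩
        invFun := fun f₀ => ⟨fun z => (iso (f₀.1 z)).1, ?_, ?_⟩
        left_inv := ?_
        right_inv := ?_ }
    · intro a b hab
      exact iso.symm.monotone (Subtype.mk_le_mk.2 (g.2.1 hab))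
    · intro j
      have hj := mem_image_of_eq g.2.2 (iso j).2
      rw [mem_image] at hj
      obtain ⟨z, _, hz⟩ := hj
      refine ⟨z, ?_⟩
      simp only [hz, Subtype.eta]
      exact iso.symm_apply_apply j
    · intro a b hab
      exact Subtype.coe_le_coe.2 (iso.monotone (f₀.2.1 hab))
    · ext y
      simp only [mem_image, mem_univ, true_and]
      constructor
      · rintro ⟨z, rfl⟩
        exact (iso (f₀.1 z)).2
      · intro hy
        obtain ⟨j, hj⟩ := iso.surjective ⟨y, hy⟩
        obtain ⟨z, hz⟩ := f₀.2.2 j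
        exact ⟨z, by rw [hz, hj]⟩
    · intro g
      apply Subtype.ext
      funext z
      simp only
      exact congrArg Subtype.val (iso.apply_symm_apply _)
    · intro f₀
      apply Subtype.ext
      funext z
      simp only [Subtype.eta]
      exact iso.symm_apply_apply _
  calc ∑ S ∈ (univ : Finset (Finset (Fin s))),
        #(filter (fun f => univ.image f = S) (filter (fun f : Z → Fin s => Monotone f) univ))
      = ∑ S ∈ (univ : Finset (Finset (Fin s))), surjCnt Z S.card :=
        Finset.sum_congr rfl fun S _ => hper S
    _ = ∑ l ∈ range (s + 1), ∑ S ∈ univ.filter (fun S : Finset (Fin s) => S.card = l),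
          surjCnt Z S.card := by
        rw [Finset.sum_fiberwise_of_maps_to]
        intro S _
        rw [mem_range, Nat.lt_succ_iff]
        simpa using card_le_card (subset_univ S)
    _ = ∑ l ∈ range (s + 1), (s.choose l) * surjCnt Z l := by
        refine Finset.sum_congr rfl fun l _ => ?_
        rw [Finset.sum_congr rfl (fun S hS => by rw [(mem_filter.1 hS).2]),
          Finset.sum_const, smul_eq_mul]
        congr 1
        rw [← Fintype.card_subtype]
        simpa using Fintype.card_finset_len (α := Fin s) l
    _ = ∑ l ∈ range (Fintype.card Z + 1), surjCnt Z l * s.choose l := by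
        have key : ∀ l, surjCnt Z l * s.choose l ≠ 0 →
            l ∈ range (s + 1) ∩ range (Fintype.card Z + 1) := by
          intro l h
          rw [mem_inter, mem_range, mem_range, Nat.lt_succ_iff, Nat.lt_succ_iff]
          constructor
          · by_contra hb
            exact h (by rw [Nat.choose_eq_zero_of_lt (by omega), Nat.mul_zero])
          · by_contra hb
            exact h (by rw [surjCnt_eq_zero Z (by omega), Nat.zero_mul])
        rw [Finset.sum_congr rfl (fun l _ => (Nat.mul_comm (s.choose l) (surjCnt Z l)))]
        refine (Finset.sum_subset_zero_on_sdiff (inter_subset_left) ?_ (fun _ _ => rfl)).symm.trans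
          (Finset.sum_subset_zero_on_sdiff (inter_subset_right) ?_ (fun _ _ => rfl)) <;>
        · intro l hl
          rw [mem_sdiff] at hl
          by_contra h
          exact hl.2 (key l h)

lemma hockey (t l : ℕ) : ∑ s ∈ range (t + 1), s.choose l = (t + 1).choose (l + 1) := by
  rw [← Nat.sum_Icc_choose t l, range_eq_Ico, ← Finset.Ico_add_one_right_eq_Icc]
  refine (Finset.sum_subset (fun x hx => ?_) (fun x hx hnx => ?_)).symm
  · simp only [mem_Ico] at hx ⊢
    omega
  · refine Nat.choose_eq_zero_of_lt ?_
    simp only [mem_Ico] at hx hnx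
    omega

lemma star_s13 (Z : Type*) [Fintype Z] [PartialOrder Z] (t : ℕ) :
    (t + 1) * OP Z t ≤ (Fintype.card Z + 1) * ∑ s ∈ range (t + 1), OP Z s := by
  set n := Fintype.card Z with hn
  calc (t + 1) * OP Z t
      = ∑ l ∈ range (n + 1), surjCnt Z l * ((t + 1) * t.choose l) := by
        rw [OP_eq_sum_surj, Finset.mul_sum]
        exact Finset.sum_congr rfl fun l _ => by ring
    _ = ∑ l ∈ range (n + 1), surjCnt Z l * ((t + 1).choose (l + 1) * (l + 1)) := by
        refine Finset.sum_congr rfl fun l _ => ?_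
        rw [Nat.add_one_mul_choose_eq]
    _ ≤ ∑ l ∈ range (n + 1), surjCnt Z l * ((t + 1).choose (l + 1) * (n + 1)) := by
        refine Finset.sum_le_sum fun l hl => ?_
        have : l + 1 ≤ n + 1 := by
          rw [mem_range] at hl; omega
        exact Nat.mul_le_mul_left _ (Nat.mul_le_mul_left _ this)
    _ = (n + 1) * ∑ l ∈ range (n + 1), surjCnt Z l * (∑ s ∈ range (t + 1), s.choose l) := by
        rw [Finset.mul_sum]
        exact Finset.sum_congr rfl fun l _ => by rw [hockey]; ring
    _ = (n + 1) * ∑ s ∈ range (t + 1), OP Z s := by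
        congr 1
        calc ∑ l ∈ range (n + 1), surjCnt Z l * (∑ s ∈ range (t + 1), s.choose l)
            = ∑ l ∈ range (n + 1), ∑ s ∈ range (t + 1), surjCnt Z l * s.choose l := by
              exact Finset.sum_congr rfl fun l _ => Finset.mul_sum _ _ _
          _ = ∑ s ∈ range (t + 1), ∑ l ∈ range (n + 1), surjCnt Z l * s.choose l :=
              Finset.sum_comm
          _ = ∑ s ∈ range (t + 1), OP Z s :=
              Finset.sum_congr rfl fun s _ => (OP_eq_sum_surj Z s).symm


/-- For a minimal element `x` of a finite poset `P` with `b(x) > 1` and any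
integer `t ≥ 1`: `b(x) · Ω(P,t) ≥ (t+1) · Ω(P∖x,t)`. -/
theorem orderPoly_remove_min (X : Type*) [Fintype X] [DecidableEq X]
    [PartialOrder X] (x : X) (hx : IsMin x)
    (hb : 1 < Nat.card {y : X // x ≤ y}) (t : ℕ) (ht : 1 ≤ t) :
    (t + 1) * orderPoly {z : X // z ≠ x} t ≤
      Nat.card {y : X // x ≤ y} * orderPoly X t := by
  classical
  set Q := {z : X // z ≠ x} with hQ
  set W : Set Q := {z | x ≤ z.1} with hWdef
  have hW : IsUpperSet W := fun a b hab ha => le_trans ha (Subtype.coe_le_coe.2 hab)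
  set V := {z : Q // z ∈ W} with hV
  haveI : Fintype V := Fintype.ofFinite V
  -- card bookkeeping
  have hcard : Nat.card {y : X // x ≤ y} = Fintype.card V + 1 := by
    have e : {y : X // x ≤ y} ≃ Option V :=
      { toFun := fun y => if h : y.1 = x then none else some ⟨⟨y.1, h⟩, y.2⟩
        invFun := fun o => o.elim ⟨x, le_rfl⟩ (fun v => ⟨v.1.1, v.2⟩)
        left_inv := by
          intro y
          by_cases h : y.1 = x
          · simp only [dif_pos h]
            exact Subtype.ext h.symm
          · simp only [dif_neg h, Option.elim]
        right_inv := by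
          intro o
          match o with
          | none => simp
          | some v => simp only [Option.elim]; exact dif_neg v.1.2
      }
    rw [Nat.card_congr e, Nat.card_eq_fintype_card, Fintype.card_option]
  have hu : 1 ≤ Fintype.card V := by omega
  have hVne : Nonempty V := Fintype.card_pos_iff.1 (by omega)
  have htpos : 0 < t := ht
  -- identifications
  have hA0 : cntA W t 0 = orderPoly Q t := by
    rw [cntA, orderPoly]
    exact Nat.card_congr (Equiv.subtypeEquivRight fun g =>
      ⟨fun h => h.1, fun h => ⟨h, fun z _ => Nat.zero_le _⟩⟩)
  have hB0 : cntB W t 0 = OP V t := by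
    rw [cntB_eq_OP W hW htpos]
    norm_num
    rfl
  have hBsum : ∑ k ∈ range t, cntB W t k = ∑ s ∈ range (t + 1), OP V s := by
    have h1 : ∑ k ∈ range t, cntB W t k = ∑ k ∈ range t, OP V (t - k) :=
      Finset.sum_congr rfl fun k hk => cntB_eq_OP W hW (mem_range.1 hk)
    have h2 : ∑ k ∈ range t, OP V (t - k) = ∑ k ∈ range t, OP V (k + 1) := by
      rw [← Finset.sum_range_reflect (fun j => OP V (j + 1)) t]
      refine Finset.sum_congr rfl fun k hk => ?_
      rw [mem_range] at hk
      congr 1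
      omega
    rw [h1, h2, Finset.sum_range_succ' (fun s => OP V s) t, OP_zero V, Nat.add_zero]
  -- main chain
  have main : cntA W t 0 * ∑ k ∈ range t, cntB W t k ≤ OP X t * cntB W t 0 := by
    rw [peel x hx t, Finset.mul_sum, Finset.sum_mul]
    exact Finset.sum_le_sum fun k hk => telescope W hW k (mem_range.1 hk)
  have chain : ((t + 1) * orderPoly Q t) * cntB W t 0 ≤
      ((Fintype.card V + 1) * OP X t) * cntB W t 0 := by
    calc ((t + 1) * orderPoly Q t) * cntB W t 0
        = orderPoly Q t * ((t + 1) * OP V t) := by rw [hB0]; ring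
      _ ≤ orderPoly Q t * ((Fintype.card V + 1) * ∑ s ∈ range (t + 1), OP V s) :=
          Nat.mul_le_mul_left _ (star_s13 V t)
      _ = (Fintype.card V + 1) * (cntA W t 0 * ∑ k ∈ range t, cntB W t k) := by
          rw [hA0, hBsum]; ring
      _ ≤ (Fintype.card V + 1) * (OP X t * cntB W t 0) :=
          Nat.mul_le_mul_left _ main
      _ = ((Fintype.card V + 1) * OP X t) * cntB W t 0 := by ring
  have hBpos : 0 < cntB W t 0 := cntB_pos W hW htpos
  have := Nat.le_of_mul_le_mul_right chain hBpos
  rw [hcard]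
  exact this
end

section
/- Let P = (X, ≺) be a finite poset of width w. Then for all integers t ≥ s ≥ 1, Ω(P,s) · t^w ≤ Ω(P,t) · s^w; equivalently, the function Ω(P,t)/t^w is weakly increasing in the positive integer t. -/
noncomputable section TestAux

variable {X : Type*} [PartialOrder X]

open Classical in
noncomputable def auxE (A : Finset X) {t : ℕ} (f : A → Fin t) (x : X) : ℕ :=
  (A.filter fun a => a ≤ x).sup fun a => if h : a ∈ A then (f ⟨a, h⟩ : ℕ) else 0

lemma auxE_mono (A : Finset X) {t : ℕ} (f : A → Fin t) : Monotone (auxE A f) := by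
  classical
  intro x y hxy
  classical
  unfold auxE
  apply Finset.sup_mono
  apply Finset.monotone_filter_right
  intro a ha
  exact fun h => h.trans hxy

lemma auxE_lt (A : Finset X) {t : ℕ} (ht : 0 < t) (f : A → Fin t) (x : X) :
    auxE A f x < t := by
  classical
  unfold auxE
  rw [Finset.sup_lt_iff (by exact ht)]
  intro b hb
  split
  · exact (f _).is_lt
  · exact ht

lemma auxE_eq (A : Finset X)
    (hA : ∀ x ∈ A, ∀ y ∈ A, x ≠ y → ¬ x ≤ y ∧ ¬ y ≤ x)
    {t : ℕ} (f : A → Fin t) (a : X) (ha : a ∈ A) :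
    auxE A f a = f ⟨a, ha⟩ := by
  classical
  unfold auxE
  apply le_antisymm
  · apply Finset.sup_le
    intro b hb
    rw [Finset.mem_filter] at hb
    by_cases hba : b = a
    · subst hba; rw [dif_pos hb.1]
    · exact absurd hb.2 (hA b hb.1 a ha hba).1
  · have hmem : a ∈ A.filter (fun b => b ≤ a) := Finset.mem_filter.mpr ⟨ha, le_refl a⟩
    have := Finset.le_sup (f := fun b => if h : b ∈ A then ((f ⟨b, h⟩ : ℕ)) else 0) hmem
    simpa [ha] using this

end TestAux

lemma key_arith {s t : ℕ} (hs : 1 ≤ s) (hst : s ≤ t) (u v c : ℕ) (huv : u < v)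
    (hdd : (u * t + c) / s = (v * t + c) / s) : False := by
  have h5 : u * t + t ≤ v * t := by
    have h : u + 1 ≤ v := huv
    calc u * t + t = (u + 1) * t := by ring
    _ ≤ v * t := Nat.mul_le_mul_right t h
  have h6 : v * t + c < u * t + c + s := by
    calc v * t + c = s * ((v * t + c) / s) + (v * t + c) % s := (Nat.div_add_mod _ _).symm
      _ < s * ((v * t + c) / s) + s := by
          have := Nat.mod_lt (v * t + c) (show 0 < s from hs)
          omega
      _ = s * ((u * t + c) / s) + s := by rw [hdd]
      _ = (u * t + c) / s * s + s := by ring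
      _ ≤ (u * t + c) + s := Nat.add_le_add_right (Nat.div_mul_le_self _ _) s
  have hlt : v * t + c < v * t + c := by
    calc v * t + c < u * t + c + s := h6
      _ ≤ u * t + c + t := by omega
      _ = u * t + t + c := by ring
      _ ≤ v * t + c := Nat.add_le_add_right h5 c
  exact lt_irrefl _ hlt


/-- If `w` is the width of a finite poset `P` (the maximal size of an antichain),
then `Ω(P,t)/t^w` is weakly increasing in `t`, i.e. for all `t ≥ s ≥ 1`:
`Ω(P,s) · t^w ≤ Ω(P,t) · s^w`. -/
theorem orderPoly_div_width_monotone (X : Type*) [Fintype X] [PartialOrder X]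
    (w : ℕ)
    (hw : IsGreatest {m : ℕ | ∃ A : Finset X,
        (∀ x ∈ A, ∀ y ∈ A, x ≠ y → ¬ x ≤ y ∧ ¬ y ≤ x) ∧ A.card = m} w)
    (s t : ℕ) (hs : 1 ≤ s) (hst : s ≤ t) :
    orderPoly X s * t ^ w ≤ orderPoly X t * s ^ w := by
  classical
  have ht : (1 : ℕ) ≤ t := hs.trans hst
  obtain ⟨A, hA, hAcard⟩ := hw.1
  -- the big value associated to (g, f)
  set HB : (X → Fin s) → (A → Fin t) → X → ℕ :=
    fun g f x => (g x : ℕ) * t + auxE A f x with hHB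
  have hblt : ∀ (g : X → Fin s) (f : A → Fin t) (x : X), HB g f x < s * t := by
    intro g f x
    have h1 : (g x : ℕ) + 1 ≤ s := (g x).is_lt
    have h2 : auxE A f x < t := auxE_lt A ht f x
    calc HB g f x < (g x : ℕ) * t + t := by simp only [hHB]; omega
      _ = ((g x : ℕ) + 1) * t := by ring
      _ ≤ s * t := Nat.mul_le_mul_right t h1
  have hbmono : ∀ (g : X → Fin s), Monotone g → ∀ (f : A → Fin t), Monotone (HB g f) := by
    intro g hg f x y hxy
    have h1 : (g x : ℕ) ≤ (g y : ℕ) := hg hxy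
    have h2 : auxE A f x ≤ auxE A f y := auxE_mono A f hxy
    simp only [hHB]
    exact Nat.add_le_add (Nat.mul_le_mul_right t h1) h2
  -- the injection
  set Φ : ({g : X → Fin s // Monotone g} × (A → Fin t)) →
      ({g : X → Fin t // Monotone g} × (A → Fin s)) :=
    fun p =>
      ⟨⟨fun x => ⟨HB p.1.1 p.2 x / s,
          (Nat.div_lt_iff_lt_mul hs).mpr (by rw [mul_comm]; exact hblt _ _ x)⟩,
        by
          intro x y hxy
          have := Nat.div_le_div_right (c := s) (hbmono p.1.1 p.1.2 p.2 hxy)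
          exact this⟩,
        fun a => ⟨HB p.1.1 p.2 a % s, Nat.mod_lt _ hs⟩⟩ with hΦdef
  have hΦ : Function.Injective Φ := by
    rintro ⟨⟨g, hg⟩, f⟩ ⟨⟨g', hg'⟩, f'⟩ heq
    simp only [hΦdef, Prod.mk.injEq, Subtype.mk.injEq] at heq
    obtain ⟨h1, h2⟩ := heq
    have hdiv : ∀ x, HB g f x / s = HB g' f' x / s := by
      intro x
      exact congrArg Fin.val (congrFun (congrArg Subtype.val h1) x)
    have hmod : ∀ a : A, HB g f a % s = HB g' f' a % s := by
      intro a
      exact congrArg Fin.val (congrFun h2 a)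
    have hbigA : ∀ a : A, HB g f a = HB g' f' a := by
      intro a
      rw [← Nat.div_add_mod (HB g f a) s, ← Nat.div_add_mod (HB g' f' a) s,
        hdiv a, hmod a]
    have hf : f = f' := by
      funext a
      have hb := hbigA a
      simp only [hHB] at hb
      rw [auxE_eq A hA f a.1 a.2, auxE_eq A hA f' a.1 a.2] at hb
      have h1 : (f ⟨a.1, a.2⟩ : ℕ) < t := (f _).is_lt
      have h2 : (f' ⟨a.1, a.2⟩ : ℕ) < t := (f' _).is_lt
      have hm := congrArg (· % t) hb
      simp only [Nat.mul_add_mod', Nat.mod_eq_of_lt h1, Nat.mod_eq_of_lt h2] at hm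
      have : f ⟨a.1, a.2⟩ = f' ⟨a.1, a.2⟩ := Fin.ext hm
      simpa using this
    have hg2 : g = g' := by
      funext x
      apply Fin.ext
      by_contra hne
      have hd := hdiv x
      simp only [hHB, hf] at hd
      have hct : auxE A f' x < t := auxE_lt A ht f' x
      rcases Nat.lt_or_ge (g x : ℕ) (g' x : ℕ) with h | h
      · exact key_arith hs hst _ _ _ h hd
      · have h' : (g' x : ℕ) < (g x : ℕ) := lt_of_le_of_ne h (fun e => hne e.symm)
        exact key_arith hs hst _ _ _ h' hd.symm
    simp only [Prod.mk.injEq, Subtype.mk.injEq]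
    exact ⟨hg2, hf⟩
  have hineq := Fintype.card_le_of_injective Φ hΦ
  rw [Fintype.card_prod, Fintype.card_prod, Fintype.card_fun, Fintype.card_fun,
    Fintype.card_coe, hAcard, Fintype.card_fin, Fintype.card_fin] at hineq
  unfold orderPoly
  rw [Nat.card_eq_fintype_card, Nat.card_eq_fintype_card]
  convert hineq using 2
end

section
/- Let P = (X, ≺) be a finite poset, let x ∈ X, and let a ≥ 1 be an integer. Then there exists an integer T such that for all integers t > T, Ω(P,t; x,a)^2 ≥ Ω(P,t; x,a+1) · Ω(P,t; x,a−1). (This is an asymptotic version of Graham's conjecture.) -/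
/-- `Ω(P,t; x,a)`: the number of order-preserving maps `g : X → {1,…,t}` with
`g x = a`. (For `a = 0` or `a > t` this number is `0`.) -/
noncomputable def orderPolyAt (X : Type*) [Fintype X] [PartialOrder X]
    (t : ℕ) (x : X) (a : ℕ) : ℕ :=
  Nat.card {g : X → Fin t // Monotone g ∧ (g x : ℕ) + 1 = a}

section Aux

variable {X : Type*} [Fintype X] [PartialOrder X]

/-- The lattice of monotone maps `X → Fin n`. -/
def MonoMapL (X : Type*) [PartialOrder X] (n : ℕ) : Type _ := {g : X → Fin n // Monotone g}

namespace MonoMapL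

variable {n : ℕ}

instance : Max (MonoMapL X n) := ⟨fun f g => ⟨f.1 ⊔ g.1, f.2.sup g.2⟩⟩
instance : Min (MonoMapL X n) := ⟨fun f g => ⟨f.1 ⊓ g.1, f.2.inf g.2⟩⟩

instance : LE (MonoMapL X n) := ⟨fun f g => f.1 ≤ g.1⟩
instance : LT (MonoMapL X n) := ⟨fun f g => f.1 < g.1⟩

instance : DistribLattice (MonoMapL X n) :=
  Function.Injective.distribLattice (fun f : MonoMapL X n => f.1)
    Subtype.coe_injective Iff.rfl Iff.rfl (fun _ _ => rfl) (fun _ _ => rfl)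

instance : Finite (MonoMapL X n) := Subtype.finite

omit [Fintype X] in
@[simp] lemma sup_apply (f g : MonoMapL X n) (y : X) : (f ⊔ g).1 y = f.1 y ⊔ g.1 y := rfl
omit [Fintype X] in
@[simp] lemma inf_apply (f g : MonoMapL X n) (y : X) : (f ⊓ g).1 y = f.1 y ⊓ g.1 y := rfl

end MonoMapL

variable (x : X) (t : ℕ)

/-- Counting via embedding `Fin t ↪ Fin (t+1)`. -/
lemma count_low (b : ℕ) :
    orderPolyAt X t x b =
      Nat.card {v : MonoMapL X (t + 1) //
        (v.1 x : ℕ) + 1 = b ∧ ∀ y, (v.1 y : ℕ) < t} := by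
  refine Nat.card_congr ?_
  refine
    { toFun := fun g =>
        ⟨⟨fun y => ⟨(g.1 y : ℕ), Nat.lt_succ_of_lt (g.1 y).isLt⟩, fun u v huv => by
            have := g.2.1 huv
            simp only [Fin.le_def] at this ⊢
            omega⟩, g.2.2, fun y => (g.1 y).isLt⟩
      invFun := fun v =>
        ⟨fun y => ⟨(v.1.1 y : ℕ), v.2.2 y⟩, ⟨fun u w huw => by
            have := v.1.2 huw
            simp only [Fin.le_def] at this ⊢
            omega, v.2.1⟩⟩
      left_inv := fun g => by
        apply Subtype.ext; funext y; apply Fin.ext; rfl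
      right_inv := fun v => by
        apply Subtype.ext; apply Subtype.ext; funext y; apply Fin.ext; rfl }

/-- Counting via the shift `g ↦ g + 1`, `Fin t → Fin (t+1)`. -/
lemma count_shift (c : ℕ) :
    orderPolyAt X t x (c + 1) =
      Nat.card {v : MonoMapL X (t + 1) //
        (v.1 x : ℕ) = c + 1 ∧ ∀ y, 1 ≤ (v.1 y : ℕ)} := by
  refine Nat.card_congr ?_
  refine
    { toFun := fun g =>
        ⟨⟨fun y => ⟨(g.1 y : ℕ) + 1, by
            have := (g.1 y).isLt; omega⟩, fun u v huv => by
            have := g.2.1 huv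
            simp only [Fin.le_def] at this ⊢
            omega⟩, by
          have := g.2.2; simpa using this, fun y => by simp⟩
      invFun := fun v =>
        ⟨fun y => ⟨(v.1.1 y : ℕ) - 1, by
            have h1 := v.2.2 y; have h2 := (v.1.1 y).isLt; omega⟩, ⟨fun u w huw => by
            have := v.1.2 huw
            simp only [Fin.le_def] at this ⊢
            omega, by
            have h1 := v.2.1; have h2 := v.2.2 x
            simp only []
            omega⟩⟩
      left_inv := fun g => by
        apply Subtype.ext; funext y; apply Fin.ext; simp
      right_inv := fun v => by
        apply Subtype.ext; apply Subtype.ext; funext y; apply Fin.ext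
        have := v.2.2 y
        simp only [Fin.val_mk]
        omega }

end Aux

/-- **Asymptotic Graham conjecture**: for a finite poset `P`, `x ∈ X` and `a ≥ 1`
there is a `T` such that for all `t > T`:
`Ω(P,t; x,a)^2 ≥ Ω(P,t; x,a+1) · Ω(P,t; x,a−1)`. -/
theorem graham_asymptotic (X : Type*) [Fintype X] [PartialOrder X]
    (x : X) (a : ℕ) (ha : 1 ≤ a) :
    ∃ T : ℕ, ∀ t : ℕ, T < t →
      orderPolyAt X t x (a + 1) * orderPolyAt X t x (a - 1) ≤
        orderPolyAt X t x a ^ 2 := by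
  classical
  refine ⟨0, fun t _ => ?_⟩
  -- trivial case `a = 1` : `orderPolyAt X t x 0 = 0`
  rcases Nat.lt_or_ge a 2 with h1 | h2
  · interval_cases a
    have : orderPolyAt X t x 0 = 0 := by
      rw [orderPolyAt, Nat.card_eq_zero]
      exact Or.inl ⟨fun g => by have := g.2.2; omega⟩
    simp [this]
  -- main case `a ≥ 2`, via the four functions theorem
  obtain ⟨b, rfl⟩ : ∃ b, a = b + 2 := ⟨a - 2, by omega⟩
  set L := MonoMapL X (t + 1) with hL
  haveI : Fintype L := Fintype.ofFinite L
  set f₁ : L → ℕ := fun v => if (v.1 x : ℕ) + 1 = b + 3 ∧ ∀ y, (v.1 y : ℕ) < t then 1 else 0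
  set f₂ : L → ℕ := fun v => if (v.1 x : ℕ) = b + 1 ∧ ∀ y, 1 ≤ (v.1 y : ℕ) then 1 else 0
  set f₃ : L → ℕ := fun v => if (v.1 x : ℕ) + 1 = b + 2 ∧ ∀ y, (v.1 y : ℕ) < t then 1 else 0
  set f₄ : L → ℕ := fun v => if (v.1 x : ℕ) = b + 2 ∧ ∀ y, 1 ≤ (v.1 y : ℕ) then 1 else 0
  have key : (∑ v : L, f₁ v) * (∑ v : L, f₂ v) ≤ (∑ v : L, f₃ v) * (∑ v : L, f₄ v) := by
    refine four_functions_theorem_univ f₁ f₂ f₃ f₄ (fun v => by positivity)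
      (fun v => by positivity) (fun v => by positivity) (fun v => by positivity) ?_
    intro g h
    simp only [f₁, f₂, f₃, f₄]
    by_cases hg : (g.1 x : ℕ) + 1 = b + 3 ∧ ∀ y, (g.1 y : ℕ) < t
    · by_cases hh : (h.1 x : ℕ) = b + 1 ∧ ∀ y, 1 ≤ (h.1 y : ℕ)
      · rw [if_pos hg, if_pos hh, if_pos, if_pos]
        · obtain ⟨hg1, hg2⟩ := hg
          obtain ⟨hh1, hh2⟩ := hh
          have hxy : h.1 x ≤ g.1 x := Fin.le_def.mpr (by omega)
          refine ⟨?_, fun y => ?_⟩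
          · show ((g.1 x ⊔ h.1 x : Fin (t + 1)) : ℕ) = b + 2
            rw [sup_of_le_left hxy]; omega
          · show 1 ≤ ((g.1 y ⊔ h.1 y : Fin (t + 1)) : ℕ)
            have h1 := Fin.le_def.mp (le_sup_right (a := g.1 y) (b := h.1 y))
            have h2 := hh2 y
            omega
        · obtain ⟨hg1, hg2⟩ := hg
          obtain ⟨hh1, hh2⟩ := hh
          have hxy : h.1 x ≤ g.1 x := Fin.le_def.mpr (by omega)
          refine ⟨?_, fun y => ?_⟩
          · show ((g.1 x ⊓ h.1 x : Fin (t + 1)) : ℕ) + 1 = b + 2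
            rw [inf_of_le_right hxy]; omega
          · show ((g.1 y ⊓ h.1 y : Fin (t + 1)) : ℕ) < t
            have h1 := Fin.le_def.mp (inf_le_left (a := g.1 y) (b := h.1 y))
            have h2 := hg2 y
            omega
      · rw [if_neg hh, mul_zero]; positivity
    · rw [if_neg hg, zero_mul]; positivity
  have e₁ : ∑ v : L, f₁ v = orderPolyAt X t x (b + 3) := by
    rw [count_low x t (b + 3)]
    simp only [f₁]
    rw [Finset.sum_boole, Nat.card_eq_fintype_card, Fintype.card_subtype]
    norm_cast
  have e₂ : ∑ v : L, f₂ v = orderPolyAt X t x (b + 1) := by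
    rw [count_shift x t b]
    simp only [f₂]
    rw [Finset.sum_boole, Nat.card_eq_fintype_card, Fintype.card_subtype]
    norm_cast
  have e₃ : ∑ v : L, f₃ v = orderPolyAt X t x (b + 2) := by
    rw [count_low x t (b + 2)]
    simp only [f₃]
    rw [Finset.sum_boole, Nat.card_eq_fintype_card, Fintype.card_subtype]
    norm_cast
  have e₄ : ∑ v : L, f₄ v = orderPolyAt X t x (b + 2) := by
    rw [count_shift x t (b + 1)]
    simp only [f₄]
    rw [Finset.sum_boole, Nat.card_eq_fintype_card, Fintype.card_subtype]
    norm_cast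
  rw [e₁, e₂, e₃, e₄] at key
  simpa [pow_two] using key
end

section
/- Let P = (X, ≺) be a finite poset, let x ∈ X, and let a, t be integers with t > a > 1. Then Ω(P,t; x,a+1) · Ω(P,t; x,a) ≥ Ω(P,t+1; x,a+1) · Ω(P,t−1; x,a). -/
open Finset FinsetFamily

/-- For a finite poset `P`, `x ∈ X` and integers `t > a > 1`:
`Ω(P,t; x,a+1) · Ω(P,t; x,a) ≥ Ω(P,t+1; x,a+1) · Ω(P,t−1; x,a)`. -/
theorem graham_variation (X : Type*) [Fintype X] [PartialOrder X]
    (x : X) (a t : ℕ) (ha : 1 < a) (hat : a < t) :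
    orderPolyAt X (t + 1) x (a + 1) * orderPolyAt X (t - 1) x a ≤
      orderPolyAt X t x (a + 1) * orderPolyAt X t x a := by
  classical
  have ht3 : 3 ≤ t := by omega
  -- Predicates on the ambient lattice `X → Fin (t+1)`
  set pA : (X → Fin (t + 1)) → Prop := fun f => Monotone f ∧ (f x : ℕ) = a with hpA
  set pB : (X → Fin (t + 1)) → Prop := fun f => Monotone f ∧ (f x : ℕ) = a ∧
      ∀ u, 1 ≤ (f u : ℕ) ∧ (f u : ℕ) ≤ t - 1 with hpB
  set pC : (X → Fin (t + 1)) → Prop := fun f => Monotone f ∧ (f x : ℕ) = a ∧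
      ∀ u, (f u : ℕ) ≤ t - 1 with hpC
  set pD : (X → Fin (t + 1)) → Prop := fun f => Monotone f ∧ (f x : ℕ) = a ∧
      ∀ u, 1 ≤ (f u : ℕ) with hpD
  set A : Finset (X → Fin (t + 1)) := univ.filter pA with hA
  set B : Finset (X → Fin (t + 1)) := univ.filter pB with hB
  set C : Finset (X → Fin (t + 1)) := univ.filter pC with hC
  set D : Finset (X → Fin (t + 1)) := univ.filter pD with hD
  -- closure under inf
  have hsub1 : A ⊼ B ⊆ C := by
    intro c hc
    rw [Finset.mem_infs] at hc
    obtain ⟨f, hf, g, hg, rfl⟩ := hc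
    simp only [hA, hB, Finset.mem_filter, hpA, hpB] at hf hg
    obtain ⟨-, hfm, hfx⟩ := hf
    obtain ⟨-, hgm, hgx, hgb⟩ := hg
    simp only [hC, Finset.mem_filter, hpC, Finset.mem_univ, true_and]
    refine ⟨hfm.inf hgm, ?_, ?_⟩
    · have : f x = g x := Fin.ext (by omega)
      simp [Pi.inf_apply, this, hgx]
    · intro u
      have h1 : (f ⊓ g) u ≤ g u := by exact inf_le_right (a := f u) (b := g u)
      have h2 := (hgb u).2
      rw [Fin.le_def] at h1
      omega
  -- closure under sup
  have hsub2 : A ⊻ B ⊆ D := by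
    intro c hc
    rw [Finset.mem_sups] at hc
    obtain ⟨f, hf, g, hg, rfl⟩ := hc
    simp only [hA, hB, Finset.mem_filter, hpA, hpB] at hf hg
    obtain ⟨-, hfm, hfx⟩ := hf
    obtain ⟨-, hgm, hgx, hgb⟩ := hg
    simp only [hD, Finset.mem_filter, hpD, Finset.mem_univ, true_and]
    refine ⟨hfm.sup hgm, ?_, ?_⟩
    · have : f x = g x := Fin.ext (by omega)
      simp [Pi.sup_apply, this, hgx]
    · intro u
      have h1 : g u ≤ (f ⊔ g) u := by exact le_sup_right (a := f u) (b := g u)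
      have h2 := (hgb u).1
      rw [Fin.le_def] at h1
      omega
  -- cardinalities
  have cardEq : ∀ (p : (X → Fin (t + 1)) → Prop) (inst : DecidablePred p),
      (@Finset.filter _ p inst univ).card = Nat.card {f : X → Fin (t + 1) // p f} := by
    intro p inst
    rw [Nat.card_eq_fintype_card]
    exact (Fintype.card_of_subtype (@Finset.filter _ p inst univ) (by simp)).symm
  have hcardA : A.card = orderPolyAt X (t + 1) x (a + 1) := by
    rw [hA]
    refine (cardEq pA _).trans ?_
    rw [orderPolyAt]
    exact Nat.card_congr (Equiv.subtypeEquivRight (fun g => by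
      simp only [hpA]; constructor <;> rintro ⟨h1, h2⟩ <;> exact ⟨h1, by omega⟩))
  have hcardB : B.card = orderPolyAt X (t - 1) x a := by
    rw [hB]
    refine (cardEq pB _).trans ?_
    rw [orderPolyAt]
    refine (Nat.card_congr ?_).symm
    refine ⟨fun g => ⟨fun u => ⟨(g.1 u : ℕ) + 1, by have := (g.1 u).2; omega⟩, ?_, ?_, ?_⟩,
      fun f => ⟨fun u => ⟨(f.1 u : ℕ) - 1, by have := (f.2.2.2 u).2; omega⟩, ?_, ?_⟩, ?_, ?_⟩
    · intro u v huv
      have := g.2.1 huv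
      rw [Fin.le_def] at this ⊢
      simpa using this
    · have := g.2.2
      simp; omega
    · intro u
      have := (g.1 u).2
      simp
    · intro u v huv
      have := f.2.1 huv
      rw [Fin.le_def] at this ⊢
      simp only
      omega
    · have h1 := f.2.2.1
      have h2 := (f.2.2.2 x).1
      simp; omega
    · intro g; ext u; simp
    · intro f
      ext u
      have := (f.2.2.2 u).1
      simp; omega
  have hcardC : C.card = orderPolyAt X t x (a + 1) := by
    rw [hC]
    refine (cardEq pC _).trans ?_
    rw [orderPolyAt]
    refine (Nat.card_congr ?_).symm
    refine ⟨fun g => ⟨fun u => ⟨(g.1 u : ℕ), by have := (g.1 u).2; omega⟩, ?_, ?_, ?_⟩,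
      fun f => ⟨fun u => ⟨(f.1 u : ℕ), by have := (f.2.2.2 u); omega⟩, ?_, ?_⟩, ?_, ?_⟩
    · intro u v huv
      have := g.2.1 huv
      rw [Fin.le_def] at this ⊢
      simpa using this
    · have := g.2.2
      simp; omega
    · intro u
      have := (g.1 u).2
      simp; omega
    · intro u v huv
      have := f.2.1 huv
      rw [Fin.le_def] at this ⊢
      simpa using this
    · have := f.2.2.1
      simp; omega
    · intro g; ext u; simp
    · intro f; ext u; simp
  have hcardD : D.card = orderPolyAt X t x a := by
    rw [hD]
    refine (cardEq pD _).trans ?_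
    rw [orderPolyAt]
    refine (Nat.card_congr ?_).symm
    refine ⟨fun g => ⟨fun u => ⟨(g.1 u : ℕ) + 1, by have := (g.1 u).2; omega⟩, ?_, ?_, ?_⟩,
      fun f => ⟨fun u => ⟨(f.1 u : ℕ) - 1, by have := (f.1 u).2; omega⟩, ?_, ?_⟩, ?_, ?_⟩
    · intro u v huv
      have := g.2.1 huv
      rw [Fin.le_def] at this ⊢
      simpa using this
    · have := g.2.2
      simp; omega
    · intro u
      simp
    · intro u v huv
      have := f.2.1 huv
      have h1 := (f.2.2.2 u)
      have h2 := (f.2.2.2 v)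
      rw [Fin.le_def] at this ⊢
      simp only
      omega
    · have h1 := f.2.2.1
      have h2 := (f.2.2.2 x)
      simp; omega
    · intro g; ext u; simp
    · intro f
      ext u
      have := (f.2.2.2 u)
      simp; omega
  calc orderPolyAt X (t + 1) x (a + 1) * orderPolyAt X (t - 1) x a
      = A.card * B.card := by rw [hcardA, hcardB]
    _ ≤ (A ⊼ B).card * (A ⊻ B).card := Finset.le_card_infs_mul_card_sups A B
    _ ≤ C.card * D.card :=
        Nat.mul_le_mul (Finset.card_le_card hsub1) (Finset.card_le_card hsub2)
    _ = orderPolyAt X t x (a + 1) * orderPolyAt X t x a := by rw [hcardC, hcardD]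
end
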